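/- arXiv:1001.0897 — 11 statements merged into one kernel-verified Lean document; each statement's English description precedes it below -/
import Mathlib

section
/- Let d be a squarefree positive integer with d ≡ ±1 (mod 5), and let x = (x₁,x₂,x₃) ∈ ℤ³ with x₁² + x₂² + x₃² = d. Among the six vectors A·x, A⁻¹·x, B·x, B⁻¹·x, C·x, C⁻¹·x (which a priori lie in (1/5)ℤ³), exactly two have all integer coordinates. -/
open Matrix

noncomputable def LinnikA : Matrix (Fin 3) (Fin 3) ℚ :=
  (1 / 5 : ℚ) • !![5, 0, 0; 0, -4, 3; 0, -3, -4]

noncomputable def LinnikB : Matrix (Fin 3) (Fin 3) ℚ :=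
  (1 / 5 : ℚ) • !![-4, 0, 3; 0, 5, 0; -3, 0, -4]

noncomputable def LinnikC : Matrix (Fin 3) (Fin 3) ℚ :=
  (1 / 5 : ℚ) • !![-4, -3, 0; 3, -4, 0; 0, 0, 5]

/-- The six Linnik rotations `A, A⁻¹, B, B⁻¹, C, C⁻¹`. -/
noncomputable def linnikFamily : Fin 6 → Matrix (Fin 3) (Fin 3) ℚ :=
  ![LinnikA, LinnikA⁻¹, LinnikB, LinnikB⁻¹, LinnikC, LinnikC⁻¹]

lemma linnik_hAinv : LinnikA⁻¹ = (1/5 : ℚ) • !![5,0,0; 0,-4,-3; 0,3,-4] := by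
  apply inv_eq_right_inv
  ext i j
  fin_cases i <;> fin_cases j <;>
    simp [LinnikA, Matrix.mul_apply, Fin.sum_univ_three, Matrix.vecHead, Matrix.vecTail] <;>
    norm_num

lemma linnik_hBinv : LinnikB⁻¹ = (1/5 : ℚ) • !![-4,0,-3; 0,5,0; 3,0,-4] := by
  apply inv_eq_right_inv
  ext i j
  fin_cases i <;> fin_cases j <;>
    simp [LinnikB, Matrix.mul_apply, Fin.sum_univ_three, Matrix.vecHead, Matrix.vecTail] <;>
    norm_num

lemma linnik_hCinv : LinnikC⁻¹ = (1/5 : ℚ) • !![-4,3,0; -3,-4,0; 0,0,5] := by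
  apply inv_eq_right_inv
  ext i j
  fin_cases i <;> fin_cases j <;>
    simp [LinnikC, Matrix.mul_apply, Fin.sum_univ_three, Matrix.vecHead, Matrix.vecTail] <;>
    norm_num

/-- The six rotations, multiplied by 5 and reduced modulo 5. -/
def linnikModMat : Fin 6 → Matrix (Fin 3) (Fin 3) (ZMod 5) :=
  ![ !![5,0,0; 0,-4,3; 0,-3,-4],
     !![5,0,0; 0,-4,-3; 0,3,-4],
     !![-4,0,3; 0,5,0; -3,0,-4],
     !![-4,0,-3; 0,5,0; 3,0,-4],
     !![-4,-3,0; 3,-4,0; 0,0,5],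
     !![-4,3,0; -3,-4,0; 0,0,5] ]

def linnikCond (k : Fin 6) (a b c : ZMod 5) : Prop :=
  ∀ i : Fin 3, (linnikModMat k).mulVec ![a,b,c] i = 0

instance (k : Fin 6) (a b c : ZMod 5) : Decidable (linnikCond k a b c) :=
  inferInstanceAs (Decidable (∀ i : Fin 3, _ = 0))

lemma linnik_final : ∀ a b c : ZMod 5, (a^2+b^2+c^2 = 1 ∨ a^2+b^2+c^2 = 4) →
    (Finset.univ.filter fun k : Fin 6 => linnikCond k a b c).card = 2 := by decide

lemma linnik_forall3 {P : Fin 3 → Prop} : (∀ i, P i) ↔ P 0 ∧ P 1 ∧ P 2 :=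
  ⟨fun h => ⟨h 0, h 1, h 2⟩, fun ⟨h0,h1,h2⟩ i => by fin_cases i <;> assumption⟩

lemma linnik_den5 (n : ℤ) : ((n : ℚ)/5).den = 1 ↔ (n : ZMod 5) = 0 := by
  rw [ZMod.intCast_zmod_eq_zero_iff_dvd]
  constructor
  · intro h
    have h2 := (Rat.den_eq_one_iff _).mp h
    set q := ((n:ℚ)/5) with hq
    have : (n : ℚ) = 5 * q.num := by rw [h2]; field_simp [hq]; rw [hq]; ring
    exact ⟨q.num, by exact_mod_cast this⟩
  · rintro ⟨m, rfl⟩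
    push_cast
    rw [mul_comm, mul_div_assoc]
    norm_num

lemma linnik_den5' (q : ℚ) (n : ℤ) (h : q = (n : ℚ)/5) :
    q.den = 1 ↔ (n : ZMod 5) = 0 := by rw [h, linnik_den5]

lemma linnik_key0 (x : Fin 3 → ℤ) :
    (∀ i : Fin 3, (((linnikFamily 0).mulVec fun j => (x j : ℚ)) i).den = 1)
      ↔ linnikCond 0 ((x 0 : ℤ) : ZMod 5) ((x 1 : ℤ) : ZMod 5) ((x 2 : ℤ) : ZMod 5) := by
  have f : linnikFamily 0 = LinnikA := rfl
  rw [f]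
  rw [linnik_forall3,
    linnik_den5' _ (5 * x 0 + 0 * x 1 + 0 * x 2)
      (by simp [LinnikA, Matrix.mulVec, dotProduct, Fin.sum_univ_three] <;> push_cast <;> ring),
    linnik_den5' _ (0 * x 0 + (-4) * x 1 + 3 * x 2)
      (by simp [LinnikA, Matrix.mulVec, dotProduct, Fin.sum_univ_three] <;> push_cast <;> ring),
    linnik_den5' _ (0 * x 0 + (-3) * x 1 + (-4) * x 2)
      (by simp [LinnikA, Matrix.mulVec, dotProduct, Fin.sum_univ_three] <;> push_cast <;> ring)]
  have g : linnikModMat 0 = (!![5,0,0; 0,-4,3; 0,-3,-4] : Matrix (Fin 3) (Fin 3) (ZMod 5)) := rfl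
  simp [linnikCond, g, Matrix.mulVec, dotProduct, Fin.sum_univ_three,
    Fin.forall_fin_succ, Matrix.vecHead, Matrix.vecTail]

lemma linnik_key1 (x : Fin 3 → ℤ) :
    (∀ i : Fin 3, (((linnikFamily 1).mulVec fun j => (x j : ℚ)) i).den = 1)
      ↔ linnikCond 1 ((x 0 : ℤ) : ZMod 5) ((x 1 : ℤ) : ZMod 5) ((x 2 : ℤ) : ZMod 5) := by
  have f : linnikFamily 1 = LinnikA⁻¹ := rfl
  rw [f, linnik_hAinv]
  rw [linnik_forall3,
    linnik_den5' _ (5 * x 0 + 0 * x 1 + 0 * x 2)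
      (by simp [Matrix.mulVec, dotProduct, Fin.sum_univ_three] <;> push_cast <;> ring),
    linnik_den5' _ (0 * x 0 + (-4) * x 1 + (-3) * x 2)
      (by simp [Matrix.mulVec, dotProduct, Fin.sum_univ_three] <;> push_cast <;> ring),
    linnik_den5' _ (0 * x 0 + 3 * x 1 + (-4) * x 2)
      (by simp [Matrix.mulVec, dotProduct, Fin.sum_univ_three] <;> push_cast <;> ring)]
  have g : linnikModMat 1 = (!![5,0,0; 0,-4,-3; 0,3,-4] : Matrix (Fin 3) (Fin 3) (ZMod 5)) := rfl
  simp [linnikCond, g, Matrix.mulVec, dotProduct, Fin.sum_univ_three,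
    Fin.forall_fin_succ, Matrix.vecHead, Matrix.vecTail]

lemma linnik_key2 (x : Fin 3 → ℤ) :
    (∀ i : Fin 3, (((linnikFamily 2).mulVec fun j => (x j : ℚ)) i).den = 1)
      ↔ linnikCond 2 ((x 0 : ℤ) : ZMod 5) ((x 1 : ℤ) : ZMod 5) ((x 2 : ℤ) : ZMod 5) := by
  have f : linnikFamily 2 = LinnikB := rfl
  rw [f]
  rw [linnik_forall3,
    linnik_den5' _ ((-4) * x 0 + 0 * x 1 + 3 * x 2)
      (by simp [LinnikB, Matrix.mulVec, dotProduct, Fin.sum_univ_three] <;> push_cast <;> ring),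
    linnik_den5' _ (0 * x 0 + 5 * x 1 + 0 * x 2)
      (by simp [LinnikB, Matrix.mulVec, dotProduct, Fin.sum_univ_three] <;> push_cast <;> ring),
    linnik_den5' _ ((-3) * x 0 + 0 * x 1 + (-4) * x 2)
      (by simp [LinnikB, Matrix.mulVec, dotProduct, Fin.sum_univ_three] <;> push_cast <;> ring)]
  have g : linnikModMat 2 = (!![-4,0,3; 0,5,0; -3,0,-4] : Matrix (Fin 3) (Fin 3) (ZMod 5)) := rfl
  simp [linnikCond, g, Matrix.mulVec, dotProduct, Fin.sum_univ_three,
    Fin.forall_fin_succ, Matrix.vecHead, Matrix.vecTail]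

lemma linnik_key3 (x : Fin 3 → ℤ) :
    (∀ i : Fin 3, (((linnikFamily 3).mulVec fun j => (x j : ℚ)) i).den = 1)
      ↔ linnikCond 3 ((x 0 : ℤ) : ZMod 5) ((x 1 : ℤ) : ZMod 5) ((x 2 : ℤ) : ZMod 5) := by
  have f : linnikFamily 3 = LinnikB⁻¹ := rfl
  rw [f, linnik_hBinv]
  rw [linnik_forall3,
    linnik_den5' _ ((-4) * x 0 + 0 * x 1 + (-3) * x 2)
      (by simp [Matrix.mulVec, dotProduct, Fin.sum_univ_three] <;> push_cast <;> ring),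
    linnik_den5' _ (0 * x 0 + 5 * x 1 + 0 * x 2)
      (by simp [Matrix.mulVec, dotProduct, Fin.sum_univ_three] <;> push_cast <;> ring),
    linnik_den5' _ (3 * x 0 + 0 * x 1 + (-4) * x 2)
      (by simp [Matrix.mulVec, dotProduct, Fin.sum_univ_three] <;> push_cast <;> ring)]
  have g : linnikModMat 3 = (!![-4,0,-3; 0,5,0; 3,0,-4] : Matrix (Fin 3) (Fin 3) (ZMod 5)) := rfl
  simp [linnikCond, g, Matrix.mulVec, dotProduct, Fin.sum_univ_three,
    Fin.forall_fin_succ, Matrix.vecHead, Matrix.vecTail]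

lemma linnik_key4 (x : Fin 3 → ℤ) :
    (∀ i : Fin 3, (((linnikFamily 4).mulVec fun j => (x j : ℚ)) i).den = 1)
      ↔ linnikCond 4 ((x 0 : ℤ) : ZMod 5) ((x 1 : ℤ) : ZMod 5) ((x 2 : ℤ) : ZMod 5) := by
  have f : linnikFamily 4 = LinnikC := rfl
  rw [f]
  rw [linnik_forall3,
    linnik_den5' _ ((-4) * x 0 + (-3) * x 1 + 0 * x 2)
      (by simp [LinnikC, Matrix.mulVec, dotProduct, Fin.sum_univ_three] <;> push_cast <;> ring),
    linnik_den5' _ (3 * x 0 + (-4) * x 1 + 0 * x 2)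
      (by simp [LinnikC, Matrix.mulVec, dotProduct, Fin.sum_univ_three] <;> push_cast <;> ring),
    linnik_den5' _ (0 * x 0 + 0 * x 1 + 5 * x 2)
      (by simp [LinnikC, Matrix.mulVec, dotProduct, Fin.sum_univ_three] <;> push_cast <;> ring)]
  have g : linnikModMat 4 = (!![-4,-3,0; 3,-4,0; 0,0,5] : Matrix (Fin 3) (Fin 3) (ZMod 5)) := rfl
  simp [linnikCond, g, Matrix.mulVec, dotProduct, Fin.sum_univ_three,
    Fin.forall_fin_succ, Matrix.vecHead, Matrix.vecTail]

lemma linnik_key5 (x : Fin 3 → ℤ) :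
    (∀ i : Fin 3, (((linnikFamily 5).mulVec fun j => (x j : ℚ)) i).den = 1)
      ↔ linnikCond 5 ((x 0 : ℤ) : ZMod 5) ((x 1 : ℤ) : ZMod 5) ((x 2 : ℤ) : ZMod 5) := by
  have f : linnikFamily 5 = LinnikC⁻¹ := rfl
  rw [f, linnik_hCinv]
  rw [linnik_forall3,
    linnik_den5' _ ((-4) * x 0 + 3 * x 1 + 0 * x 2)
      (by simp [Matrix.mulVec, dotProduct, Fin.sum_univ_three] <;> push_cast <;> ring),
    linnik_den5' _ ((-3) * x 0 + (-4) * x 1 + 0 * x 2)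
      (by simp [Matrix.mulVec, dotProduct, Fin.sum_univ_three] <;> push_cast <;> ring),
    linnik_den5' _ (0 * x 0 + 0 * x 1 + 5 * x 2)
      (by simp [Matrix.mulVec, dotProduct, Fin.sum_univ_three] <;> push_cast <;> ring)]
  have g : linnikModMat 5 = (!![-4,3,0; -3,-4,0; 0,0,5] : Matrix (Fin 3) (Fin 3) (ZMod 5)) := rfl
  simp [linnikCond, g, Matrix.mulVec, dotProduct, Fin.sum_univ_three,
    Fin.forall_fin_succ, Matrix.vecHead, Matrix.vecTail]

/-- For `d` squarefree with `d ≡ ±1 (mod 5)` and `x ∈ ℤ³` with `x·x = d`, exactly two of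
the six vectors `A x, A⁻¹ x, B x, B⁻¹ x, C x, C⁻¹ x` have integer coordinates. -/
theorem two_integral_neighbors (d : ℕ) (hd : Squarefree d)
    (hd5 : d % 5 = 1 ∨ d % 5 = 4) (x : Fin 3 → ℤ)
    (hx : x 0 ^ 2 + x 1 ^ 2 + x 2 ^ 2 = (d : ℤ)) :
    (Finset.univ.filter fun k : Fin 6 =>
        ∀ i : Fin 3, (((linnikFamily k).mulVec fun j => (x j : ℚ)) i).den = 1).card = 2 := by
  have key : ∀ k : Fin 6,
      (∀ i : Fin 3, (((linnikFamily k).mulVec fun j => (x j : ℚ)) i).den = 1)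
        ↔ linnikCond k ((x 0 : ℤ) : ZMod 5) ((x 1 : ℤ) : ZMod 5) ((x 2 : ℤ) : ZMod 5) := by
    intro k
    fin_cases k
    exacts [linnik_key0 x, linnik_key1 x, linnik_key2 x, linnik_key3 x, linnik_key4 x,
      linnik_key5 x]
  have hz : (((x 0 : ℤ) : ZMod 5))^2 + ((x 1 : ℤ) : ZMod 5)^2 + ((x 2 : ℤ) : ZMod 5)^2
      = (d : ZMod 5) := by
    have := congrArg (Int.cast : ℤ → ZMod 5) hx
    push_cast at this
    exact this
  have hd' : (d : ZMod 5) = 1 ∨ (d : ZMod 5) = 4 := by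
    rcases hd5 with h | h
    · left
      rw [show ((d : ℕ) : ZMod 5) = ((d % 5 : ℕ) : ZMod 5) from (ZMod.natCast_mod d 5).symm, h]
      norm_num
    · right
      rw [show ((d : ℕ) : ZMod 5) = ((d % 5 : ℕ) : ZMod 5) from (ZMod.natCast_mod d 5).symm, h]
      norm_num
  rw [Finset.filter_congr (fun k _ => key k)]
  exact linnik_final _ _ _ (by rw [hz]; exact hd')
end

section
/- Every left ideal of the Hurwitz quaternion order B(ℤ) is principal: if I ⊆ B(ℚ) is a finitely generated left B(ℤ)-module, then I = B(ℤ)·q for some q ∈ B(ℚ). -/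
/-- The Hurwitz order `ℤ[i, j, k, (1+i+j+k)/2]` inside the rational Hamilton quaternions. -/
def Hurwitz : Set (Quaternion ℚ) :=
  {x | ∃ a b c d : ℤ, (a % 2 = b % 2 ∧ b % 2 = c % 2 ∧ c % 2 = d % 2) ∧
        x = ⟨(a : ℚ) / 2, (b : ℚ) / 2, (c : ℚ) / 2, (d : ℚ) / 2⟩}

lemma hz_zero : (0 : Quaternion ℚ) ∈ Hurwitz :=
  ⟨0, 0, 0, 0, ⟨rfl, rfl, rfl⟩, by ext <;> simp <;> rfl⟩

lemma hz_comp {x : Quaternion ℚ} (hx : x ∈ Hurwitz) : ∃ a b c d : ℤ,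
    (a % 2 = b % 2 ∧ b % 2 = c % 2 ∧ c % 2 = d % 2) ∧
    x.re = (a : ℚ) / 2 ∧ x.imI = (b : ℚ) / 2 ∧ x.imJ = (c : ℚ) / 2 ∧ x.imK = (d : ℚ) / 2 := by
  obtain ⟨a, b, c, d, h, hx⟩ := hx
  exact ⟨a, b, c, d, h, by rw [hx], by rw [hx], by rw [hx], by rw [hx]⟩

lemma hz_intCast (z : ℤ) : ((z : ℤ) : Quaternion ℚ) ∈ Hurwitz := by
  refine ⟨2*z, 0, 0, 0, ⟨by omega, rfl, rfl⟩, ?_⟩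
  ext <;> simp

lemma hz_natCast (m : ℕ) : ((m : ℕ) : Quaternion ℚ) ∈ Hurwitz := by
  have := hz_intCast (m : ℤ)
  rw [show (((m : ℤ) : ℤ) : Quaternion ℚ) = ((m : ℕ) : Quaternion ℚ) by push_cast; ring] at this
  exact this

lemma hz_one : (1 : Quaternion ℚ) ∈ Hurwitz := by
  have := hz_natCast 1
  simpa using this

lemma hz_add {x y : Quaternion ℚ} (hx : x ∈ Hurwitz) (hy : y ∈ Hurwitz) :
    x + y ∈ Hurwitz := by
  obtain ⟨a, b, c, d, ⟨h1, h2, h3⟩, r1, r2, r3, r4⟩ := hz_comp hx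
  obtain ⟨e, f, h, k, ⟨h4, h5, h6⟩, s1, s2, s3, s4⟩ := hz_comp hy
  refine ⟨a + e, b + f, c + h, d + k, ⟨by omega, by omega, by omega⟩, ?_⟩
  ext <;> push_cast <;> simp [r1, r2, r3, r4, s1, s2, s3, s4] <;> ring

lemma hz_neg {x : Quaternion ℚ} (hx : x ∈ Hurwitz) : -x ∈ Hurwitz := by
  obtain ⟨a, b, c, d, ⟨h1, h2, h3⟩, r1, r2, r3, r4⟩ := hz_comp hx
  refine ⟨-a, -b, -c, -d, ⟨by omega, by omega, by omega⟩, ?_⟩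
  ext <;> push_cast <;> simp [r1, r2, r3, r4] <;> ring

lemma hz_sub {x y : Quaternion ℚ} (hx : x ∈ Hurwitz) (hy : y ∈ Hurwitz) :
    x - y ∈ Hurwitz := by
  have := hz_add hx (hz_neg hy)
  simpa [sub_eq_add_neg] using this

lemma hz_mul {x y : Quaternion ℚ} (hx : x ∈ Hurwitz) (hy : y ∈ Hurwitz) :
    x * y ∈ Hurwitz := by
  obtain ⟨a, b, c, d, ⟨h1, h2, h3⟩, r1, r2, r3, r4⟩ := hz_comp hx
  obtain ⟨e, f, h, k, ⟨h4, h5, h6⟩, s1, s2, s3, s4⟩ := hz_comp hy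
  obtain ⟨α, rfl⟩ : ∃ α, b = a + 2*α := ⟨(b - a)/2, by omega⟩
  obtain ⟨β, rfl⟩ : ∃ β, c = a + 2*β := ⟨(c - a)/2, by omega⟩
  obtain ⟨γ, rfl⟩ : ∃ γ, d = a + 2*γ := ⟨(d - a)/2, by omega⟩
  obtain ⟨δ, rfl⟩ : ∃ δ, f = e + 2*δ := ⟨(f - e)/2, by omega⟩
  obtain ⟨ε, rfl⟩ : ∃ ε, h = e + 2*ε := ⟨(h - e)/2, by omega⟩
  obtain ⟨ζ, rfl⟩ : ∃ ζ, k = e + 2*ζ := ⟨(k - e)/2, by omega⟩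
  set A : ℤ := -(a*e + a*δ + α*e + 2*α*δ + a*ε + β*e + 2*β*ε + a*ζ + γ*e + 2*γ*ζ) with hA
  set T12 : ℤ := a*(δ+e+ζ) + α*(e+δ) + β*(e+ε+ζ) + γ*(ζ-ε) with hT12
  set T13 : ℤ := a*(e+δ+ε) + α*(δ-ζ) + β*(e+ε) + γ*(e+δ+ζ) with hT13
  set T14 : ℤ := a*(e+ε+ζ) + α*(e+ε+δ) + β*(ε-δ) + γ*(e+ζ) with hT14
  refine ⟨A, A + 2*T12, A + 2*T13, A + 2*T14, ⟨by omega, by omega, by omega⟩, ?_⟩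
  ext
  · show _ = ((A : ℚ)) / 2
    rw [Quaternion.re_mul]
    simp only [hA, r1, r2, r3, r4, s1, s2, s3, s4]
    push_cast
    ring
  · show _ = ((A + 2*T12 : ℤ) : ℚ) / 2
    rw [Quaternion.imI_mul]
    simp only [hA, hT12, r1, r2, r3, r4, s1, s2, s3, s4]
    push_cast
    ring
  · show _ = ((A + 2*T13 : ℤ) : ℚ) / 2
    rw [Quaternion.imJ_mul]
    simp only [hA, hT13, r1, r2, r3, r4, s1, s2, s3, s4]
    push_cast
    ring
  · show _ = ((A + 2*T14 : ℤ) : ℚ) / 2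
    rw [Quaternion.imK_mul]
    simp only [hA, hT14, r1, r2, r3, r4, s1, s2, s3, s4]
    push_cast
    ring

/-- The reduced norm of a Hurwitz quaternion is a natural number. -/
lemma hz_normSq_nat {x : Quaternion ℚ} (hx : x ∈ Hurwitz) :
    ∃ m : ℕ, Quaternion.normSq x = m := by
  obtain ⟨a, b, c, d, ⟨h1, h2, h3⟩, r1, r2, r3, r4⟩ := hz_comp hx
  obtain ⟨α, rfl⟩ : ∃ α, b = a + 2*α := ⟨(b - a)/2, by omega⟩
  obtain ⟨β, rfl⟩ : ∃ β, c = a + 2*β := ⟨(c - a)/2, by omega⟩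
  obtain ⟨γ, rfl⟩ : ∃ γ, d = a + 2*γ := ⟨(d - a)/2, by omega⟩
  set K : ℤ := a^2 + a*(α+β+γ) + α^2 + β^2 + γ^2 with hK
  have h4 : (4:ℤ) * K = a^2 + (a+2*α)^2 + (a+2*β)^2 + (a+2*γ)^2 := by rw [hK]; ring
  have hK0 : 0 ≤ K := by nlinarith [sq_nonneg a, sq_nonneg (a+2*α), sq_nonneg (a+2*β), sq_nonneg (a+2*γ)]
  refine ⟨K.toNat, ?_⟩
  have hKtn : ((K.toNat : ℕ) : ℚ) = (K : ℚ) := by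
    exact_mod_cast congrArg (fun z : ℤ => (z : ℚ)) (Int.toNat_of_nonneg hK0)
  rw [hKtn, Quaternion.normSq_def', r1, r2, r3, r4]
  have h4' : (4:ℚ) * (K:ℚ) = (a:ℚ)^2 + ((a:ℚ)+2*α)^2 + ((a:ℚ)+2*β)^2 + ((a:ℚ)+2*γ)^2 := by
    exact_mod_cast congrArg (fun z : ℤ => (z : ℚ)) h4
  push_cast
  linarith [h4']

/-- Division with remainder: every rational quaternion is within distance `< 1`
of a Hurwitz quaternion. -/
lemma hz_div (y : Quaternion ℚ) :
    ∃ h ∈ Hurwitz, Quaternion.normSq (y - h) < 1 := by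
  set a := round y.re
  set b := round y.imI
  set c := round y.imJ
  set d := round y.imK
  by_cases hc : (y.re - a)^2 + (y.imI - b)^2 + (y.imJ - c)^2 + (y.imK - d)^2 < 1
  · refine ⟨⟨(a:ℚ), (b:ℚ), (c:ℚ), (d:ℚ)⟩, ⟨2*a, 2*b, 2*c, 2*d, ⟨by omega, by omega, by omega⟩, ?_⟩, ?_⟩
    · ext <;> push_cast <;> ring
    · rw [Quaternion.normSq_def']
      exact hc
  · -- all four fractional parts are exactly 1/2, so y itself is a Hurwitz quaternion
    have key : ∀ t : ℚ, |t - round t| ≤ 1/2 := fun t => abs_sub_round t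
    have sq_le : ∀ t : ℚ, (t - round t)^2 ≤ 1/4 := by
      intro t
      have h := key t
      have h' := abs_le.mp h
      nlinarith [h'.1, h'.2]
    have e1 := sq_le y.re; have e2 := sq_le y.imI; have e3 := sq_le y.imJ; have e4 := sq_le y.imK
    push_neg at hc
    have q1 : (y.re - a)^2 = 1/4 := by dsimp only [a]; linarith
    have q2 : (y.imI - b)^2 = 1/4 := by dsimp only [b]; linarith
    have q3 : (y.imJ - c)^2 = 1/4 := by dsimp only [c]; linarith
    have q4 : (y.imK - d)^2 = 1/4 := by dsimp only [d]; linarith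
    have half : ∀ (t : ℚ) (n : ℤ), (t - n)^2 = 1/4 → ∃ m : ℤ, m % 2 = 1 ∧ t = (m : ℚ)/2 := by
      intro t n hq
      have hz : (t - n - 1/2) * (t - n + 1/2) = 0 := by nlinarith
      rcases mul_eq_zero.mp hz with h0 | h0
      · exact ⟨2*n + 1, by omega, by push_cast; linarith⟩
      · exact ⟨2*n - 1, by omega, by push_cast; linarith⟩
    obtain ⟨m1, hm1, ht1⟩ := half y.re a q1
    obtain ⟨m2, hm2, ht2⟩ := half y.imI b q2
    obtain ⟨m3, hm3, ht3⟩ := half y.imJ c q3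
    obtain ⟨m4, hm4, ht4⟩ := half y.imK d q4
    refine ⟨y, ⟨m1, m2, m3, m4, ⟨by omega, by omega, by omega⟩, ?_⟩, by simp⟩
    ext <;> simp [ht1, ht2, ht3, ht4]

/-- Clearing denominators: some positive natural multiple of any rational quaternion
is a Hurwitz quaternion. -/
lemma hz_nat_mul (y : Quaternion ℚ) :
    ∃ N : ℕ, 0 < N ∧ ((N : ℕ) : Quaternion ℚ) * y ∈ Hurwitz := by
  have clear : ∀ (t : ℚ) (N : ℕ), t.den ∣ N → ∃ z : ℤ, (N:ℚ) * t = z := by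
    intro t N hd
    obtain ⟨k, hk⟩ := hd
    refine ⟨(k : ℤ) * t.num, ?_⟩
    have hden : (t.den : ℚ) ≠ 0 := by exact_mod_cast t.den_nz
    have h1 : (t.den : ℚ) * t = (t.num : ℚ) := by
      rw [mul_comm, eq_comm, ← div_eq_iff hden]
      exact Rat.num_div_den t
    rw [hk]
    push_cast
    rw [mul_comm (t.den : ℚ) (k : ℚ), mul_assoc, h1]
  set N : ℕ := y.re.den * y.imI.den * y.imJ.den * y.imK.den with hN
  have hNpos : 0 < N := by
    apply Nat.pos_of_ne_zero
    simp [hN, y.re.den_nz, y.imI.den_nz, y.imJ.den_nz, y.imK.den_nz]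
  obtain ⟨z1, hz1⟩ := clear y.re N ⟨y.imI.den * y.imJ.den * y.imK.den, by rw [hN]; ring⟩
  obtain ⟨z2, hz2⟩ := clear y.imI N ⟨y.re.den * y.imJ.den * y.imK.den, by rw [hN]; ring⟩
  obtain ⟨z3, hz3⟩ := clear y.imJ N ⟨y.re.den * y.imI.den * y.imK.den, by rw [hN]; ring⟩
  obtain ⟨z4, hz4⟩ := clear y.imK N ⟨y.re.den * y.imI.den * y.imJ.den, by rw [hN]; ring⟩
  refine ⟨N, hNpos, 2*z1, 2*z2, 2*z3, 2*z4, ⟨by omega, by omega, by omega⟩, ?_⟩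
  ext
  · show _ = ((2*z1 : ℤ) : ℚ)/2
    rw [Quaternion.re_mul]
    push_cast
    simp
    linarith [hz1]
  · show _ = ((2*z2 : ℤ) : ℚ)/2
    rw [Quaternion.imI_mul]
    push_cast
    simp
    linarith [hz2]
  · show _ = ((2*z3 : ℤ) : ℚ)/2
    rw [Quaternion.imJ_mul]
    push_cast
    simp
    linarith [hz3]
  · show _ = ((2*z4 : ℤ) : ℚ)/2
    rw [Quaternion.imK_mul]
    push_cast
    simp
    linarith [hz4]

/-- Every finitely generated left ideal of the Hurwitz order is principal: the left
`B(ℤ)`-module generated by finitely many quaternions `g₁, …, gₙ ∈ B(ℚ)` is of the form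
`B(ℤ)·q` for some `q ∈ B(ℚ)`. -/
theorem hurwitz_left_ideals_principal (n : ℕ) (g : Fin n → Quaternion ℚ) :
    ∃ q : Quaternion ℚ,
      {x : Quaternion ℚ | ∃ c : Fin n → Quaternion ℚ,
          (∀ i, c i ∈ Hurwitz) ∧ x = ∑ i, c i * g i} =
        {x : Quaternion ℚ | ∃ h ∈ Hurwitz, x = h * q} := by
  classical
  set I : Set (Quaternion ℚ) :=
    {x : Quaternion ℚ | ∃ c : Fin n → Quaternion ℚ,
        (∀ i, c i ∈ Hurwitz) ∧ x = ∑ i, c i * g i} with hI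
  -- basic closure properties of I
  have hI0 : (0 : Quaternion ℚ) ∈ I :=
    ⟨fun _ => 0, fun _ => hz_zero, by simp⟩
  have hIsub : ∀ x ∈ I, ∀ y ∈ I, x - y ∈ I := by
    rintro x ⟨c, hc, rfl⟩ y ⟨c', hc', rfl⟩
    exact ⟨fun i => c i - c' i, fun i => hz_sub (hc i) (hc' i), by
      rw [← Finset.sum_sub_distrib]; simp [sub_mul]⟩
  have hIhmul : ∀ h ∈ Hurwitz, ∀ x ∈ I, h * x ∈ I := by
    rintro h hh x ⟨c, hc, rfl⟩
    refine ⟨fun i => h * c i, fun i => hz_mul hh (hc i), ?_⟩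
    rw [Finset.mul_sum]
    simp [mul_assoc]
  -- a common denominator for the generators
  have hgN : ∀ i : Fin n, ∃ N : ℕ, 0 < N ∧ ((N : ℕ) : Quaternion ℚ) * g i ∈ Hurwitz :=
    fun i => hz_nat_mul (g i)
  choose Nf hNfpos hNfmem using hgN
  set N : ℕ := ∏ i, Nf i with hNdef
  have hNpos : 0 < N := Finset.prod_pos (fun i _ => hNfpos i)
  have hNmem : ∀ i : Fin n, ((N : ℕ) : Quaternion ℚ) * g i ∈ Hurwitz := by
    intro i
    have hdvd : Nf i ∣ N := Finset.dvd_prod_of_mem Nf (Finset.mem_univ i)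
    obtain ⟨k, hk⟩ := hdvd
    have hcast : ((N : ℕ) : Quaternion ℚ)
        = ((k : ℕ) : Quaternion ℚ) * ((Nf i : ℕ) : Quaternion ℚ) := by
      rw [hk]
      push_cast
      exact (Nat.cast_commute (Nf i) _).eq
    rw [hcast, mul_assoc]
    exact hz_mul (hz_natCast k) (hNfmem i)
  have hNI : ∀ x ∈ I, ((N : ℕ) : Quaternion ℚ) * x ∈ Hurwitz := by
    rintro x ⟨c, hc, rfl⟩
    rw [Finset.mul_sum]
    have hterm : ∀ i : Fin n, ((N : ℕ) : Quaternion ℚ) * (c i * g i) ∈ Hurwitz := by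
      intro i
      have heq : ((N : ℕ) : Quaternion ℚ) * (c i * g i)
          = c i * (((N : ℕ) : Quaternion ℚ) * g i) := by
        rw [← mul_assoc, (Nat.cast_commute N (c i)).eq, mul_assoc]
      rw [heq]
      exact hz_mul (hc i) (hNmem i)
    refine Finset.sum_induction _ (· ∈ Hurwitz) (fun a b ha hb => hz_add ha hb) hz_zero
      (fun i _ => hterm i)
  have hNne : ((N : ℕ) : Quaternion ℚ) ≠ 0 := by
    intro hh
    have h1 := congrArg (fun q : Quaternion ℚ => q.re) hh
    have h2 : ((N : ℕ) : ℚ) = 0 := h1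
    have h3 : N = 0 := by exact_mod_cast h2
    omega
  by_cases htriv : ∀ x ∈ I, x = 0
  · refine ⟨0, ?_⟩
    ext x
    constructor
    · intro hx
      exact ⟨1, hz_one, by rw [htriv x hx]; simp⟩
    · rintro ⟨h, hh, rfl⟩
      simpa using hI0
  · push_neg at htriv
    obtain ⟨x₀, hx₀I, hx₀⟩ := htriv
    set S : Set ℕ :=
      {m : ℕ | ∃ x, x ∈ I ∧ x ≠ 0 ∧ Quaternion.normSq (((N : ℕ) : Quaternion ℚ) * x) = (m : ℚ)}
      with hS
    have hSne : S.Nonempty := by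
      obtain ⟨m, hm⟩ := hz_normSq_nat (hNI x₀ hx₀I)
      exact ⟨m, x₀, hx₀I, hx₀, hm⟩
    obtain ⟨q, hqI, hq0, hqnorm⟩ := Nat.sInf_mem hSne
    refine ⟨q, ?_⟩
    ext x
    constructor
    · -- any element of I is a Hurwitz multiple of q
      intro hx
      obtain ⟨h, hh, hnorm⟩ := hz_div (x * q⁻¹)
      have hr : x - h * q ∈ I := hIsub x hx _ (hIhmul h hh q hqI)
      have hrq : x - h * q = (x * q⁻¹ - h) * q := by
        rw [sub_mul, inv_mul_cancel_right₀ hq0]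
      by_cases hr0 : x - h * q = 0
      · exact ⟨h, hh, sub_eq_zero.mp hr0⟩
      · exfalso
        obtain ⟨m', hm'⟩ := hz_normSq_nat (hNI _ hr)
        have hmem' : m' ∈ S := ⟨x - h * q, hr, hr0, hm'⟩
        have hge : sInf S ≤ m' := Nat.sInf_le hmem'
        -- but normSq (N * (x - h q)) < normSq (N * q)
        have hfac : ((N : ℕ) : Quaternion ℚ) * (x - h * q)
            = (x * q⁻¹ - h) * (((N : ℕ) : Quaternion ℚ) * q) := by
          rw [hrq, ← mul_assoc, (Nat.cast_commute N (x * q⁻¹ - h)).eq, mul_assoc]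
        have hqpos : 0 < Quaternion.normSq (((N : ℕ) : Quaternion ℚ) * q) := by
          rcases lt_or_eq_of_le (Quaternion.normSq_nonneg
            (a := ((N : ℕ) : Quaternion ℚ) * q)) with h' | h'
          · exact h'
          · exfalso
            have := Quaternion.normSq_eq_zero.mp h'.symm
            rcases mul_eq_zero.mp this with h'' | h''
            · exact hNne h''
            · exact hq0 h''
        have hlt : Quaternion.normSq (((N : ℕ) : Quaternion ℚ) * (x - h * q))
            < Quaternion.normSq (((N : ℕ) : Quaternion ℚ) * q) := by
          rw [hfac, map_mul]
          calc Quaternion.normSq (x * q⁻¹ - h) * Quaternion.normSq (((N : ℕ) : Quaternion ℚ) * q)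
              < 1 * Quaternion.normSq (((N : ℕ) : Quaternion ℚ) * q) :=
                mul_lt_mul_of_pos_right hnorm hqpos
            _ = _ := one_mul _
        rw [hm', hqnorm] at hlt
        have : m' < sInf S := by exact_mod_cast hlt
        omega
    · rintro ⟨h, hh, rfl⟩
      exact hIhmul h hh q hqI
end

section
/- Every subring of the rational Hamilton quaternions B(ℚ) which is finitely generated as a ℤ-module is conjugate, by an element of B(ℚ)×, to a subring of the Hurwitz order B(ℤ). In particular B(ℤ) is a maximal order. -/
open Quaternion

namespace HurwitzAux

/-- Quaternions with integer coordinates. -/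
def IQ (x : Quaternion ℚ) : Prop :=
  (∃ a : ℤ, x.re = a) ∧ (∃ a : ℤ, x.imI = a) ∧ (∃ a : ℤ, x.imJ = a) ∧ (∃ a : ℤ, x.imK = a)

lemma IQ.zero : IQ 0 := ⟨⟨0, by simp⟩, ⟨0, by simp⟩, ⟨0, by simp⟩, ⟨0, by simp⟩⟩

lemma IQ.add {x y : Quaternion ℚ} (hx : IQ x) (hy : IQ y) : IQ (x + y) := by
  obtain ⟨⟨a1,h1⟩,⟨a2,h2⟩,⟨a3,h3⟩,⟨a4,h4⟩⟩ := hx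
  obtain ⟨⟨b1,g1⟩,⟨b2,g2⟩,⟨b3,g3⟩,⟨b4,g4⟩⟩ := hy
  exact ⟨⟨a1+b1, by simp [h1,g1]⟩, ⟨a2+b2, by simp [h2,g2]⟩,
    ⟨a3+b3, by simp [h3,g3]⟩, ⟨a4+b4, by simp [h4,g4]⟩⟩

lemma IQ.zsmul {x : Quaternion ℚ} (c : ℤ) (hx : IQ x) : IQ (c • x) := by
  obtain ⟨⟨a1,h1⟩,⟨a2,h2⟩,⟨a3,h3⟩,⟨a4,h4⟩⟩ := hx
  exact ⟨⟨c*a1, by simp [h1]⟩, ⟨c*a2, by simp [h2]⟩, ⟨c*a3, by simp [h3]⟩, ⟨c*a4, by simp [h4]⟩⟩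

lemma IQ.mul {x y : Quaternion ℚ} (hx : IQ x) (hy : IQ y) : IQ (x * y) := by
  obtain ⟨⟨a1,h1⟩,⟨a2,h2⟩,⟨a3,h3⟩,⟨a4,h4⟩⟩ := hx
  obtain ⟨⟨b1,g1⟩,⟨b2,g2⟩,⟨b3,g3⟩,⟨b4,g4⟩⟩ := hy
  refine ⟨⟨a1*b1 - a2*b2 - a3*b3 - a4*b4, ?_⟩, ⟨a1*b2 + a2*b1 + a3*b4 - a4*b3, ?_⟩,
    ⟨a1*b3 - a2*b4 + a3*b1 + a4*b2, ?_⟩, ⟨a1*b4 + a2*b3 - a3*b2 + a4*b1, ?_⟩⟩ <;>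
  · simp only [Quaternion.re_mul, Quaternion.imI_mul, Quaternion.imJ_mul, Quaternion.imK_mul,
      h1, h2, h3, h4, g1, g2, g3, g4]
    push_cast
    ring

lemma IQ.sum {ι : Type*} (s : Finset ι) (f : ι → Quaternion ℚ) (h : ∀ i ∈ s, IQ (f i)) :
    IQ (∑ i ∈ s, f i) :=
  Finset.sum_induction f IQ (fun _ _ => IQ.add) IQ.zero h

lemma IQ.normSq_nat {x : Quaternion ℚ} (hx : IQ x) : ∃ k : ℕ, normSq x = k := by
  obtain ⟨⟨a1,h1⟩,⟨a2,h2⟩,⟨a3,h3⟩,⟨a4,h4⟩⟩ := hx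
  refine ⟨(a1^2 + a2^2 + a3^2 + a4^2).toNat, ?_⟩
  have hnn : (0:ℤ) ≤ a1^2 + a2^2 + a3^2 + a4^2 := by positivity
  have h5 : (((a1^2 + a2^2 + a3^2 + a4^2).toNat : ℕ) : ℚ)
      = ((a1^2 + a2^2 + a3^2 + a4^2 : ℤ) : ℚ) := by
    exact_mod_cast congrArg (fun z : ℤ => (z : ℚ)) (Int.toNat_of_nonneg hnn)
  rw [Quaternion.normSq_def', h1, h2, h3, h4, h5]
  push_cast
  ring

lemma normSq_zsmul (c : ℤ) (x : Quaternion ℚ) : normSq (c • x) = (c:ℚ)^2 * normSq x := by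
  rw [Quaternion.normSq_def', Quaternion.normSq_def']
  simp
  ring

lemma one_mem_hurwitz : (1 : Quaternion ℚ) ∈ Hurwitz := by
  refine ⟨2, 0, 0, 0, ⟨by norm_num, by norm_num, by norm_num⟩, ?_⟩
  ext <;> simp

lemma hurwitz_mul {x y : Quaternion ℚ} (hx : x ∈ Hurwitz) (hy : y ∈ Hurwitz) :
    x * y ∈ Hurwitz := by
  obtain ⟨a, b, c, d, ⟨p1, p2, p3⟩, rfl⟩ := hx
  obtain ⟨a', b', c', d', ⟨q1, q2, q3⟩, rfl⟩ := hy
  obtain ⟨u, rfl⟩ : ∃ u, b = a + 2*u := ⟨(b-a)/2, by omega⟩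
  obtain ⟨v, rfl⟩ : ∃ v, c = a + 2*v := ⟨(c-a)/2, by omega⟩
  obtain ⟨w, rfl⟩ : ∃ w, d = a + 2*w := ⟨(d-a)/2, by omega⟩
  obtain ⟨u', rfl⟩ : ∃ u', b' = a' + 2*u' := ⟨(b'-a')/2, by omega⟩
  obtain ⟨v', rfl⟩ : ∃ v', c' = a' + 2*v' := ⟨(c'-a')/2, by omega⟩
  obtain ⟨w', rfl⟩ : ∃ w', d' = a' + 2*w' := ⟨(d'-a')/2, by omega⟩
  refine ⟨-(a*a') - a*(u'+v'+w') - a'*(u+v+w) - 2*(u*u'+v*v'+w*w'),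
    a*a' + a*(u'-v'+w') + a'*(u+v-w) + 2*(v*w'-w*v'),
    a*a' + a*(u'+v'-w') + a'*(-u+v+w) + 2*(w*u'-u*w'),
    a*a' + a*(-u'+v'+w') + a'*(u-v+w) + 2*(u*v'-v*u'), ⟨?_, ?_, ?_⟩, ?_⟩
  · exact Int.modEq_iff_dvd.mpr
      ⟨a*a' + a*(u'+w') + a'*(u+v) + (v*w'-w*v'+u*u'+v*v'+w*w'), by ring⟩
  · exact Int.modEq_iff_dvd.mpr ⟨a*(v'-w') + a'*(w-u) + (w*u'-u*w'-v*w'+w*v'), by ring⟩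
  · exact Int.modEq_iff_dvd.mpr ⟨a*(w'-u') + a'*(u-v) + (u*v'-v*u'-w*u'+u*w'), by ring⟩
  · ext <;>
    · erw [QuaternionAlgebra.mk_mul_mk]
      push_cast
      ring

lemma hurwitz_two_smul {h : Quaternion ℚ} (hh : h ∈ Hurwitz) : IQ ((2:ℤ) • h) := by
  obtain ⟨a, b, c, d, -, rfl⟩ := hh
  refine ⟨⟨a, ?_⟩, ⟨b, ?_⟩, ⟨c, ?_⟩, ⟨d, ?_⟩⟩ <;>
  · show (2:ℤ) • (_ / 2 : ℚ) = _
    rw [zsmul_eq_mul]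
    push_cast
    ring

lemma den_smul_int (q : ℚ) (m : ℤ) (h : (q.den : ℤ) ∣ m) : ∃ a : ℤ, (m:ℚ) * q = a := by
  obtain ⟨k, hk⟩ := h
  refine ⟨k * q.num, ?_⟩
  have hq : (q.den : ℚ) * q = q.num := by
    rw [mul_comm]; exact_mod_cast Rat.mul_den_eq_num q
  rw [hk]; push_cast; rw [mul_comm ((q.den:ℚ)) _, mul_assoc, hq]

lemma half_odd {t : ℚ} (h : (t - round t)^2 = 1/4) : ∃ a : ℤ, a % 2 = 1 ∧ t = a / 2 := by
  have h0 : (t - round t - 1/2) * (t - round t + 1/2) = 0 := by linear_combination h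
  rcases mul_eq_zero.mp h0 with h1 | h1
  · exact ⟨2 * round t + 1, by omega, by push_cast; linarith⟩
  · exact ⟨2 * round t - 1, by omega, by push_cast; linarith⟩

lemma euclid (z : Quaternion ℚ) : ∃ h ∈ Hurwitz, normSq (z - h) < 1 := by
  set w : Quaternion ℚ :=
    ⟨((round z.re : ℤ) : ℚ), ((round z.imI : ℤ) : ℚ), ((round z.imJ : ℤ) : ℚ),
      ((round z.imK : ℤ) : ℚ)⟩ with hw
  have hwH : w ∈ Hurwitz := by
    refine ⟨2 * round z.re, 2 * round z.imI, 2 * round z.imJ, 2 * round z.imK,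
      ⟨by omega, by omega, by omega⟩, ?_⟩
    ext <;> simp [hw]
  have hsq : ∀ t : ℚ, (t - round t)^2 ≤ 1/4 := by
    intro t
    have h1 := abs_sub_round t
    have h2 : |t - round t|^2 ≤ (1/2:ℚ)^2 := by
      apply pow_le_pow_left₀ (abs_nonneg _) h1
    rw [sq_abs] at h2
    linarith
  have hval : normSq (z - w) = (z.re - round z.re)^2 + (z.imI - round z.imI)^2
      + (z.imJ - round z.imJ)^2 + (z.imK - round z.imK)^2 := by
    rw [Quaternion.normSq_def']
    rfl
  by_cases hlt : normSq (z - w) < 1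
  · exact ⟨w, hwH, hlt⟩
  · push_neg at hlt
    have e1 := hsq z.re
    have e2 := hsq z.imI
    have e3 := hsq z.imJ
    have e4 := hsq z.imK
    rw [hval] at hlt
    have f1 : (z.re - round z.re)^2 = 1/4 := by linarith
    have f2 : (z.imI - round z.imI)^2 = 1/4 := by linarith
    have f3 : (z.imJ - round z.imJ)^2 = 1/4 := by linarith
    have f4 : (z.imK - round z.imK)^2 = 1/4 := by linarith
    obtain ⟨a, ha, hae⟩ := half_odd f1
    obtain ⟨b, hb, hbe⟩ := half_odd f2
    obtain ⟨c, hc, hce⟩ := half_odd f3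
    obtain ⟨d, hd, hde⟩ := half_odd f4
    exact ⟨z, ⟨a, b, c, d, ⟨by omega, by omega, by omega⟩, by ext <;> simp [hae, hbe, hce, hde]⟩,
      by simp⟩

lemma normSq_pos {x : Quaternion ℚ} (hx : x ≠ 0) : 0 < normSq x :=
  lt_of_le_of_ne Quaternion.normSq_nonneg (fun he => hx (Quaternion.normSq_eq_zero.mp he.symm))

end HurwitzAux

open HurwitzAux in
/-- Every subring of the rational Hamilton quaternions which is finitely generated as a
`ℤ`-module is conjugate, by an element of `B(ℚ)ˣ`, to a subring of the Hurwitz order. -/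
theorem fg_subring_conjugate_into_hurwitz (R : Subring (Quaternion ℚ))
    (hfg : ∃ n : ℕ, ∃ g : Fin n → Quaternion ℚ,
        ∀ x ∈ R, ∃ c : Fin n → ℤ, x = ∑ i, (c i : ℚ) • g i) :
    ∃ q : Quaternion ℚ, q ≠ 0 ∧ ∀ r ∈ R, q⁻¹ * r * q ∈ Hurwitz := by
  classical
  obtain ⟨n, g, hg⟩ := hfg
  -- common denominator for the generators
  set D : Fin n → ℤ := fun i =>
    ((g i).re.den : ℤ) * ((g i).imI.den : ℤ) * ((g i).imJ.den : ℤ) * ((g i).imK.den : ℤ)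
    with hD
  set M : ℤ := (∏ i, D i) with hM
  have hDpos : ∀ i, 0 < D i := by
    intro i
    rw [hD]
    have h1 := (g i).re.den_pos
    have h2 := (g i).imI.den_pos
    have h3 := (g i).imJ.den_pos
    have h4 := (g i).imK.den_pos
    positivity
  have hM0 : 0 < M := by
    rw [hM]
    exact Finset.prod_pos fun i _ => hDpos i
  have hdvdM : ∀ i, D i ∣ M := by
    intro i
    rw [hM]
    exact Finset.dvd_prod_of_mem _ (Finset.mem_univ i)
  have hMg : ∀ i, IQ (M • g i) := by
    intro i
    have hcoord : ∀ t : ℚ, ((t.den : ℤ) ∣ D i) → ∃ a : ℤ, (M:ℚ) * t = a :=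
      fun t ht => den_smul_int t M (ht.trans (hdvdM i))
    refine ⟨?_, ?_, ?_, ?_⟩
    · rw [show (M • g i).re = (M:ℚ) * (g i).re by simp]
      exact hcoord _ ⟨((g i).imI.den : ℤ) * ((g i).imJ.den : ℤ) * ((g i).imK.den : ℤ),
        by rw [hD]; ring⟩
    · rw [show (M • g i).imI = (M:ℚ) * (g i).imI by simp]
      exact hcoord _ ⟨((g i).re.den : ℤ) * ((g i).imJ.den : ℤ) * ((g i).imK.den : ℤ),
        by rw [hD]; ring⟩
    · rw [show (M • g i).imJ = (M:ℚ) * (g i).imJ by simp]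
      exact hcoord _ ⟨((g i).re.den : ℤ) * ((g i).imI.den : ℤ) * ((g i).imK.den : ℤ),
        by rw [hD]; ring⟩
    · rw [show (M • g i).imK = (M:ℚ) * (g i).imK by simp]
      exact hcoord _ ⟨((g i).re.den : ℤ) * ((g i).imI.den : ℤ) * ((g i).imJ.den : ℤ),
        by rw [hD]; ring⟩
  have hMR : ∀ r ∈ R, IQ (M • r) := by
    intro r hr
    obtain ⟨c, hc⟩ := hg r hr
    have : M • r = ∑ i, (c i) • (M • g i) := by
      rw [hc, Finset.smul_sum]
      refine Finset.sum_congr rfl fun i _ => ?_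
      rw [smul_comm, Int.cast_smul_eq_zsmul]
    rw [this]
    exact IQ.sum _ _ fun i _ => IQ.zsmul _ (hMg i)
  -- the lattice I = span (R * Hurwitz)
  set Imod : Submodule ℤ (Quaternion ℚ) :=
    Submodule.span ℤ {x | ∃ r ∈ (R : Set (Quaternion ℚ)), ∃ h ∈ Hurwitz, x = r * h} with hImod
  have one_mem_I : (1 : Quaternion ℚ) ∈ Imod :=
    Submodule.subset_span ⟨1, R.one_mem, 1, one_mem_hurwitz, by rw [one_mul]⟩
  have mulleft : ∀ r ∈ R, ∀ x ∈ Imod, r * x ∈ Imod := by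
    intro r hr x hx
    induction hx using Submodule.span_induction with
    | mem y hy =>
        obtain ⟨r', hr', h, hh, rfl⟩ := hy
        exact Submodule.subset_span ⟨r * r', R.mul_mem hr hr', h, hh, (mul_assoc _ _ _).symm⟩
    | zero => rw [mul_zero]; exact zero_mem _
    | add y z _ _ hy hz => rw [mul_add]; exact add_mem hy hz
    | smul c y _ hy => rw [mul_smul_comm]; exact Submodule.smul_mem _ _ hy
  have mulright : ∀ h ∈ Hurwitz, ∀ x ∈ Imod, x * h ∈ Imod := by
    intro h hh x hx
    induction hx using Submodule.span_induction with
    | mem y hy =>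
        obtain ⟨r', hr', h', hh', rfl⟩ := hy
        exact Submodule.subset_span ⟨r', hr', h' * h, hurwitz_mul hh' hh, (mul_assoc _ _ _)⟩
    | zero => rw [zero_mul]; exact zero_mem _
    | add y z _ _ hy hz => rw [add_mul]; exact add_mem hy hz
    | smul c y _ hy => rw [smul_mul_assoc]; exact Submodule.smul_mem _ _ hy
  have hIQ : ∀ x ∈ Imod, IQ ((M * 2) • x) := by
    intro x hx
    induction hx using Submodule.span_induction with
    | mem y hy =>
        obtain ⟨r', hr', h, hh, rfl⟩ := hy
        rw [show (M * 2) • (r' * h) = (M • r') * ((2:ℤ) • h) from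
          (smul_mul_smul_comm M r' 2 h).symm]
        exact IQ.mul (hMR r' hr') (hurwitz_two_smul hh)
    | zero => rw [smul_zero]; exact IQ.zero
    | add y z _ _ hy hz => rw [smul_add]; exact IQ.add hy hz
    | smul c y _ hy => rw [smul_comm]; exact IQ.zsmul _ hy
  -- the key quantity is integral on I
  have hknat : ∀ x ∈ Imod, ∃ k : ℕ, ((M*2 : ℤ) : ℚ)^2 * normSq x = k := by
    intro x hx
    obtain ⟨k, hk⟩ := (hIQ x hx).normSq_nat
    exact ⟨k, by rw [← hk, normSq_zsmul]⟩
  -- minimal nonzero norm element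
  set S : Set ℕ := {k | ∃ x, x ∈ Imod ∧ x ≠ 0 ∧ ((M*2 : ℤ) : ℚ)^2 * normSq x = k} with hS
  have hSne : S.Nonempty := by
    obtain ⟨k, hk⟩ := hknat 1 one_mem_I
    exact ⟨k, 1, one_mem_I, one_ne_zero, hk⟩
  obtain ⟨q, hqI, hq0, hqval⟩ : ∃ x, x ∈ Imod ∧ x ≠ 0 ∧
      ((M*2 : ℤ) : ℚ)^2 * normSq x = (sInf S : ℕ) := Nat.sInf_mem hSne
  have hmin : ∀ x ∈ Imod, x ≠ 0 → normSq q ≤ normSq x := by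
    intro x hx hx0
    obtain ⟨k, hk⟩ := hknat x hx
    have hkS : k ∈ S := ⟨x, hx, hx0, hk⟩
    have hle : sInf S ≤ k := Nat.sInf_le hkS
    have hA : (0:ℚ) < ((M*2 : ℤ) : ℚ)^2 := by
      have : (M*2 : ℤ) ≠ 0 := by omega
      positivity
    have : ((M*2 : ℤ) : ℚ)^2 * normSq q ≤ ((M*2 : ℤ) : ℚ)^2 * normSq x := by
      rw [hqval, hk]
      exact_mod_cast hle
    exact le_of_mul_le_mul_left this hA
  refine ⟨q, hq0, ?_⟩
  intro r hr
  have hrq : r * q ∈ Imod := mulleft r hr q hqI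
  obtain ⟨h, hhH, hlt⟩ := euclid (q⁻¹ * (r * q))
  have hqpos := normSq_pos hq0
  have hxI : r * q - q * h ∈ Imod := sub_mem hrq (mulright h hhH q hqI)
  have key : q * (q⁻¹ * (r * q) - h) = r * q - q * h := by
    rw [mul_sub, ← mul_assoc, mul_inv_cancel₀ hq0, one_mul]
  have hsmall : normSq (r * q - q * h) < normSq q := by
    rw [← key, map_mul]
    calc normSq q * normSq (q⁻¹ * (r * q) - h) < normSq q * 1 :=
          mul_lt_mul_of_pos_left hlt hqpos
      _ = normSq q := mul_one _
  have hzero : r * q - q * h = 0 := by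
    by_contra hne
    exact absurd hsmall (not_lt.mpr (hmin _ hxI hne))
  have hrqh : r * q = q * h := sub_eq_zero.mp hzero
  have : q⁻¹ * r * q = h := by
    rw [mul_assoc, hrqh, ← mul_assoc, inv_mul_cancel₀ hq0, one_mul]
  rw [this]
  exact hhH
end

section
/- Every Hurwitz quaternion of reduced norm 10 can be written as r·u, where u is a unit of the Hurwitz order B(ℤ) and r belongs to the set {1+3i, 1-3i, 1+3j, 1-3j, 1+3k, 1-3k}. -/
def L7 : List ℤ := [-3,-2,-1,0,1,2,3]
def L6 : List (ℤ×ℤ×ℤ×ℤ) := [(1,3,0,0),(1,-3,0,0),(1,0,3,0),(1,0,-3,0),(1,0,0,3),(1,0,0,-3)]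
def L24 : List (ℤ×ℤ×ℤ×ℤ) :=
  [(2,0,0,0),(-2,0,0,0),(0,2,0,0),(0,-2,0,0),(0,0,2,0),(0,0,-2,0),(0,0,0,2),(0,0,0,-2),
   (1,1,1,1),(1,1,1,-1),(1,1,-1,1),(1,1,-1,-1),(1,-1,1,1),(1,-1,1,-1),(1,-1,-1,1),(1,-1,-1,-1),
   (-1,1,1,1),(-1,1,1,-1),(-1,1,-1,1),(-1,1,-1,-1),(-1,-1,1,1),(-1,-1,1,-1),(-1,-1,-1,1),(-1,-1,-1,-1)]

set_option maxRecDepth 10000 in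
lemma key : ∀ a ∈ L7, ∀ b ∈ L7, ∀ c ∈ L7, ∀ d ∈ L7,
    a*a+b*b+c*c+d*d = 10 →
    ∃ r ∈ L6, ∃ u ∈ L24,
      (u.1 % 2 = u.2.1 % 2 ∧ u.2.1 % 2 = u.2.2.1 % 2 ∧ u.2.2.1 % 2 = u.2.2.2 % 2) ∧
      u.1*u.1 + u.2.1*u.2.1 + u.2.2.1*u.2.2.1 + u.2.2.2*u.2.2.2 = 4 ∧
      2*a = r.1*u.1 - r.2.1*u.2.1 - r.2.2.1*u.2.2.1 - r.2.2.2*u.2.2.2 ∧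
      2*b = r.1*u.2.1 + r.2.1*u.1 + r.2.2.1*u.2.2.2 - r.2.2.2*u.2.2.1 ∧
      2*c = r.1*u.2.2.1 - r.2.1*u.2.2.2 + r.2.2.1*u.1 + r.2.2.2*u.2.1 ∧
      2*d = r.1*u.2.2.2 + r.2.1*u.2.2.1 - r.2.2.1*u.2.1 + r.2.2.2*u.1 := by
  decide

lemma odd_sq_mod8 (a : ℤ) (h : a % 2 = 1) : a * a % 8 = 1 := by
  obtain ⟨m, rfl⟩ : ∃ m, a = 2*m+1 := ⟨a/2, by omega⟩
  have h2 : (2*m+1)*(2*m+1) = 4*(m*(m+1)) + 1 := by ring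
  obtain ⟨t, ht⟩ := Int.even_mul_succ_self m
  rw [h2, ht]
  omega

lemma bound_of_sq (n : ℤ) (h : n * n ≤ 10) : -3 ≤ n ∧ n ≤ 3 := by
  constructor <;> nlinarith [h]

set_option maxHeartbeats 1000000 in
/-- Every Hurwitz quaternion of reduced norm `10` is of the form `r·u` with `u` a unit of
the Hurwitz order and `r ∈ {1 ± 3i, 1 ± 3j, 1 ± 3k}`. -/
theorem norm_ten_factorization (x : Quaternion ℚ) (hx : x ∈ Hurwitz)
    (hnorm : Quaternion.normSq x = 10) :
    ∃ r u : Quaternion ℚ,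
      (r = ⟨1, 3, 0, 0⟩ ∨ r = ⟨1, -3, 0, 0⟩ ∨ r = ⟨1, 0, 3, 0⟩ ∨ r = ⟨1, 0, -3, 0⟩ ∨
        r = ⟨1, 0, 0, 3⟩ ∨ r = ⟨1, 0, 0, -3⟩) ∧
      u ∈ Hurwitz ∧ (∃ v ∈ Hurwitz, u * v = 1 ∧ v * u = 1) ∧ x = r * u := by
  obtain ⟨a, b, c, d, ⟨hab, hbc, hcd⟩, rfl⟩ := hx
  erw [Quaternion.normSq_def'] at hnorm
  simp only at hnorm
  have h40 : a*a + b*b + c*c + d*d = 40 := by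
    have : ((a*a + b*b + c*c + d*d : ℤ) : ℚ) = 40 := by
      push_cast
      linear_combination 4 * hnorm
    exact_mod_cast this
  -- All coordinates are even
  have ha0 : a % 2 = 0 := by
    rcases Int.emod_two_eq a with h | h
    · exact h
    · exfalso
      have hA := odd_sq_mod8 a h
      have hB := odd_sq_mod8 b (by omega)
      have hC := odd_sq_mod8 c (by omega)
      have hD := odd_sq_mod8 d (by omega)
      generalize a*a = A at hA h40
      generalize b*b = B at hB h40
      generalize c*c = C at hC h40
      generalize d*d = D at hD h40
      omega
  obtain ⟨a₁, rfl⟩ : ∃ m, a = 2*m := ⟨a/2, by omega⟩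
  obtain ⟨b₁, rfl⟩ : ∃ m, b = 2*m := ⟨b/2, by omega⟩
  obtain ⟨c₁, rfl⟩ : ∃ m, c = 2*m := ⟨c/2, by omega⟩
  obtain ⟨d₁, rfl⟩ : ∃ m, d = 2*m := ⟨d/2, by omega⟩
  have h10 : a₁*a₁ + b₁*b₁ + c₁*c₁ + d₁*d₁ = 10 := by
    have h4 : 4*(a₁*a₁ + b₁*b₁ + c₁*c₁ + d₁*d₁) = 40 := by linear_combination h40
    linarith
  have memL7 : ∀ n : ℤ, n*n ≤ 10 → n ∈ L7 := by
    intro n hn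
    obtain ⟨h1, h2⟩ := bound_of_sq n hn
    simp only [L7, List.mem_cons, List.not_mem_nil, or_false]
    omega
  obtain ⟨r4, hr6, u4, _, ⟨hu1, hu2, hu3⟩, hnu, h1, h2, h3, h4⟩ :=
    key a₁ (memL7 a₁ (by nlinarith [mul_self_nonneg b₁, mul_self_nonneg c₁, mul_self_nonneg d₁]))
        b₁ (memL7 b₁ (by nlinarith [mul_self_nonneg a₁, mul_self_nonneg c₁, mul_self_nonneg d₁]))
        c₁ (memL7 c₁ (by nlinarith [mul_self_nonneg a₁, mul_self_nonneg b₁, mul_self_nonneg d₁]))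
        d₁ (memL7 d₁ (by nlinarith [mul_self_nonneg a₁, mul_self_nonneg b₁, mul_self_nonneg c₁]))
        h10
  obtain ⟨p, q, s, t⟩ := r4
  obtain ⟨e, f, g, k⟩ := u4
  simp only at hu1 hu2 hu3 hnu h1 h2 h3 h4
  refine ⟨⟨(p:ℚ), q, s, t⟩, ⟨(e:ℚ)/2, (f:ℚ)/2, (g:ℚ)/2, (k:ℚ)/2⟩, ?_, ?_, ?_, ?_⟩
  · simp only [L6, List.mem_cons, List.not_mem_nil, or_false, Prod.mk.injEq] at hr6
    rcases hr6 with ⟨rfl,rfl,rfl,rfl⟩|⟨rfl,rfl,rfl,rfl⟩|⟨rfl,rfl,rfl,rfl⟩|⟨rfl,rfl,rfl,rfl⟩|⟨rfl,rfl,rfl,rfl⟩|⟨rfl,rfl,rfl,rfl⟩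
    · left; ext <;> norm_num
    · right; left; ext <;> norm_num
    · right; right; left; ext <;> norm_num
    · right; right; right; left; ext <;> norm_num
    · right; right; right; right; left; ext <;> norm_num
    · right; right; right; right; right; ext <;> norm_num
  · exact ⟨e, f, g, k, ⟨hu1, hu2, hu3⟩, rfl⟩
  · refine ⟨⟨(e:ℚ)/2, (-f:ℚ)/2, (-g:ℚ)/2, (-k:ℚ)/2⟩, ⟨e, -f, -g, -k, ⟨by omega, by omega, by omega⟩, rfl⟩, ?_, ?_⟩
    · have hst : (⟨(e:ℚ)/2, (-f:ℚ)/2, (-g:ℚ)/2, (-k:ℚ)/2⟩ : Quaternion ℚ) =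
          star (⟨(e:ℚ)/2, (f:ℚ)/2, (g:ℚ)/2, (k:ℚ)/2⟩ : Quaternion ℚ) := by
        ext <;> simp [neg_div]
      erw [hst, Quaternion.self_mul_star]
      have : Quaternion.normSq (⟨(e:ℚ)/2, (f:ℚ)/2, (g:ℚ)/2, (k:ℚ)/2⟩ : Quaternion ℚ) = 1 := by
        erw [Quaternion.normSq_def']
        have : ((e*e + f*f + g*g + k*k : ℤ) : ℚ) = 4 := by exact_mod_cast hnu
        push_cast at this
        nlinarith [this]
      rw [this]
      norm_num
    · have hst : (⟨(e:ℚ)/2, (-f:ℚ)/2, (-g:ℚ)/2, (-k:ℚ)/2⟩ : Quaternion ℚ) =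
          star (⟨(e:ℚ)/2, (f:ℚ)/2, (g:ℚ)/2, (k:ℚ)/2⟩ : Quaternion ℚ) := by
        ext <;> simp [neg_div]
      erw [hst, Quaternion.star_mul_self]
      have : Quaternion.normSq (⟨(e:ℚ)/2, (f:ℚ)/2, (g:ℚ)/2, (k:ℚ)/2⟩ : Quaternion ℚ) = 1 := by
        erw [Quaternion.normSq_def']
        have : ((e*e + f*f + g*g + k*k : ℤ) : ℚ) = 4 := by exact_mod_cast hnu
        push_cast at this
        nlinarith [this]
      rw [this]
      norm_num
  · have e1 : ((2*a₁ : ℤ) : ℚ) = ((p*e - q*f - s*g - t*k : ℤ) : ℚ) := by exact_mod_cast h1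
    have e2 : ((2*b₁ : ℤ) : ℚ) = ((p*f + q*e + s*k - t*g : ℤ) : ℚ) := by exact_mod_cast h2
    have e3 : ((2*c₁ : ℤ) : ℚ) = ((p*g - q*k + s*e + t*f : ℤ) : ℚ) := by exact_mod_cast h3
    have e4 : ((2*d₁ : ℤ) : ℚ) = ((p*k + q*g - s*f + t*e : ℤ) : ℚ) := by exact_mod_cast h4
    push_cast at e1 e2 e3 e4
    ext <;>
      erw [QuaternionAlgebra.mk_mul_mk] <;> simp only <;>
      push_cast <;> linarith
end

section
/- Let p be an odd prime and d ∈ ℤ_p with p ∤ d. Then the group SL₂(ℤ_p), acting by conjugation, acts transitively on the set of matrices in M₂(ℤ_p) with trace 0 and determinant d. -/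
open Matrix Polynomial

section Aux

variable {p : ℕ} [Fact p.Prime]

lemma aux_toZMod_eq_zero_iff (z : ℤ_[p]) :
    PadicInt.toZMod z = 0 ↔ (p : ℤ_[p]) ∣ z := by
  rw [← RingHom.mem_ker, PadicInt.ker_toZMod, PadicInt.maximalIdeal_eq_span_p,
    Ideal.mem_span_singleton]

lemma aux_norm_eq_one {z : ℤ_[p]} (h : ¬ (p : ℤ_[p]) ∣ z) : ‖z‖ = 1 := by
  have h1 := PadicInt.norm_le_one z
  have h2 := (PadicInt.norm_lt_one_iff_dvd z).not.mpr h
  have := lt_or_eq_of_le h1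
  tauto

/-- Hensel-type root finding for quadratics with unit derivative. -/
lemma aux_quad_root (a b c t₀ : ℤ_[p])
    (h1 : (p : ℤ_[p]) ∣ (a * t₀ ^ 2 + b * t₀ + c))
    (h2 : ¬ (p : ℤ_[p]) ∣ (2 * a * t₀ + b)) :
    ∃ t : ℤ_[p], a * t ^ 2 + b * t + c = 0 := by
  set F : Polynomial ℤ_[p] := C a * X ^ 2 + C b * X + C c with hF
  have heval : ∀ z, F.eval z = a * z ^ 2 + b * z + c := by
    intro z; simp [hF]
  have hderiv : ∀ z, F.derivative.eval z = 2 * a * z + b := by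
    intro z; simp [hF]; ring
  have hnorm : ‖F.eval t₀‖ < ‖F.derivative.eval t₀‖ ^ 2 := by
    rw [heval, hderiv, aux_norm_eq_one h2]
    simpa [PadicInt.norm_lt_one_iff_dvd] using h1
  obtain ⟨z, hz, -⟩ := hensels_lemma hnorm
  exact ⟨z, by rw [← heval]; exact hz⟩

/-- A unimodular binary quadratic form over `ℤ_p` (p odd) represents 1. -/
lemma aux_rep_one (hp : p ≠ 2) (a b c d : ℤ_[p]) (hd : ¬ (p : ℤ_[p]) ∣ d)
    (hdet : b ^ 2 + a * c = -d) :
    ∃ s t : ℤ_[p], a * t ^ 2 + 2 * b * (s * t) - c * s ^ 2 = 1 := by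
  set φ : ℤ_[p] →+* ZMod p := PadicInt.toZMod with hφ
  set A := φ a; set B := φ b; set Cc := φ c; set D := φ d
  have h2p : (2 : ZMod p) ≠ 0 := by
    intro h
    have h' : ((2 : ℕ) : ZMod p) = 0 := by exact_mod_cast h
    rw [ZMod.natCast_eq_zero_iff] at h'
    exact hp ((Nat.prime_dvd_prime_iff_eq Fact.out Nat.prime_two).mp h')
  have hD : D ≠ 0 := fun h => hd ((aux_toZMod_eq_zero_iff d).mp h)
  have hdet' : B ^ 2 + A * Cc = -D := by
    have := congrArg φ hdet
    simpa [map_add, _root_.map_mul, map_pow, map_neg] using this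
  have hcard : Fintype.card (ZMod p) % 2 = 1 := by
    rw [ZMod.card]
    exact (Nat.Prime.mod_two_eq_one_iff_ne_two Fact.out).mpr hp
  -- solve over ZMod p
  obtain ⟨σ, τ, hQ⟩ : ∃ σ τ : ZMod p, A * τ ^ 2 + 2 * B * (σ * τ) - Cc * σ ^ 2 = 1 := by
    by_cases hA : A = 0
    · have hB : B ≠ 0 := by
        intro h
        apply hD
        have h0 : -D = 0 := by rw [← hdet', hA, h]; ring
        linear_combination -h0
      refine ⟨1, (1 + Cc) / (2 * B), ?_⟩
      field_simp [hA]
      linear_combination (1 + Cc) ^ 2 * hA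
    · obtain ⟨u, σ, huσ⟩ := FiniteField.exists_root_sum_quadratic
        (f := C A * X ^ 2 + C 0 * X + C (-1)) (g := C (D * A⁻¹) * X ^ 2)
        (Polynomial.degree_quadratic hA)
        (Polynomial.degree_C_mul_X_pow 2 (mul_ne_zero hD (inv_ne_zero hA)))
        hcard
      simp only [eval_add, eval_mul, eval_pow, eval_C, eval_X, zero_mul, add_zero] at huσ
      refine ⟨σ, u - B * σ * A⁻¹, ?_⟩
      have hAinv : A * A⁻¹ = 1 := mul_inv_cancel₀ hA
      linear_combination huσ + (-2 * B * u * σ + B ^ 2 * σ ^ 2 * A⁻¹ + Cc * σ ^ 2) * hAinv - σ ^ 2 * A⁻¹ * hdet'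
  -- the gradient of the form does not vanish at (σ, τ)
  have hgrad : (2 * A * τ + 2 * B * σ ≠ 0) ∨ (2 * B * τ - 2 * Cc * σ ≠ 0) := by
    by_contra h
    push_neg at h
    obtain ⟨h1, h2⟩ := h
    exact h2p (by linear_combination τ * h1 + σ * h2 - 2 * hQ)
  -- lift the solution to ℤ_p by Hensel's lemma
  set s₀ : ℤ_[p] := (σ.val : ℤ_[p]) with hs₀
  set t₀ : ℤ_[p] := (τ.val : ℤ_[p]) with ht₀
  have hs : φ s₀ = σ := by rw [hs₀, map_natCast]; exact ZMod.natCast_zmod_val σ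
  have ht : φ t₀ = τ := by rw [ht₀, map_natCast]; exact ZMod.natCast_zmod_val τ
  rcases hgrad with hg | hg
  · obtain ⟨t, htr⟩ := aux_quad_root a (2 * b * s₀) (-(c * s₀ ^ 2) - 1) t₀
      (by
        rw [← aux_toZMod_eq_zero_iff]
        have h1 : φ (a * t₀ ^ 2 + 2 * b * s₀ * t₀ + (-(c * s₀ ^ 2) - 1)) =
            A * τ ^ 2 + 2 * B * (σ * τ) - Cc * σ ^ 2 - 1 := by
          simp [map_add, _root_.map_mul, map_pow, map_sub, map_neg, map_ofNat, hs, ht]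
          ring
        rw [h1, hQ, sub_self])
      (by
        intro h
        have h0 := (aux_toZMod_eq_zero_iff _).mpr h
        have h1 : φ (2 * a * t₀ + 2 * b * s₀) = 2 * A * τ + 2 * B * σ := by
          simp [map_add, _root_.map_mul, map_ofNat, hs, ht]
          rfl
        exact hg (h1 ▸ h0))
    exact ⟨s₀, t, by linear_combination htr⟩
  · obtain ⟨s, hsr⟩ := aux_quad_root (-c) (2 * b * t₀) (a * t₀ ^ 2 - 1) s₀
      (by
        rw [← aux_toZMod_eq_zero_iff]
        have h1 : φ (-c * s₀ ^ 2 + 2 * b * t₀ * s₀ + (a * t₀ ^ 2 - 1)) =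
            A * τ ^ 2 + 2 * B * (σ * τ) - Cc * σ ^ 2 - 1 := by
          simp [map_add, _root_.map_mul, map_pow, map_sub, map_neg, map_ofNat, hs, ht]
          ring
        rw [h1, hQ, sub_self])
      (by
        intro h
        have h0 := (aux_toZMod_eq_zero_iff _).mpr h
        have h1 : φ (2 * -c * s₀ + 2 * b * t₀) = 2 * B * τ - 2 * Cc * σ := by
          simp [map_add, _root_.map_mul, map_neg, map_ofNat, hs, ht]
          ring
        exact hg (h1 ▸ h0))
    exact ⟨s, t₀, by linear_combination hsr⟩

/-- Any trace-zero matrix of unit determinant `d` over `ℤ_p` (p odd) is conjugate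
to the canonical matrix `!![0, 1; -d, 0]`. -/
lemma aux_conj_canonical (hp : p ≠ 2) (d : ℤ_[p]) (hd : ¬ (p : ℤ_[p]) ∣ d)
    (x : Matrix (Fin 2) (Fin 2) ℤ_[p]) (hx : x.trace = 0) (hxd : x.det = d) :
    ∃ G : Matrix (Fin 2) (Fin 2) ℤ_[p], G.det = 1 ∧ x * G = G * !![0, 1; -d, 0] := by
  rw [Matrix.trace_fin_two] at hx
  rw [Matrix.det_fin_two] at hxd
  set b := x 0 0 with hb; set a := x 0 1 with ha; set c := x 1 0 with hc
  have h11 : x 1 1 = -b := by linear_combination hx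
  rw [h11] at hxd
  have hdet : b ^ 2 + a * c = -d := by linear_combination -hxd
  obtain ⟨s, t, hQ⟩ := aux_rep_one hp a b c d hd hdet
  refine ⟨!![b * s + a * t, s; c * s - b * t, t], ?_, ?_⟩
  · rw [Matrix.det_fin_two_of]
    linear_combination hQ
  · rw [Matrix.eta_fin_two x, h11, ← hb, ← ha, ← hc]
    ext i j
    fin_cases i <;> fin_cases j <;>
      simp [Matrix.mul_apply, Fin.sum_univ_two]
    · linear_combination s * hdet
    · linear_combination t * hdet
    · ring

end Aux

/-- For an odd prime `p` and `d ∈ ℤ_p` with `p ∤ d`, the conjugation action of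
`SL₂(ℤ_p)` on trace-zero matrices of determinant `d` in `M₂(ℤ_p)` is transitive. -/
theorem sl2_transitive_trace_zero_det (p : ℕ) [Fact p.Prime] (hp : p ≠ 2)
    (d : ℤ_[p]) (hd : ¬ (p : ℤ_[p]) ∣ d)
    (x y : Matrix (Fin 2) (Fin 2) ℤ_[p])
    (hx : x.trace = 0) (hy : y.trace = 0) (hxd : x.det = d) (hyd : y.det = d) :
    ∃ g : Matrix (Fin 2) (Fin 2) ℤ_[p], g.det = 1 ∧ y = g * x * g⁻¹ := by
  obtain ⟨Gx, hGx1, hGx2⟩ := aux_conj_canonical hp d hd x hx hxd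
  obtain ⟨Gy, hGy1, hGy2⟩ := aux_conj_canonical hp d hd y hy hyd
  have hux : IsUnit Gx.det := by rw [hGx1]; exact isUnit_one
  have huy : IsUnit Gy.det := by rw [hGy1]; exact isUnit_one
  have hx' : x = Gx * !![0, 1; -d, 0] * Gx⁻¹ := by
    rw [← hGx2, Matrix.mul_assoc, Matrix.mul_nonsing_inv _ hux, Matrix.mul_one]
  have hy' : y = Gy * !![0, 1; -d, 0] * Gy⁻¹ := by
    rw [← hGy2, Matrix.mul_assoc, Matrix.mul_nonsing_inv _ huy, Matrix.mul_one]
  refine ⟨Gy * Gx⁻¹, ?_, ?_⟩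
  · rw [Matrix.det_mul, hGy1, Matrix.det_nonsing_inv, hGx1, Ring.inverse_one, one_mul]
  · have hinv : (Gy * Gx⁻¹)⁻¹ = Gx * Gy⁻¹ := by
      rw [Matrix.mul_inv_rev, Matrix.nonsing_inv_nonsing_inv _ hux]
    rw [hinv, hx', hy']
    simp only [Matrix.mul_assoc, Matrix.nonsing_inv_mul_cancel_left _ _ hux]
end

section
/- Let p be an odd prime and d ∈ ℤ_p squarefree with p | d. Then the conjugation action of SL₂(ℤ_p) on the set of trace-zero matrices in M₂(ℤ_p) of determinant d has exactly two orbits, and these two orbits are interchanged by conjugation by some element of GL₂(ℤ_p); in particular GL₂(ℤ_p) acts transitively on this set. -/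
open Matrix

namespace SL2RamifiedAux

open PadicInt Polynomial

variable {p : ℕ} [Fact p.Prime]

lemma tz_dvd_iff (x : ℤ_[p]) : toZMod x = 0 ↔ (p : ℤ_[p]) ∣ x := by
  have h : toZMod x = 0 ↔ x ∈ RingHom.ker (toZMod : ℤ_[p] →+* ZMod p) := Iff.rfl
  rw [h, PadicInt.ker_toZMod, PadicInt.maximalIdeal_eq_span_p, Ideal.mem_span_singleton]

lemma unit_iff_not_dvd (x : ℤ_[p]) : IsUnit x ↔ ¬ (p : ℤ_[p]) ∣ x := by
  rw [← PadicInt.norm_lt_one_iff_dvd, ← PadicInt.not_isUnit_iff, not_not]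

lemma unit_iff_tz_ne (x : ℤ_[p]) : IsUnit x ↔ toZMod x ≠ 0 := by
  rw [unit_iff_not_dvd, ← tz_dvd_iff]

lemma two_unit (hp : p ≠ 2) : IsUnit (2 : ℤ_[p]) := by
  rw [unit_iff_not_dvd]
  intro h
  have h2 : toZMod (2 : ℤ_[p]) = 0 := (tz_dvd_iff _).mpr h
  rw [map_ofNat] at h2
  have h3 : ((2 : ℕ) : ZMod p) = 0 := by exact_mod_cast h2
  rw [ZMod.natCast_eq_zero_iff] at h3
  exact hp ((Nat.prime_dvd_prime_iff_eq (Fact.out) Nat.prime_two).mp h3)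

lemma exists_sqrt (hp : p ≠ 2) (a : ℤ_[p]) (ha : IsUnit a)
    (hs : IsSquare (toZMod a)) : ∃ s : ℤ_[p], s * s = a := by
  obtain ⟨t0, ht0⟩ := hs
  set t : ℤ_[p] := ((t0.val : ℕ) : ℤ_[p]) with htdef
  have htz : toZMod t = t0 := by
    rw [htdef, map_natCast, ZMod.natCast_val, ZMod.cast_id]
  have ht_unit : IsUnit t := by
    rw [unit_iff_tz_ne, htz]
    intro h0
    exact (unit_iff_tz_ne a).mp ha (by rw [ht0, h0, mul_zero])
  have hdvd : (p : ℤ_[p]) ∣ (t * t - a) := by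
    rw [← tz_dvd_iff, map_sub, _root_.map_mul, htz, ht0, sub_self]
  set F : Polynomial ℤ_[p] := X ^ 2 - C a with hF
  have hevalF : F.eval t = t * t - a := by simp [hF, sq]
  have hderiv : F.derivative.eval t = 2 * t := by simp [hF]; left; norm_num
  have hnt : ‖t‖ = 1 := PadicInt.isUnit_iff.mp ht_unit
  have hn2 : ‖(2:ℤ_[p])‖ = 1 := PadicInt.isUnit_iff.mp (two_unit hp)
  have hnorm : ‖F.eval t‖ < ‖F.derivative.eval t‖ ^ 2 := by
    rw [hevalF, hderiv, norm_mul, hn2, hnt]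
    obtain ⟨k, hk⟩ := hdvd
    rw [hk]
    calc ‖(p:ℤ_[p]) * k‖ ≤ ‖(p:ℤ_[p])‖ * 1 := by
          rw [norm_mul]
          exact mul_le_mul_of_nonneg_left (PadicInt.norm_le_one k) (norm_nonneg _)
      _ = (p : ℝ)⁻¹ := by rw [mul_one, PadicInt.norm_p]
      _ < (1 * 1) ^ 2 := by
          norm_num
          apply inv_lt_one_of_one_lt₀
          exact_mod_cast (Fact.out : p.Prime).one_lt
  obtain ⟨z, hz, -⟩ := hensels_lemma hnorm
  refine ⟨z, ?_⟩
  have h0 : z * z - a = 0 := by simpa [hF, sq] using hz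
  linear_combination h0

lemma nonsq_mul_nonsq (hp : p ≠ 2) {α β : ZMod p} (hα : α ≠ 0) (hβ : β ≠ 0)
    (h1 : ¬IsSquare α) (h2 : ¬IsSquare β) : IsSquare (α * β) := by
  have hc : ringChar (ZMod p) ≠ 2 := by rw [ZMod.ringChar_zmod_n]; exact hp
  have q1 : quadraticChar (ZMod p) α = -1 := quadraticChar_neg_one_iff_not_isSquare.mpr h1
  have q2 : quadraticChar (ZMod p) β = -1 := quadraticChar_neg_one_iff_not_isSquare.mpr h2
  have hmul : quadraticChar (ZMod p) (α * β) = 1 := by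
    rw [_root_.map_mul, q1, q2]; ring
  exact (quadraticChar_one_iff_isSquare (mul_ne_zero hα hβ)).mp hmul

section conj

variable {R : Type*} [CommRing R]

lemma conj_of_comm {g x y : Matrix (Fin 2) (Fin 2) R} (hg : IsUnit g.det)
    (e : y * g = g * x) : y = g * x * g⁻¹ := by
  rw [← e, mul_assoc, Matrix.mul_nonsing_inv g hg, mul_one]

lemma comm_of_conj {g x y : Matrix (Fin 2) (Fin 2) R} (hg : IsUnit g.det)
    (e : y = g * x * g⁻¹) : y * g = g * x := by
  rw [e, mul_assoc, mul_assoc, Matrix.nonsing_inv_mul g hg, mul_one]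

def SConj (x y : Matrix (Fin 2) (Fin 2) R) : Prop :=
  ∃ g : Matrix (Fin 2) (Fin 2) R, g.det = 1 ∧ y = g * x * g⁻¹

def GConj (x y : Matrix (Fin 2) (Fin 2) R) : Prop :=
  ∃ h : Matrix (Fin 2) (Fin 2) R, IsUnit h.det ∧ y = h * x * h⁻¹

lemma SConj.trans {x y z : Matrix (Fin 2) (Fin 2) R} (h1 : SConj x y) (h2 : SConj y z) :
    SConj x z := by
  obtain ⟨g, hg, e⟩ := h1
  obtain ⟨g', hg', e'⟩ := h2
  refine ⟨g' * g, by rw [Matrix.det_mul, hg, hg', mul_one], ?_⟩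
  rw [e', e, Matrix.mul_inv_rev]
  simp [mul_assoc]

lemma SConj.symm {x y : Matrix (Fin 2) (Fin 2) R} (h1 : SConj x y) : SConj y x := by
  obtain ⟨g, hg, e⟩ := h1
  have hu : IsUnit g.det := hg ▸ isUnit_one
  refine ⟨g⁻¹, by rw [Matrix.det_nonsing_inv, hg, Ring.inverse_one], ?_⟩
  rw [Matrix.nonsing_inv_nonsing_inv g hu, e]
  rw [show g⁻¹ * (g * x * g⁻¹) * g = (g⁻¹ * g) * x * (g⁻¹ * g) by simp [mul_assoc],
    Matrix.nonsing_inv_mul g hu, one_mul, mul_one]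

lemma SConj.gconj {x y : Matrix (Fin 2) (Fin 2) R} (h1 : SConj x y) : GConj x y := by
  obtain ⟨g, hg, e⟩ := h1
  exact ⟨g, hg ▸ isUnit_one, e⟩

lemma GConj.trans {x y z : Matrix (Fin 2) (Fin 2) R} (h1 : GConj x y) (h2 : GConj y z) :
    GConj x z := by
  obtain ⟨g, hg, e⟩ := h1
  obtain ⟨g', hg', e'⟩ := h2
  refine ⟨g' * g, by rw [Matrix.det_mul]; exact hg'.mul hg, ?_⟩
  rw [e', e, Matrix.mul_inv_rev]
  simp [mul_assoc]

lemma GConj.symm {x y : Matrix (Fin 2) (Fin 2) R} (h1 : GConj x y) : GConj y x := by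
  obtain ⟨g, hg, e⟩ := h1
  refine ⟨g⁻¹, by rw [Matrix.det_nonsing_inv]; exact hg.ringInverse, ?_⟩
  rw [Matrix.nonsing_inv_nonsing_inv g hg, e]
  rw [show g⁻¹ * (g * x * g⁻¹) * g = (g⁻¹ * g) * x * (g⁻¹ * g) by simp [mul_assoc],
    Matrix.nonsing_inv_mul g hg, one_mul, mul_one]

end conj

/-- normalization of an anti-diagonalizable matrix, case `a` unit. -/
lemma caseA (hp : p ≠ 2) (d ε ε' : ℤ_[p]) (hεε' : ε * ε' = 1)
    (hns : ¬ IsSquare (toZMod ε))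
    (b a c : ℤ_[p]) (ha : IsUnit a) (hdet : b * b + a * c = -d) :
    SConj !![0,1;-d,0] !![b,a;c,-b] ∨ SConj !![0,ε;-(d*ε'),0] !![b,a;c,-b] := by
  obtain ⟨u, hu⟩ := ha.exists_right_inv
  set c' : ℤ_[p] := c + b * b * u with hc'def
  have hg1det : (!![1,0;b*u,1] : Matrix (Fin 2) (Fin 2) ℤ_[p]).det = 1 := by
    simp [Matrix.det_fin_two_of]
  have hg1u : IsUnit (!![1,0;b*u,1] : Matrix (Fin 2) (Fin 2) ℤ_[p]).det := by
    rw [hg1det]; exact isUnit_one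
  have step1 : SConj !![b,a;c,-b] !![0,a;c',0] := by
    refine ⟨!![1,0;b*u,1], hg1det, conj_of_comm hg1u ?_⟩
    ext i j
    fin_cases i <;> fin_cases j <;>
      simp [Matrix.mul_apply, Fin.sum_univ_two, hc'def]
    all_goals first
      | ring1
      | linear_combination b * hu
      | linear_combination -b * hu
      | linear_combination 2 * b * hu
      | linear_combination -2 * b * hu
  have hac' : a * c' = -d := by
    rw [hc'def]
    linear_combination hdet + (b*b) * hu
  have hacx : a * (c + b*b*u) = -d := by linear_combination hdet + (b*b) * hu
  -- now split on the square class of the residue of `a`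
  have haz : toZMod a ≠ 0 := (unit_iff_tz_ne a).mp ha
  have hεu : IsUnit ε := IsUnit.of_mul_eq_one ε' hεε'
  have hεz : toZMod ε ≠ 0 := (unit_iff_tz_ne ε).mp hεu
  by_cases hsq : IsSquare (toZMod a)
  · -- square case: conjugate to x₀
    left
    obtain ⟨s, hs⟩ := exists_sqrt hp a ha hsq
    have hsu : IsUnit s := by
      rw [unit_iff_not_dvd]
      intro hdvd
      exact (unit_iff_not_dvd a).mp ha (by rw [← hs]; exact hdvd.mul_right s)
    obtain ⟨s', hss'⟩ := hsu.exists_right_inv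
    have hg2det : (!![s,0;0,s'] : Matrix (Fin 2) (Fin 2) ℤ_[p]).det = 1 := by
      simp [Matrix.det_fin_two_of, hss']
    have hg2u : IsUnit (!![s,0;0,s'] : Matrix (Fin 2) (Fin 2) ℤ_[p]).det := by
      rw [hg2det]; exact isUnit_one
    have step2 : SConj !![0,1;-d,0] !![0,a;c',0] := by
      refine ⟨!![s,0;0,s'], hg2det, conj_of_comm hg2u ?_⟩
      ext i j
      fin_cases i <;> fin_cases j <;>
        simp [Matrix.mul_apply, Fin.sum_univ_two]
      all_goals first
        | ring1
        | linear_combination -s' * hs + s * hss'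
        | linear_combination s' * hs - s * hss'
        | linear_combination (s*u) * hacx - (s*(c+b*b*u) + d*s') * hu + (d*u*s) * hss' - (d*u*s') * hs
        | linear_combination -((s*u) * hacx - (s*(c+b*b*u) + d*s') * hu + (d*u*s) * hss' - (d*u*s') * hs)
    exact step2.trans step1.symm
  · -- nonsquare case: conjugate to x₁
    right
    have hε'u : IsUnit ε' := IsUnit.of_mul_eq_one ε (by linear_combination hεε')
    have hε'z : toZMod ε' ≠ 0 := (unit_iff_tz_ne ε').mp hε'u
    have hε'ns : ¬ IsSquare (toZMod ε') := by
      intro ⟨γ, hγ⟩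
      apply hns
      refine ⟨toZMod ε * γ, ?_⟩
      have h1 : toZMod ε * toZMod ε' = 1 := by
        rw [← _root_.map_mul, hεε', _root_.map_one]
      calc toZMod ε = toZMod ε * (toZMod ε * toZMod ε') := by rw [h1, mul_one]
        _ = toZMod ε * toZMod ε * (γ * γ) := by rw [hγ]; ring
        _ = toZMod ε * γ * (toZMod ε * γ) := by ring
    have hsq2 : IsSquare (toZMod (a * ε')) := by
      rw [_root_.map_mul]
      exact nonsq_mul_nonsq hp haz hε'z hsq hε'ns
    obtain ⟨s, hs⟩ := exists_sqrt hp (a * ε') (ha.mul hε'u) hsq2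
    -- a = ε * s * s
    have hs2 : a = ε * (s * s) := by
      rw [hs]
      linear_combination (-a) * hεε'
    have hsu : IsUnit s := by
      rw [unit_iff_not_dvd]
      intro hdvd
      exact (unit_iff_not_dvd a).mp ha (by rw [hs2]; exact (hdvd.mul_right s).mul_left ε)
    obtain ⟨s', hss'⟩ := hsu.exists_right_inv
    have hg2det : (!![s,0;0,s'] : Matrix (Fin 2) (Fin 2) ℤ_[p]).det = 1 := by
      simp [Matrix.det_fin_two_of, hss']
    have hg2u : IsUnit (!![s,0;0,s'] : Matrix (Fin 2) (Fin 2) ℤ_[p]).det := by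
      rw [hg2det]; exact isUnit_one
    have step2 : SConj !![0,ε;-(d*ε'),0] !![0,a;c',0] := by
      refine ⟨!![s,0;0,s'], hg2det, conj_of_comm hg2u ?_⟩
      ext i j
      fin_cases i <;> fin_cases j <;>
        simp [Matrix.mul_apply, Fin.sum_univ_two]
      all_goals first
        | ring1
        | linear_combination s' * hs2 + ε * s * hss'
        | linear_combination -(s' * hs2 + ε * s * hss')
        | linear_combination (s*u) * hacx - (s*(c+b*b*u) + d*s'*ε') * hu + (d*u*s) * hss' - (d*u*s') * hs
        | linear_combination -((s*u) * hacx - (s*(c+b*b*u) + d*s'*ε') * hu + (d*u*s) * hss' - (d*u*s') * hs)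
    exact step2.trans step1.symm

lemma caseW (b a c : ℤ_[p]) : SConj !![b,a;c,-b] !![-b,-c;-a,b] := by
  have hwdet : (!![0,1;-1,0] : Matrix (Fin 2) (Fin 2) ℤ_[p]).det = 1 := by
    simp [Matrix.det_fin_two_of]
  refine ⟨!![0,1;-1,0], hwdet, conj_of_comm (by rw [hwdet]; exact isUnit_one) ?_⟩
  ext i j
  fin_cases i <;> fin_cases j <;>
    simp [Matrix.mul_apply, Fin.sum_univ_two]

lemma classify (hp : p ≠ 2) (d : ℤ_[p]) (hsq : Squarefree d) (hd : (p : ℤ_[p]) ∣ d)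
    (ε ε' : ℤ_[p]) (hεε' : ε * ε' = 1) (hns : ¬ IsSquare (toZMod ε))
    (y : Matrix (Fin 2) (Fin 2) ℤ_[p]) (hty : y.trace = 0) (hdy : y.det = d) :
    SConj !![0,1;-d,0] y ∨ SConj !![0,ε;-(d*ε'),0] y := by
  have htr := Matrix.trace_fin_two y
  rw [hty] at htr
  have hy11 : y 1 1 = - y 0 0 := by linear_combination -htr
  set b := y 0 0 with hb
  set a := y 0 1 with haa
  set c := y 1 0 with hc
  have hy : y = !![b, a; c, -b] := by
    rw [Matrix.eta_fin_two y, hy11]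
  have hdf := Matrix.det_fin_two y
  rw [hdy, hy11] at hdf
  rw [← hb, ← haa, ← hc] at hdf
  have hdet : b * b + a * c = -d := by linear_combination hdf
  have hunit : IsUnit a ∨ IsUnit c := by
    by_contra hcon
    push_neg at hcon
    obtain ⟨hna, hnc⟩ := hcon
    rw [unit_iff_not_dvd, not_not] at hna hnc
    have hpb2 : (p : ℤ_[p]) ∣ b * b := by
      have : b * b = -d - a * c := by linear_combination hdet
      rw [this]
      exact dvd_sub (hd.neg_right) (hna.mul_right c)
    have hpb : (p : ℤ_[p]) ∣ b :=
      (PadicInt.prime_p).dvd_of_dvd_pow (n := 2) (by rwa [sq])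
    have hp2 : (p : ℤ_[p]) * (p : ℤ_[p]) ∣ d := by
      have : d = -(b * b) - a * c := by linear_combination hdet
      rw [this]
      exact dvd_sub (mul_dvd_mul hpb hpb).neg_right (mul_dvd_mul hna hnc)
    exact (PadicInt.prime_p).not_unit (hsq _ hp2)
  rw [hy]
  rcases hunit with h | h
  · exact caseA hp d ε ε' hεε' hns b a c h hdet
  · have h2 := caseA hp d ε ε' hεε' hns (-b) (-c) (-a) h.neg
      (by linear_combination hdet)
    have hmm : (!![-b, -c; -a, -(-b)] : Matrix (Fin 2) (Fin 2) ℤ_[p]) = !![-b,-c;-a,b] := by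
      rw [neg_neg]
    rw [hmm] at h2
    rcases h2 with h2 | h2
    · exact Or.inl (h2.trans (caseW b a c).symm)
    · exact Or.inr (h2.trans (caseW b a c).symm)

lemma not_conj (d ε ε' : ℤ_[p]) (hd : (p : ℤ_[p]) ∣ d) (hεε' : ε * ε' = 1)
    (hns : ¬ IsSquare (toZMod ε)) :
    ¬ SConj (!![0,1;-d,0] : Matrix (Fin 2) (Fin 2) ℤ_[p]) !![0,ε;-(d*ε'),0] := by
  rintro ⟨g, hg, e⟩
  have hu : IsUnit g.det := by rw [hg]; exact isUnit_one
  have e' := comm_of_conj hu e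
  have h01 := congrFun (congrFun e' 0) 1
  have h11 := congrFun (congrFun e' 1) 1
  simp [Matrix.mul_apply, Fin.sum_univ_two] at h01 h11
  have hdetg : g 0 0 * g 1 1 - g 0 1 * g 1 0 = 1 := by
    rw [← Matrix.det_fin_two]; exact hg
  have key : ε = (ε * g 1 1) * (ε * g 1 1) + d * (g 0 1 * g 0 1) := by
    linear_combination (-ε) * hdetg + d * (g 0 1)^2 * hεε' + (-(ε * g 1 1)) * h01 + (ε * g 0 1) * h11
  have htzd : toZMod d = 0 := by
    obtain ⟨k, hk⟩ := hd
    rw [hk, _root_.map_mul, map_natCast, ZMod.natCast_self, zero_mul]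
  apply hns
  have h2 := congrArg toZMod key
  rw [map_add, _root_.map_mul toZMod d (g 0 1 * g 0 1), htzd, zero_mul, add_zero,
    _root_.map_mul] at h2
  exact ⟨toZMod (ε * g 1 1), h2⟩

end SL2RamifiedAux

/-- For an odd prime `p` and squarefree `d ∈ ℤ_p` with `p ∣ d`, the conjugation action of
`SL₂(ℤ_p)` on the set `S` of trace-zero matrices of determinant `d` in `M₂(ℤ_p)` has
exactly two orbits, which are interchanged by conjugation by some element of `GL₂(ℤ_p)`;
in particular `GL₂(ℤ_p)` acts transitively on `S`. -/
theorem sl2_two_orbits_ramified (p : ℕ) [Fact p.Prime] (hp : p ≠ 2)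
    (d : ℤ_[p]) (hsq : Squarefree d) (hd : (p : ℤ_[p]) ∣ d) :
    ∃ x₀ x₁ : Matrix (Fin 2) (Fin 2) ℤ_[p],
      (x₀.trace = 0 ∧ x₀.det = d) ∧ (x₁.trace = 0 ∧ x₁.det = d) ∧
      ¬ (∃ g : Matrix (Fin 2) (Fin 2) ℤ_[p], g.det = 1 ∧ x₁ = g * x₀ * g⁻¹) ∧
      (∀ y : Matrix (Fin 2) (Fin 2) ℤ_[p], y.trace = 0 → y.det = d →
        (∃ g : Matrix (Fin 2) (Fin 2) ℤ_[p], g.det = 1 ∧ y = g * x₀ * g⁻¹) ∨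
        (∃ g : Matrix (Fin 2) (Fin 2) ℤ_[p], g.det = 1 ∧ y = g * x₁ * g⁻¹)) ∧
      (∃ h : Matrix (Fin 2) (Fin 2) ℤ_[p], IsUnit h.det ∧
        (∃ g : Matrix (Fin 2) (Fin 2) ℤ_[p], g.det = 1 ∧ x₁ = g * (h * x₀ * h⁻¹) * g⁻¹) ∧
        (∃ g : Matrix (Fin 2) (Fin 2) ℤ_[p], g.det = 1 ∧ x₀ = g * (h * x₁ * h⁻¹) * g⁻¹)) ∧
      (∀ x y : Matrix (Fin 2) (Fin 2) ℤ_[p], x.trace = 0 → x.det = d →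
        y.trace = 0 → y.det = d →
        ∃ h : Matrix (Fin 2) (Fin 2) ℤ_[p], IsUnit h.det ∧ y = h * x * h⁻¹) := by
  have hring : ringChar (ZMod p) ≠ 2 := by rw [ZMod.ringChar_zmod_n]; exact hp
  obtain ⟨n0, hn0⟩ := FiniteField.exists_nonsquare hring
  have hn00 : n0 ≠ 0 := by rintro rfl; exact hn0 ⟨0, by ring⟩
  set ε : ℤ_[p] := ((n0.val : ℕ) : ℤ_[p]) with hεdef
  have hεz : PadicInt.toZMod ε = n0 := by rw [hεdef, map_natCast, ZMod.natCast_val, ZMod.cast_id]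
  have hns : ¬ IsSquare (PadicInt.toZMod ε) := by rw [hεz]; exact hn0
  have hεu : IsUnit ε := (SL2RamifiedAux.unit_iff_tz_ne ε).mpr (by rw [hεz]; exact hn00)
  obtain ⟨ε', hεε'⟩ := hεu.exists_right_inv
  -- the two orbit representatives
  set X0 : Matrix (Fin 2) (Fin 2) ℤ_[p] := !![0,1;-d,0] with hX0
  set X1 : Matrix (Fin 2) (Fin 2) ℤ_[p] := !![0,ε;-(d*ε'),0] with hX1
  -- the interchanging GL₂ element
  set H : Matrix (Fin 2) (Fin 2) ℤ_[p] := !![ε,0;0,1] with hH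
  have hHdet : H.det = ε := by simp [hH, Matrix.det_fin_two_of]
  have hHu : IsUnit H.det := by rw [hHdet]; exact hεu
  have hswap : X1 = H * X0 * H⁻¹ := by
    refine SL2RamifiedAux.conj_of_comm hHu ?_
    rw [hX0, hX1, hH]
    ext i j
    fin_cases i <;> fin_cases j <;>
      simp [Matrix.mul_apply, Fin.sum_univ_two]
    all_goals first
      | ring1
      | linear_combination d * hεε'
      | linear_combination -(d * hεε')
  have hGswap : SL2RamifiedAux.GConj X0 X1 := ⟨H, hHu, hswap⟩
  refine ⟨X0, X1, ⟨?_, ?_⟩, ⟨?_, ?_⟩, ?_, ?_, ?_, ?_⟩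
  · simp [hX0, Matrix.trace_fin_two_of]
  · simp [hX0, Matrix.det_fin_two_of]
  · simp [hX1, Matrix.trace_fin_two_of]
  · rw [hX1, Matrix.det_fin_two_of]
    linear_combination d * hεε'
  · exact SL2RamifiedAux.not_conj d ε ε' hd hεε' hns
  · intro y hty hdy
    exact SL2RamifiedAux.classify hp d hsq hd ε ε' hεε' hns y hty hdy
  · -- the two orbits are interchanged by H
    refine ⟨H, hHu, ⟨1, by simp, by rw [Matrix.inv_eq_left_inv (by simp : (1:Matrix (Fin 2) (Fin 2) ℤ_[p]) * 1 = 1), one_mul, mul_one]; exact hswap⟩, ?_⟩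
    have hg2det : (!![ε',0;0,ε] : Matrix (Fin 2) (Fin 2) ℤ_[p]).det = 1 := by
      rw [Matrix.det_fin_two_of]
      linear_combination hεε'
    have hg2u : IsUnit (!![ε',0;0,ε] : Matrix (Fin 2) (Fin 2) ℤ_[p]).det := by
      rw [hg2det]; exact isUnit_one
    have hz : (!![0, ε*ε; -(d*(ε'*ε')), 0] : Matrix (Fin 2) (Fin 2) ℤ_[p]) = H * X1 * H⁻¹ := by
      refine SL2RamifiedAux.conj_of_comm hHu ?_
      rw [hX1, hH]
      ext i j
      fin_cases i <;> fin_cases j <;>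
        simp [Matrix.mul_apply, Fin.sum_univ_two]
      all_goals first
        | ring1
        | linear_combination d * ε' * hεε'
        | linear_combination -(d * ε' * hεε')
    refine ⟨!![ε',0;0,ε], hg2det, ?_⟩
    rw [← hz]
    refine SL2RamifiedAux.conj_of_comm hg2u ?_
    rw [hX0]
    ext i j
    fin_cases i <;> fin_cases j <;>
      simp [Matrix.mul_apply, Fin.sum_univ_two]
    all_goals first
      | ring1
      | linear_combination ε * hεε'
      | linear_combination -(ε * hεε')
      | linear_combination d * ε' * hεε'
      | linear_combination -(d * ε' * hεε')
  · -- GL₂ acts transitively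
    intro x y htx hdx hty hdy
    have hx := SL2RamifiedAux.classify hp d hsq hd ε ε' hεε' hns x htx hdx
    have hy := SL2RamifiedAux.classify hp d hsq hd ε ε' hεε' hns y hty hdy
    have key : SL2RamifiedAux.GConj x y := by
      rcases hx with hx | hx <;> rcases hy with hy | hy
      · exact (hx.gconj.symm).trans hy.gconj
      · exact (hx.gconj.symm).trans (hGswap.trans hy.gconj)
      · exact (hx.gconj.symm).trans (hGswap.symm.trans hy.gconj)
      · exact (hx.gconj.symm).trans hy.gconj
    exact key
end

section
/- Let T be a self-adjoint operator on the finite-dimensional inner product space L²(V) for a finite set V (e.g., the normalized adjacency operator of a d-regular graph), let Π be the orthogonal projection onto constant functions with TΠ = Π, and let ‖T‖₀ denote the operator norm of T on the orthogonal complement of constants. For subsets Q₁, Q₂ ⊆ V with densities μ₁ = |Q₁|/|V|, μ₂ = |Q₂|/|V|, and A_i the multiplication operator by the indicator of Q_i, the operator norm of A₁ T A₂ is at most √(μ₁μ₂) + ‖T‖₀. -/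
open Finset

/-- Minkowski inequality for finite sums of squares. -/
lemma sqrt_sum_add_sq_le {ι : Type*} (s : Finset ι) (a b : ι → ℝ) :
    Real.sqrt (∑ i ∈ s, (a i + b i) ^ 2) ≤
      Real.sqrt (∑ i ∈ s, a i ^ 2) + Real.sqrt (∑ i ∈ s, b i ^ 2) := by
  have hA : (0:ℝ) ≤ ∑ i ∈ s, a i ^ 2 := Finset.sum_nonneg fun _ _ => sq_nonneg _
  have hB : (0:ℝ) ≤ ∑ i ∈ s, b i ^ 2 := Finset.sum_nonneg fun _ _ => sq_nonneg _
  have hcs := Real.sum_mul_le_sqrt_mul_sqrt s a b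
  have hle : ∑ i ∈ s, (a i + b i) ^ 2 ≤
      (Real.sqrt (∑ i ∈ s, a i ^ 2) + Real.sqrt (∑ i ∈ s, b i ^ 2)) ^ 2 := by
    have hsq : ∑ i ∈ s, (a i + b i) ^ 2 =
        (∑ i ∈ s, a i ^ 2) + 2 * (∑ i ∈ s, a i * b i) + ∑ i ∈ s, b i ^ 2 := by
      rw [show (fun i => (a i + b i) ^ 2) = fun i => a i ^ 2 + 2 * (a i * b i) + b i ^ 2
        from funext fun i => by ring]
      rw [Finset.sum_add_distrib, Finset.sum_add_distrib, ← Finset.mul_sum]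
    have h1 : Real.sqrt (∑ i ∈ s, a i ^ 2) ^ 2 = ∑ i ∈ s, a i ^ 2 := Real.sq_sqrt hA
    have h2 : Real.sqrt (∑ i ∈ s, b i ^ 2) ^ 2 = ∑ i ∈ s, b i ^ 2 := Real.sq_sqrt hB
    nlinarith [hcs]
  calc Real.sqrt (∑ i ∈ s, (a i + b i) ^ 2)
      ≤ Real.sqrt ((Real.sqrt (∑ i ∈ s, a i ^ 2) + Real.sqrt (∑ i ∈ s, b i ^ 2)) ^ 2) :=
        Real.sqrt_le_sqrt hle
    _ = _ := Real.sqrt_sq (by positivity)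

/-- Operator norm bound for `A₁ T A₂`: if `T` is self-adjoint on `L²(V)`, fixes the
projection onto constants (`TΠ = Π`), and has norm at most `t₀` on the orthogonal
complement of the constants, then for subsets `Q₁, Q₂ ⊆ V` with densities `μᵢ = |Qᵢ|/|V|`
the operator `A₁ T A₂` (multiplication by indicators pre- and post-composed with `T`) has
operator norm at most `√(μ₁ μ₂) + t₀`. -/
theorem indicator_sandwich_norm_bound {V : Type*} [Fintype V] [Nonempty V]
    [DecidableEq V]
    (T : (V → ℝ) →ₗ[ℝ] (V → ℝ))
    (hsa : ∀ f g : V → ℝ, (∑ v, T f v * g v) = ∑ v, f v * T g v)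
    (hTproj : ∀ f : V → ℝ,
      T (fun _ => (∑ v, f v) / (Fintype.card V : ℝ)) =
        fun _ => (∑ v, f v) / (Fintype.card V : ℝ))
    (t₀ : ℝ) (ht₀ : 0 ≤ t₀)
    (hgap : ∀ f : V → ℝ, (∑ v, f v) = 0 →
      Real.sqrt (∑ v, T f v ^ 2) ≤ t₀ * Real.sqrt (∑ v, f v ^ 2))
    (Q₁ Q₂ : Finset V) (f : V → ℝ) :
    Real.sqrt (∑ v ∈ Q₁, T (fun w => if w ∈ Q₂ then f w else 0) v ^ 2) ≤
      (Real.sqrt ((Q₁.card : ℝ) / (Fintype.card V : ℝ) *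
          ((Q₂.card : ℝ) / (Fintype.card V : ℝ))) + t₀) *
        Real.sqrt (∑ v, f v ^ 2) := by
  set n : ℝ := (Fintype.card V : ℝ) with hn_def
  have hn : (0:ℝ) < n := by
    rw [hn_def]
    exact_mod_cast Fintype.card_pos
  set g : V → ℝ := fun w => if w ∈ Q₂ then f w else 0 with hg_def
  set m : ℝ := (∑ v, g v) / n with hm_def
  set h : V → ℝ := fun v => g v - m with hh_def
  set S : ℝ := ∑ v, f v ^ 2 with hS_def
  have hS0 : (0:ℝ) ≤ S := Finset.sum_nonneg fun _ _ => sq_nonneg _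
  have hsg : ∑ v, g v = n * m := by
    rw [hm_def]; field_simp
  have hsum_h : ∑ v, h v = 0 := by
    simp only [hh_def, Finset.sum_sub_distrib, Finset.sum_const, Finset.card_univ,
      nsmul_eq_mul, hsg, ← hn_def]
    ring
  -- T g = m + T h pointwise
  have hTconst : T (fun _ => m) = fun _ => m := hTproj g
  have hgden : g = fun v => h v + m := by
    funext v; simp [hh_def]
  have hTg : ∀ v, T g v = m + T h v := by
    intro v
    have : T g = T h + T (fun _ => m) := by
      rw [hgden]
      have : (fun v => h v + m) = h + (fun _ => m) := rfl
      rw [this, map_add]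
    rw [this, hTconst]
    simp [add_comm]
  -- sum of g over Q₂
  have hgsum : ∑ v, g v = ∑ v ∈ Q₂, f v := by
    simp [hg_def, Finset.sum_ite_mem]
  have hgsq : ∑ v, g v ^ 2 = ∑ v ∈ Q₂, f v ^ 2 := by
    rw [show (fun v => g v ^ 2) = fun v => if v ∈ Q₂ then f v ^ 2 else 0 by
      funext v; simp [hg_def, apply_ite (· ^ 2)]]
    simp [Finset.sum_ite_mem]
  have hgsqS : ∑ v, g v ^ 2 ≤ S := by
    rw [hgsq, hS_def]
    exact Finset.sum_le_sum_of_subset_of_nonneg (Finset.subset_univ _)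
      (fun _ _ _ => sq_nonneg _)
  -- bound on m²
  have hm2 : m ^ 2 ≤ (Q₂.card : ℝ) * S / n ^ 2 := by
    have hcs : (∑ v ∈ Q₂, f v) ^ 2 ≤ (Q₂.card : ℝ) * ∑ v ∈ Q₂, f v ^ 2 := by
      have := Finset.sum_mul_sq_le_sq_mul_sq Q₂ (fun _ => (1:ℝ)) f
      simpa using this
    have hsub : ∑ v ∈ Q₂, f v ^ 2 ≤ S :=
      Finset.sum_le_sum_of_subset_of_nonneg (Finset.subset_univ _)
        (fun _ _ _ => sq_nonneg _)
    have : m ^ 2 = (∑ v ∈ Q₂, f v) ^ 2 / n ^ 2 := by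
      rw [hm_def, hgsum, div_pow]
    rw [this]
    gcongr
    calc (∑ v ∈ Q₂, f v) ^ 2 ≤ (Q₂.card : ℝ) * ∑ v ∈ Q₂, f v ^ 2 := hcs
      _ ≤ (Q₂.card : ℝ) * S := mul_le_mul_of_nonneg_left hsub (Nat.cast_nonneg _)
  -- ∑ h² ≤ ∑ g² ≤ S
  have hh2 : ∑ v, h v ^ 2 ≤ S := by
    have heq : ∑ v, h v ^ 2 = (∑ v, g v ^ 2) - n * m ^ 2 := by
      rw [show (fun v => h v ^ 2) = fun v => g v ^ 2 - 2 * m * g v + m ^ 2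
        from funext fun v => by simp only [hh_def]; ring]
      rw [Finset.sum_add_distrib, Finset.sum_sub_distrib, ← Finset.mul_sum, hsg,
        Finset.sum_const, Finset.card_univ, nsmul_eq_mul, ← hn_def]
      ring
    have : n * m ^ 2 ≥ 0 := by positivity
    linarith [hgsqS]
  -- rewrite LHS
  have hLHS : ∑ v ∈ Q₁, T g v ^ 2 = ∑ v ∈ Q₁, ((fun _ => m) v + T h v) ^ 2 := by
    apply Finset.sum_congr rfl; intro v _; rw [hTg v]
  calc Real.sqrt (∑ v ∈ Q₁, T g v ^ 2)
      ≤ Real.sqrt (∑ v ∈ Q₁, ((fun _ => m) v) ^ 2) + Real.sqrt (∑ v ∈ Q₁, T h v ^ 2) := by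
        rw [hLHS]; exact sqrt_sum_add_sq_le Q₁ _ _
    _ ≤ Real.sqrt ((Q₁.card : ℝ) / n * ((Q₂.card : ℝ) / n)) * Real.sqrt S
        + t₀ * Real.sqrt S := by
        gcongr <;> [skip; skip]
        · -- constant term
          have h1 : ∑ v ∈ Q₁, ((fun _ => m) v) ^ 2 = (Q₁.card : ℝ) * m ^ 2 := by
            simp [nsmul_eq_mul]
          rw [h1, ← Real.sqrt_mul (x := (Q₁.card : ℝ) / n * ((Q₂.card : ℝ) / n)) (mul_nonneg (div_nonneg (Nat.cast_nonneg _) hn.le) (div_nonneg (Nat.cast_nonneg _) hn.le)) S]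
          apply Real.sqrt_le_sqrt
          calc (Q₁.card : ℝ) * m ^ 2 ≤ (Q₁.card : ℝ) * ((Q₂.card : ℝ) * S / n ^ 2) := by
                apply mul_le_mul_of_nonneg_left hm2 (Nat.cast_nonneg _)
            _ = (Q₁.card : ℝ) / n * ((Q₂.card : ℝ) / n) * S := by ring
        · -- spectral gap term
          calc Real.sqrt (∑ v ∈ Q₁, T h v ^ 2)
              ≤ Real.sqrt (∑ v, T h v ^ 2) := by
                apply Real.sqrt_le_sqrt
                exact Finset.sum_le_sum_of_subset_of_nonneg (Finset.subset_univ _)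
                  (fun _ _ _ => sq_nonneg _)
            _ ≤ t₀ * Real.sqrt (∑ v, h v ^ 2) := hgap h hsum_h
            _ ≤ t₀ * Real.sqrt S := by
                apply mul_le_mul_of_nonneg_left (Real.sqrt_le_sqrt hh2) ht₀
    _ = _ := by ring
end

section
/- Let G be a finite d-regular graph (d > 2) with normalized adjacency operator T, and let Q₁, ..., Q_ℓ ⊆ V with densities μ_i = |Q_i|/|V|. The probability that a uniform random walk on G (uniform random starting vertex, uniform random steps) is in Q_j at step j for all 1 ≤ j ≤ ℓ is at most ∏_{i=1}^{ℓ-1} (√(μ_i μ_{i+1}) + ‖T‖), where ‖T‖ is the norm of T restricted to the orthogonal complement of constants. -/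
open Finset

set_option linter.unusedSectionVars false

namespace KLN

variable {V : Type*} [Fintype V] [DecidableEq V]

noncomputable def nrm (f : V → ℝ) : ℝ := Real.sqrt (∑ v, f v ^ 2)

lemma nrm_nonneg (f : V → ℝ) : 0 ≤ nrm f := Real.sqrt_nonneg _

lemma abs_sum_le (A : Finset V) (f : V → ℝ) :
    |∑ v ∈ A, f v| ≤ Real.sqrt A.card * nrm f := by
  have key : ∀ g : V → ℝ, ∑ v ∈ A, g v ≤ Real.sqrt A.card * nrm g := by
    intro g
    have h := Real.sum_mul_le_sqrt_mul_sqrt A (fun _ => (1 : ℝ)) g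
    simp only [one_mul, one_pow, Finset.sum_const, nsmul_eq_mul, mul_one] at h
    refine h.trans (mul_le_mul_of_nonneg_left ?_ (Real.sqrt_nonneg _))
    exact Real.sqrt_le_sqrt (Finset.sum_le_sum_of_subset_of_nonneg (Finset.subset_univ A)
        (fun v _ _ => sq_nonneg _))
  rw [abs_le]
  constructor
  · have := key (fun v => -f v)
    simp only [Finset.sum_neg_distrib] at this
    have hnrm : nrm (fun v => -f v) = nrm f := by simp [nrm]
    rw [hnrm] at this
    linarith
  · exact key f

lemma nrm_add_le (f g : V → ℝ) : nrm (fun v => f v + g v) ≤ nrm f + nrm g := by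
  have hf : (0:ℝ) ≤ ∑ v, f v ^ 2 := Finset.sum_nonneg fun v _ => sq_nonneg _
  have hg : (0:ℝ) ≤ ∑ v, g v ^ 2 := Finset.sum_nonneg fun v _ => sq_nonneg _
  have hcs := Real.sum_mul_le_sqrt_mul_sqrt (univ : Finset V) f g
  have key : ∑ v, (f v + g v) ^ 2 ≤ (nrm f + nrm g) ^ 2 := by
    have expand : ∑ v, (f v + g v) ^ 2
        = ∑ v, f v ^ 2 + 2 * (∑ v, f v * g v) + ∑ v, g v ^ 2 := by
      rw [Finset.mul_sum, ← Finset.sum_add_distrib, ← Finset.sum_add_distrib]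
      refine Finset.sum_congr rfl fun v _ => by ring
    rw [expand, add_sq, nrm, nrm, Real.sq_sqrt hf, Real.sq_sqrt hg]
    nlinarith [hcs]
  calc nrm (fun v => f v + g v) = Real.sqrt (∑ v, (f v + g v) ^ 2) := rfl
    _ ≤ Real.sqrt ((nrm f + nrm g) ^ 2) := Real.sqrt_le_sqrt key
    _ = nrm f + nrm g := Real.sqrt_sq (add_nonneg (nrm_nonneg f) (nrm_nonneg g))

lemma nrm_mono {f g : V → ℝ} (h : ∀ v, |f v| ≤ |g v|) : nrm f ≤ nrm g := by
  apply Real.sqrt_le_sqrt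
  refine Finset.sum_le_sum fun v _ => ?_
  rw [← sq_abs (f v), ← sq_abs (g v)]
  exact pow_le_pow_left₀ (abs_nonneg _) (h v) 2

variable (G : SimpleGraph V) [DecidableRel G.Adj]

noncomputable def chain (Q : ℕ → Finset V) (d : ℕ) : ℕ → V → ℝ
  | 0 => fun _ => 1
  | (n+1) => fun v => if v ∈ Q (n+1) then (∑ w ∈ G.neighborFinset v, chain Q d n w) / d else 0

lemma chain_nonneg (Q : ℕ → Finset V) (d : ℕ) : ∀ ℓ v, 0 ≤ chain G Q d ℓ v := by
  intro ℓ
  induction ℓ with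
  | zero => intro v; simp [chain]
  | succ n ih =>
    intro v
    simp only [chain]
    split
    · exact div_nonneg (Finset.sum_nonneg fun w _ => ih w) (Nat.cast_nonneg d)
    · exact le_refl 0

lemma chain_support (Q : ℕ → Finset V) (d : ℕ) (n : ℕ) (v : V) (hv : v ∉ Q (n+1)) :
    chain G Q d (n+1) v = 0 := by simp [chain, hv]

/-- Pointwise counting identity. -/
lemma sum_walk (Q : ℕ → Finset V) (d : ℕ) (hd : 0 < d) :
    ∀ (ℓ : ℕ) (x : V),
      (∑ w : Fin (ℓ+1) → V,
        (∏ i : Fin ℓ, if G.Adj (w i.castSucc) (w i.succ) ∧ w i.succ ∈ Q (i.1+1)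
          then (1:ℝ) else 0)
          * (if w (Fin.last ℓ) = x then 1 else 0))
      = (d:ℝ)^ℓ * chain G Q d ℓ x := by
  intro ℓ
  induction ℓ with
  | zero =>
    intro x
    rw [Fintype.sum_equiv (Equiv.funUnique (Fin 1) V) _
      (fun v => if v = x then (1:ℝ) else 0) ?_]
    · simp [chain]
    · intro w
      have h1 : (Fin.last 0) = (default : Fin 1) := rfl
      rw [h1]
      simp [Equiv.funUnique]
  | succ m ih =>
    intro x
    rw [← Equiv.sum_comp (Fin.snocEquiv (fun _ : Fin (m+2) => V))]
    rw [Fintype.sum_prod_type]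
    simp only [Fin.snocEquiv_apply, Fin.prod_univ_castSucc, Fin.succ_castSucc,
      Fin.snoc_castSucc, Fin.succ_last, Fin.snoc_last, Fin.coe_castSucc, Fin.val_last]
    simp only [mul_ite, mul_one, mul_zero]
    rw [Finset.sum_comm]
    simp only [Finset.sum_ite_eq', Finset.mem_univ, if_true]
    by_cases hx : x ∈ Q (m+1)
    · simp only [hx, and_true]
      have expand : ∀ (w' : Fin (m+1) → V) (P : ℝ),
          (if G.Adj (w' (Fin.last m)) x then P else 0)
            = ∑ y ∈ G.neighborFinset x, if w' (Fin.last m) = y then P else 0 := by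
        intro w' P
        rw [Finset.sum_ite_eq]
        simp [SimpleGraph.mem_neighborFinset, SimpleGraph.adj_comm]
      simp only [expand]
      rw [Finset.sum_comm]
      have hy : ∀ y ∈ G.neighborFinset x,
          (∑ w' : Fin (m+1) → V, if w' (Fin.last m) = y then
            (∏ i : Fin m, if G.Adj (w' i.castSucc) (w' i.succ) ∧ w' i.succ ∈ Q (i.1+1)
              then (1:ℝ) else 0) else 0)
          = (d:ℝ)^m * chain G Q d m y := by
        intro y _
        rw [← ih y]
        refine Finset.sum_congr rfl fun w' _ => ?_
        split <;> simp
      rw [Finset.sum_congr rfl hy, ← Finset.mul_sum]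
      have hd' : (d:ℝ) ≠ 0 := Nat.cast_ne_zero.mpr hd.ne'
      simp only [chain]
      rw [if_pos hx]
      field_simp
      ring
    · simp [hx, chain]

/-- Total count identity. -/
lemma card_walk (Q : ℕ → Finset V) (d : ℕ) (hd : 0 < d) (ℓ : ℕ) :
    ((univ.filter fun w : Fin (ℓ+1) → V =>
        (∀ i : Fin ℓ, G.Adj (w i.castSucc) (w i.succ)) ∧
        (∀ j : Fin ℓ, w j.succ ∈ Q (j.1 + 1))).card : ℝ)
    = (d:ℝ)^ℓ * ∑ x, chain G Q d ℓ x := by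
  rw [Finset.card_filter]
  push_cast
  have h1 : ∀ w : Fin (ℓ+1) → V,
      (if ((∀ i : Fin ℓ, G.Adj (w i.castSucc) (w i.succ)) ∧
          (∀ j : Fin ℓ, w j.succ ∈ Q (j.1 + 1))) then (1:ℝ) else 0)
      = ∏ i : Fin ℓ, if G.Adj (w i.castSucc) (w i.succ) ∧ w i.succ ∈ Q (i.1+1)
          then (1:ℝ) else 0 := by
    intro w
    rw [Fintype.prod_boole]
    simp only [forall_and]
  rw [Finset.sum_congr rfl (fun w _ => h1 w)]
  have h2 : ∀ w : Fin (ℓ+1) → V,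
      (∏ i : Fin ℓ, if G.Adj (w i.castSucc) (w i.succ) ∧ w i.succ ∈ Q (i.1+1)
          then (1:ℝ) else 0)
      = ∑ x : V, (∏ i : Fin ℓ, if G.Adj (w i.castSucc) (w i.succ) ∧ w i.succ ∈ Q (i.1+1)
          then (1:ℝ) else 0) * (if w (Fin.last ℓ) = x then 1 else 0) := by
    intro w
    rw [← Finset.mul_sum]
    simp [Finset.sum_ite_eq]
  rw [Finset.sum_congr rfl (fun w _ => h2 w), Finset.sum_comm]
  rw [Finset.sum_congr rfl (fun x _ => sum_walk G Q d hd ℓ x), ← Finset.mul_sum]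

variable [Nonempty V]

/-- The key one-step operator norm bound. -/
lemma step_bound (d : ℕ) (hd : 0 < d) (hreg : G.IsRegularOfDegree d)
    (t₀ : ℝ) (ht₀ : 0 ≤ t₀)
    (hgap : ∀ f : V → ℝ, (∑ v, f v) = 0 →
      Real.sqrt (∑ v, ((∑ w ∈ G.neighborFinset v, f w) / (d : ℝ)) ^ 2) ≤
        t₀ * Real.sqrt (∑ v, f v ^ 2))
    (A B : Finset V) (f : V → ℝ) (hf : ∀ v, v ∉ A → f v = 0) :
    nrm (fun v => if v ∈ B then (∑ w ∈ G.neighborFinset v, f w) / d else 0)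
      ≤ (Real.sqrt (((A.card : ℝ) / (Fintype.card V : ℝ)) *
          ((B.card : ℝ) / (Fintype.card V : ℝ))) + t₀) * nrm f := by
  set n : ℝ := (Fintype.card V : ℝ) with hn
  have hnpos : (0:ℝ) < n := by
    rw [hn]; exact_mod_cast Fintype.card_pos
  have hd' : (d:ℝ) ≠ 0 := Nat.cast_ne_zero.mpr hd.ne'
  set c : ℝ := (∑ v, f v) / n with hc
  set f₀ : V → ℝ := fun v => f v - c with hf₀
  have hsumf : ∑ v, f v = c * n := by rw [hc]; field_simp
  have hsum0 : ∑ v, f₀ v = 0 := by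
    simp only [hf₀]
    rw [Finset.sum_sub_distrib, Finset.sum_const, hsumf, Finset.card_univ, nsmul_eq_mul]
    rw [← hn]; ring
  have hdecomp : (fun v => if v ∈ B then (∑ w ∈ G.neighborFinset v, f w) / d else 0)
      = (fun v => (if v ∈ B then c else 0)
          + (if v ∈ B then (∑ w ∈ G.neighborFinset v, f₀ w) / d else 0)) := by
    funext v
    by_cases hv : v ∈ B
    · simp only [if_pos hv]
      have hcard : (G.neighborFinset v).card = d := hreg v
      have hs : ∑ w ∈ G.neighborFinset v, f w = ∑ w ∈ G.neighborFinset v, f₀ w + d * c := by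
        simp only [hf₀]
        rw [Finset.sum_sub_distrib, Finset.sum_const, hcard, nsmul_eq_mul]
        ring
      rw [hs]
      field_simp
      ring
    · simp [hv]
  rw [hdecomp]
  have step1 := nrm_add_le (fun v => if v ∈ B then c else 0)
      (fun v => if v ∈ B then (∑ w ∈ G.neighborFinset v, f₀ w) / d else 0)
  refine step1.trans ?_
  -- bound the constant part
  have hB : nrm (fun v => if v ∈ B then c else 0) = Real.sqrt (B.card : ℝ) * |c| := by
    have h1 : ∀ v : V, (if v ∈ B then c else 0)^2 = if v ∈ B then c^2 else 0 :=
      fun v => by split <;> simp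
    unfold nrm
    rw [Finset.sum_congr rfl (fun v _ => h1 v)]
    rw [Finset.sum_ite_mem, Finset.univ_inter, Finset.sum_const, nsmul_eq_mul]
    rw [Real.sqrt_mul (Nat.cast_nonneg _), Real.sqrt_sq_eq_abs]
  have hcbound : |c| ≤ Real.sqrt (A.card : ℝ) * nrm f / n := by
    have hsA : ∑ v, f v = ∑ v ∈ A, f v :=
      (Finset.sum_subset (Finset.subset_univ A) (fun v _ hv => hf v hv)).symm
    rw [hc, hsA, abs_div, abs_of_pos hnpos]
    exact (div_le_div_iff_of_pos_right hnpos).mpr (abs_sum_le A f)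
  -- bound the fluctuating part
  have hT : nrm (fun v => if v ∈ B then (∑ w ∈ G.neighborFinset v, f₀ w) / d else 0)
      ≤ t₀ * nrm f := by
    have m1 : nrm (fun v => if v ∈ B then (∑ w ∈ G.neighborFinset v, f₀ w) / d else 0)
        ≤ nrm (fun v => (∑ w ∈ G.neighborFinset v, f₀ w) / d) := by
      refine nrm_mono fun v => ?_
      split
      · exact le_refl _
      · simp [abs_nonneg]
    have m2 : nrm (fun v => (∑ w ∈ G.neighborFinset v, f₀ w) / d) ≤ t₀ * nrm f₀ :=
      hgap f₀ hsum0
    have m3 : nrm f₀ ≤ nrm f := by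
      apply Real.sqrt_le_sqrt
      have hexp : ∑ v, f₀ v ^ 2 = ∑ v, f v ^ 2 - n * c ^ 2 := by
        have : ∀ v : V, f₀ v ^ 2 = f v ^ 2 - 2 * c * f v + c ^ 2 := fun v => by
          simp only [hf₀]; ring
        rw [Finset.sum_congr rfl (fun v _ => this v), Finset.sum_add_distrib,
          Finset.sum_sub_distrib, ← Finset.mul_sum, hsumf, Finset.sum_const,
          Finset.card_univ, nsmul_eq_mul, ← hn]
        ring
      rw [hexp]
      nlinarith [sq_nonneg c, hnpos]
    calc nrm (fun v => if v ∈ B then (∑ w ∈ G.neighborFinset v, f₀ w) / d else 0)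
        ≤ t₀ * nrm f₀ := m1.trans m2
      _ ≤ t₀ * nrm f := mul_le_mul_of_nonneg_left m3 ht₀
  have hsqrt : Real.sqrt (((A.card : ℝ) / n) * ((B.card : ℝ) / n))
      = Real.sqrt (A.card : ℝ) * Real.sqrt (B.card : ℝ) / n := by
    rw [div_mul_div_comm, Real.sqrt_div (mul_nonneg (Nat.cast_nonneg _) (Nat.cast_nonneg _)), Real.sqrt_mul (Nat.cast_nonneg _),
      Real.sqrt_mul_self hnpos.le]
  rw [hB, hsqrt]
  have final : Real.sqrt (B.card : ℝ) * |c|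
      ≤ Real.sqrt (A.card : ℝ) * Real.sqrt (B.card : ℝ) / n * nrm f := by
    calc Real.sqrt (B.card : ℝ) * |c|
        ≤ Real.sqrt (B.card : ℝ) * (Real.sqrt (A.card : ℝ) * nrm f / n) :=
          mul_le_mul_of_nonneg_left hcbound (Real.sqrt_nonneg _)
      _ = Real.sqrt (A.card : ℝ) * Real.sqrt (B.card : ℝ) / n * nrm f := by ring
  linarith [hT, final]

/-- The first chain function is the indicator of `Q 1`. -/
lemma chain_one (Q : ℕ → Finset V) (d : ℕ) (hd : 0 < d) (hreg : G.IsRegularOfDegree d) (v : V) :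
    chain G Q d 1 v = if v ∈ Q 1 then (1:ℝ) else 0 := by
  have hd' : (d:ℝ) ≠ 0 := Nat.cast_ne_zero.mpr hd.ne'
  simp only [chain]
  split
  · have hcard : (G.neighborFinset v).card = d := hreg v
    rw [Finset.sum_const, hcard, nsmul_eq_mul, mul_one, div_self hd']
  · rfl

lemma nrm_chain_one (Q : ℕ → Finset V) (d : ℕ) (hd : 0 < d) (hreg : G.IsRegularOfDegree d) :
    nrm (chain G Q d 1) = Real.sqrt ((Q 1).card : ℝ) := by
  unfold nrm
  have h1 : ∀ v : V, chain G Q d 1 v ^ 2 = if v ∈ Q 1 then (1:ℝ) else 0 := by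
    intro v
    rw [chain_one G Q d hd hreg v]
    split <;> simp
  rw [Finset.sum_congr rfl (fun v _ => h1 v)]
  rw [Finset.sum_ite_mem, Finset.univ_inter, Finset.sum_const, nsmul_eq_mul, mul_one]

lemma nrm_chain_le (Q : ℕ → Finset V) (d : ℕ) (hd : 0 < d) (hreg : G.IsRegularOfDegree d)
    (t₀ : ℝ) (ht₀ : 0 ≤ t₀)
    (hgap : ∀ f : V → ℝ, (∑ v, f v) = 0 →
      Real.sqrt (∑ v, ((∑ w ∈ G.neighborFinset v, f w) / (d : ℝ)) ^ 2) ≤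
        t₀ * Real.sqrt (∑ v, f v ^ 2)) :
    ∀ ℓ, 1 ≤ ℓ →
      nrm (chain G Q d ℓ) ≤
        (∏ i ∈ Finset.Ico 1 ℓ,
          (Real.sqrt (((Q i).card : ℝ) / (Fintype.card V : ℝ) *
            (((Q (i + 1)).card : ℝ) / (Fintype.card V : ℝ))) + t₀))
          * Real.sqrt (((Q 1).card : ℝ)) := by
  refine Nat.le_induction ?_ ?_
  · rw [nrm_chain_one G Q d hd hreg]
    simp
  · intro m hm ih
    have hchain : chain G Q d (m+1) = fun v =>
        if v ∈ Q (m+1) then (∑ w ∈ G.neighborFinset v, chain G Q d m w) / d else 0 := rfl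
    obtain ⟨k, rfl⟩ : ∃ k, m = k + 1 := ⟨m - 1, (Nat.succ_pred_eq_of_pos hm).symm⟩
    have hsupp : ∀ v, v ∉ Q (k+1) → chain G Q d (k+1) v = 0 :=
      fun v hv => chain_support G Q d k v hv
    have hstep := step_bound G d hd hreg t₀ ht₀ hgap (Q (k+1)) (Q (k+2))
      (chain G Q d (k+1)) hsupp
    rw [← hchain] at hstep
    have hfac : (0:ℝ) ≤ Real.sqrt (((Q (k+1)).card : ℝ) / (Fintype.card V : ℝ) *
        (((Q (k+2)).card : ℝ) / (Fintype.card V : ℝ))) + t₀ :=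
      add_nonneg (Real.sqrt_nonneg _) ht₀
    refine hstep.trans ?_
    rw [Finset.prod_Ico_succ_top hm]
    calc (Real.sqrt (((Q (k+1)).card : ℝ) / (Fintype.card V : ℝ) *
          (((Q (k+2)).card : ℝ) / (Fintype.card V : ℝ))) + t₀) * nrm (chain G Q d (k+1))
        ≤ (Real.sqrt (((Q (k+1)).card : ℝ) / (Fintype.card V : ℝ) *
          (((Q (k+2)).card : ℝ) / (Fintype.card V : ℝ))) + t₀) *
          ((∏ i ∈ Finset.Ico 1 (k+1),
            (Real.sqrt (((Q i).card : ℝ) / (Fintype.card V : ℝ) *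
              (((Q (i + 1)).card : ℝ) / (Fintype.card V : ℝ))) + t₀))
            * Real.sqrt (((Q 1).card : ℝ))) := mul_le_mul_of_nonneg_left ih hfac
      _ = _ := by ring

end KLN

/-- Kahn–Linial–Nisan type bound: for a finite `d`-regular graph `G` (`d > 2`) whose
normalized adjacency operator has norm at most `t₀` on the complement of the constants,
and subsets `Q₁, …, Q_ℓ` of densities `μᵢ`, the probability that a uniform random walk is
in `Q_j` at step `j` for all `1 ≤ j ≤ ℓ` is at most `∏_{i=1}^{ℓ-1} (√(μᵢ μᵢ₊₁) + t₀)`. -/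
theorem random_walk_subsets_bound {V : Type*} [Fintype V] [DecidableEq V] [Nonempty V]
    (G : SimpleGraph V) [DecidableRel G.Adj] (d : ℕ) (hd : 2 < d)
    (hreg : G.IsRegularOfDegree d)
    (t₀ : ℝ) (ht₀ : 0 ≤ t₀)
    (hgap : ∀ f : V → ℝ, (∑ v, f v) = 0 →
      Real.sqrt (∑ v, ((∑ w ∈ G.neighborFinset v, f w) / (d : ℝ)) ^ 2) ≤
        t₀ * Real.sqrt (∑ v, f v ^ 2))
    (ℓ : ℕ) (Q : ℕ → Finset V) :
    ((univ.filter fun w : Fin (ℓ + 1) → V =>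
        (∀ i : Fin ℓ, G.Adj (w i.castSucc) (w i.succ)) ∧
        (∀ j : Fin ℓ, w j.succ ∈ Q (j.1 + 1))).card : ℝ) /
        ((Fintype.card V : ℝ) * (d : ℝ) ^ ℓ) ≤
      ∏ i ∈ Finset.Ico 1 ℓ,
        (Real.sqrt (((Q i).card : ℝ) / (Fintype.card V : ℝ) *
            (((Q (i + 1)).card : ℝ) / (Fintype.card V : ℝ))) + t₀) := by
  have hd0 : 0 < d := by omega
  have hnpos : (0:ℝ) < (Fintype.card V : ℝ) := by exact_mod_cast Fintype.card_pos
  have hdpow : (0:ℝ) < (d:ℝ)^ℓ := by positivity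
  rw [KLN.card_walk G Q d hd0 ℓ]
  rw [show ((d:ℝ)^ℓ * ∑ x, KLN.chain G Q d ℓ x) / ((Fintype.card V : ℝ) * (d:ℝ)^ℓ)
      = (∑ x, KLN.chain G Q d ℓ x) / (Fintype.card V : ℝ) by
    field_simp]
  rcases ℓ with _ | m
  · simp [KLN.chain]
  · have hfac : ∀ i, (0:ℝ) ≤ Real.sqrt (((Q i).card : ℝ) / (Fintype.card V : ℝ) *
        (((Q (i + 1)).card : ℝ) / (Fintype.card V : ℝ))) + t₀ :=
      fun i => add_nonneg (Real.sqrt_nonneg _) ht₀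
    have hP : (0:ℝ) ≤ ∏ i ∈ Finset.Ico 1 (m+1),
        (Real.sqrt (((Q i).card : ℝ) / (Fintype.card V : ℝ) *
            (((Q (i + 1)).card : ℝ) / (Fintype.card V : ℝ))) + t₀) :=
      Finset.prod_nonneg fun i _ => hfac i
    have h1 : ∑ x, KLN.chain G Q d (m+1) x
        ≤ Real.sqrt (Fintype.card V : ℝ) * KLN.nrm (KLN.chain G Q d (m+1)) := by
      have := KLN.abs_sum_le (univ : Finset V) (KLN.chain G Q d (m+1))
      rw [Finset.card_univ] at this
      exact (le_abs_self _).trans this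
    have h2 := KLN.nrm_chain_le G Q d hd0 hreg t₀ ht₀ hgap (m+1)
      (Nat.succ_le_succ (Nat.zero_le m))
    have h3 : Real.sqrt (((Q 1).card : ℝ)) ≤ Real.sqrt (Fintype.card V : ℝ) :=
      Real.sqrt_le_sqrt (by exact_mod_cast Finset.card_le_univ (Q 1))
    rw [div_le_iff₀ hnpos]
    have hsqrtnn : (0:ℝ) ≤ Real.sqrt (Fintype.card V : ℝ) := Real.sqrt_nonneg _
    calc ∑ x, KLN.chain G Q d (m+1) x
        ≤ Real.sqrt (Fintype.card V : ℝ) * KLN.nrm (KLN.chain G Q d (m+1)) := h1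
      _ ≤ Real.sqrt (Fintype.card V : ℝ) *
          ((∏ i ∈ Finset.Ico 1 (m+1),
            (Real.sqrt (((Q i).card : ℝ) / (Fintype.card V : ℝ) *
              (((Q (i + 1)).card : ℝ) / (Fintype.card V : ℝ))) + t₀))
            * Real.sqrt (((Q 1).card : ℝ))) := mul_le_mul_of_nonneg_left h2 hsqrtnn
      _ ≤ Real.sqrt (Fintype.card V : ℝ) *
          ((∏ i ∈ Finset.Ico 1 (m+1),
            (Real.sqrt (((Q i).card : ℝ) / (Fintype.card V : ℝ) *
              (((Q (i + 1)).card : ℝ) / (Fintype.card V : ℝ))) + t₀))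
            * Real.sqrt (Fintype.card V : ℝ)) := by
          refine mul_le_mul_of_nonneg_left ?_ hsqrtnn
          exact mul_le_mul_of_nonneg_left h3 hP
      _ = (∏ i ∈ Finset.Ico 1 (m+1),
            (Real.sqrt (((Q i).card : ℝ) / (Fintype.card V : ℝ) *
              (((Q (i + 1)).card : ℝ) / (Fintype.card V : ℝ))) + t₀))
            * (Real.sqrt (Fintype.card V : ℝ) * Real.sqrt (Fintype.card V : ℝ)) := by ring
      _ = _ := by rw [Real.mul_self_sqrt hnpos.le]
end

section
/- Let G be a finite undirected d-regular (multi)graph, and let G' be its arc graph: vertices are directed edges (arcs) a of G, with a directed edge from arc a to arc b iff the head of a equals the tail of b and b is not the reversal of a. Let T' be the normalized adjacency operator of G' (degree d-1). On the orthogonal complement of the images of the maps B, E : L²(G) → L²(G') defined by Bf(a) = f(a⁻), Ef(a) = f(a⁺), the operator T' acts by F ↦ -(1/(d-1))·F̄, where F̄(a) = F(ā) and ā denotes reversal. In particular every eigenvalue of T' on this complement has absolute value at most 1/(d-1). -/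
open Finset

/-- Action of the arc-graph operator `T'` on the "new space": for a `d`-regular symmetric
(multi)graph with arc set `A` (with source `src`, target `tgt`, and edge-reversal `rev`),
if `F` is orthogonal to the images of both `B` and `E` (i.e. `∑_{src a = v} F a = 0` and
`∑_{tgt a = v} F a = 0` for all `v`), then `T' F = -(1/(d-1))·F̄` where `F̄(a) = F(ā)`;
in particular any eigenvalue of `T'` on this space has absolute value at most
`1/(d-1)`. -/
theorem arc_graph_new_space {V A : Type*} [Fintype V] [Fintype A] [DecidableEq V]
    [DecidableEq A]
    (src tgt : A → V) (rev : A → A)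
    (hrev : ∀ a, rev (rev a) = a)
    (hsrcrev : ∀ a, src (rev a) = tgt a)
    (htgtrev : ∀ a, tgt (rev a) = src a)
    (d : ℕ) (hd : 2 < d)
    (hreg : ∀ v : V, (univ.filter fun a => src a = v).card = d)
    (F : A → ℝ)
    (hB : ∀ v : V, (∑ a ∈ univ.filter fun a => src a = v, F a) = 0)
    (hE : ∀ v : V, (∑ a ∈ univ.filter fun a => tgt a = v, F a) = 0) :
    (∀ a : A,
      (∑ b ∈ univ.filter fun b => src b = tgt a ∧ b ≠ rev a, F b) / ((d : ℝ) - 1) =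
        -(1 / ((d : ℝ) - 1)) * F (rev a)) ∧
    (∀ lam : ℝ, F ≠ 0 →
      (∀ a : A,
        (∑ b ∈ univ.filter fun b => src b = tgt a ∧ b ≠ rev a, F b) / ((d : ℝ) - 1) =
          lam * F a) →
      |lam| ≤ 1 / ((d : ℝ) - 1)) := by
  have hd1 : (0:ℝ) < (d:ℝ) - 1 := by
    have : (2:ℝ) < d := by exact_mod_cast hd
    linarith
  have key : ∀ a : A,
      (∑ b ∈ univ.filter fun b => src b = tgt a ∧ b ≠ rev a, F b) = -F (rev a) := by
    intro a
    have hmem : rev a ∈ univ.filter fun b => src b = tgt a := by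
      simp [hsrcrev a]
    have hsplit :
        (∑ b ∈ univ.filter fun b => src b = tgt a, F b) =
          (∑ b ∈ univ.filter fun b => src b = tgt a ∧ b ≠ rev a, F b) + F (rev a) := by
      rw [← Finset.sum_erase_add _ _ hmem]
      congr 1
      apply Finset.sum_congr
      · ext b; simp [Finset.mem_erase, and_comm]
      · intros; rfl
    have := hB (tgt a)
    linarith [hsplit, this]
  constructor
  · intro a
    rw [key a]
    field_simp
  · intro lam hF heig
    obtain ⟨a, ha⟩ : ∃ a, F a ≠ 0 := by
      by_contra h
      push_neg at h
      exact hF (funext h)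
    have h1 : ∀ b, lam * F b = -(1 / ((d:ℝ) - 1)) * F (rev b) := by
      intro b
      rw [← heig b, key b]
      field_simp
    have h2 : lam * (lam * F a) = (1 / ((d:ℝ) - 1))^2 * F a := by
      have e2 := h1 (rev a)
      rw [hrev a] at e2
      rw [h1 a, show lam * (-(1 / ((d:ℝ) - 1)) * F (rev a)) =
        -(1 / ((d:ℝ) - 1)) * (lam * F (rev a)) from by ring, e2]
      ring
    have hlam2 : lam^2 = (1 / ((d:ℝ) - 1))^2 := by
      have : (lam^2 - (1 / ((d:ℝ) - 1))^2) * F a = 0 := by ring_nf; ring_nf at h2; linarith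
      rcases mul_eq_zero.mp this with h | h
      · linarith
      · exact absurd h ha
    have hc : (0:ℝ) < 1/((d:ℝ)-1) := by positivity
    nlinarith [sq_abs lam, abs_nonneg lam]
end

section
/- With B, E, T, T' as in the arc-graph setup for a d-regular symmetric graph G, one has the identities ⟨Bf₁, Ef₂⟩ = d·⟨Tf₁, f₂⟩ and T' ∘ B = E. Consequently, if w is an eigenfunction of T with eigenvalue λ, then the span of Bw and Ew is T'-invariant, and every eigenvalue of T' on this span is an eigenvalue of the 2×2 matrix [[0, 1], [-1/(d-1), dλ/(d-1)]]. -/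
open Finset Matrix

section Aux

variable {V A : Type*} [Fintype V] [Fintype A] [DecidableEq V] [DecidableEq A]

/-- Sum over arcs out of `tgt a` excluding the reversed arc, as a subtraction. -/
lemma arc_sum_ne_rev (src tgt : A → V) (rev : A → A)
    (hsrcrev : ∀ a, src (rev a) = tgt a) (g : A → ℝ) (a : A) :
    ∑ b ∈ univ.filter (fun b => src b = tgt a ∧ b ≠ rev a), g b =
      (∑ b ∈ univ.filter fun b => src b = tgt a, g b) - g (rev a) := by
  have hset : (univ.filter fun b => src b = tgt a ∧ b ≠ rev a) =
      (univ.filter fun b => src b = tgt a).erase (rev a) := by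
    ext b; simp [Finset.mem_erase, and_comm]
  rw [hset, Finset.sum_erase_eq_sub (by simp [hsrcrev])]

/-- Sum of a function of the source over the out-arcs of a vertex. -/
lemma arc_sum_src (src : A → V) {d : ℕ}
    (hreg : ∀ v : V, (univ.filter fun a => src a = v).card = d)
    (f : V → ℝ) (v : V) :
    ∑ b ∈ univ.filter (fun b => src b = v), f (src b) = (d : ℝ) * f v := by
  rw [Finset.sum_congr rfl (fun b hb => by
    rw [(Finset.mem_filter.mp hb).2]), Finset.sum_const, hreg, nsmul_eq_mul]

/-- The key characteristic-equation computation. -/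
lemma arc_char_eq {V A : Type*} [Fintype V] [Fintype A] [DecidableEq V] [DecidableEq A]
    (src tgt : A → V) (rev : A → A)
    (hrev : ∀ a, rev (rev a) = a)
    (hsrcrev : ∀ a, src (rev a) = tgt a)
    (htgtrev : ∀ a, tgt (rev a) = src a)
    (d : ℕ) (hd : 2 < d)
    (hreg : ∀ v : V, (univ.filter fun a => src a = v).card = d)
    (w : V → ℝ) (lam : ℝ)
    (hw : ∀ v : V, (∑ a ∈ univ.filter fun a => src a = v, w (tgt a)) / (d : ℝ) = lam * w v)
    (μ α β : ℝ)
    (hFne : (fun a => α * w (src a) + β * w (tgt a)) ≠ (0 : A → ℝ))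
    (hμ : ∀ a : A,
      (∑ b ∈ univ.filter fun b => src b = tgt a ∧ b ≠ rev a,
          (α * w (src b) + β * w (tgt b))) / ((d : ℝ) - 1) =
        μ * (α * w (src a) + β * w (tgt a))) :
    ((d : ℝ) - 1) * μ ^ 2 - (d : ℝ) * lam * μ + 1 = 0 := by
  have hd0 : (d : ℝ) ≠ 0 := by positivity
  have hd1 : (d : ℝ) - 1 ≠ 0 := by
    have : (2 : ℝ) < d := by exact_mod_cast hd
    nlinarith
  have hw' : ∀ v : V, ∑ a ∈ univ.filter fun a => src a = v, w (tgt a)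
      = (d : ℝ) * (lam * w v) := by
    intro v
    rw [← hw v]
    field_simp
  -- expand the eigen equation
  set C : ℝ := -β - ((d : ℝ) - 1) * μ * α with hC
  set E : ℝ := ((d : ℝ) - 1) * α + (d : ℝ) * lam * β - ((d : ℝ) - 1) * μ * β with hE
  have hCE : ∀ a : A, C * w (src a) + E * w (tgt a) = 0 := by
    intro a
    have h1 := hμ a
    rw [arc_sum_ne_rev src tgt rev hsrcrev _ a, Finset.sum_add_distrib,
      ← Finset.mul_sum, ← Finset.mul_sum, arc_sum_src src hreg w (tgt a),
      hw' (tgt a), hsrcrev, htgtrev] at h1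
    have h2 := (div_eq_iff hd1).mp h1
    rw [hC, hE]; ring_nf; ring_nf at h2; linarith
  have hCE' : ∀ a : A, E * w (src a) + C * w (tgt a) = 0 := by
    intro a
    have := hCE (rev a)
    rw [hsrcrev, htgtrev] at this
    linarith
  by_contra hP
  by_cases hC0 : C = 0 ∧ E = 0
  · -- coefficients match exactly; derive α = β = 0
    obtain ⟨h1, h2⟩ := hC0
    rw [hC] at h1; rw [hE] at h2
    have hβ : β = -(((d : ℝ) - 1) * μ * α) := by linarith
    have hα : α * (((d : ℝ) - 1) * μ ^ 2 - (d : ℝ) * lam * μ + 1) * ((d : ℝ) - 1) = 0 := by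
      rw [hβ] at h2; linarith [h2]; 
    have hα0 : α = 0 := by
      rcases mul_eq_zero.mp hα with h | h
      · rcases mul_eq_zero.mp h with h | h
        · exact h
        · exact absurd h hP
      · exact absurd h hd1
    have hβ0 : β = 0 := by rw [hβ, hα0]; ring
    exact hFne (by funext a; simp [hα0, hβ0])
  · -- C, E not both zero
    by_cases hsq : C ^ 2 = E ^ 2
    · -- dependent case: w(src a) = ± w(tgt a)
      have hCne : C ≠ 0 := by
        intro h; apply hC0
        constructor
        · exact h
        · have : E ^ 2 = 0 := by rw [← hsq, h]; ring
          exact pow_eq_zero_iff (n := 2) (by norm_num) |>.mp this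
      -- E = s * C with s = ±1
      obtain ⟨s, hs2, hsE⟩ : ∃ s : ℝ, s ^ 2 = 1 ∧ E = s * C := by
        have hfac : (E - C) * (E + C) = 0 := by nlinarith [hsq]
        rcases mul_eq_zero.mp hfac with h | h
        · exact ⟨1, by norm_num, by linarith⟩
        · exact ⟨-1, by norm_num, by linarith⟩
      set t : ℝ := -s with ht
      have ht2 : t ^ 2 = 1 := by rw [ht]; nlinarith
      have hwa : ∀ a : A, w (src a) = t * w (tgt a) := by
        intro a
        have h := hCE a
        rw [hsE] at h
        have : C * (w (src a) + s * w (tgt a)) = 0 := by ring_nf; ring_nf at h; linarith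
        have h2 := (mul_eq_zero.mp this).resolve_left hCne
        rw [ht]; linarith
      have hwa' : ∀ a : A, w (tgt a) = t * w (src a) := by
        intro a
        have := hwa (rev a); rwa [hsrcrev, htgtrev] at this
      -- lam * w v = t * w v for every v
      have hlamw : ∀ v : V, lam * w v = t * w v := by
        intro v
        have h1 := hw' v
        have h2 : ∑ a ∈ univ.filter fun a => src a = v, w (tgt a)
            = (d : ℝ) * (t * w v) := by
          rw [Finset.sum_congr rfl (fun a ha => by
            rw [hwa' a, (Finset.mem_filter.mp ha).2]), Finset.sum_const, hreg v,
            nsmul_eq_mul]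
        rw [h1] at h2
        have := mul_left_cancel₀ hd0 h2
        linarith
      -- find a point where F is nonzero
      obtain ⟨a₀, ha₀⟩ : ∃ a : A, α * w (src a) + β * w (tgt a) ≠ 0 := by
        by_contra h
        push_neg at h
        exact hFne (funext fun a => h a)
      have hwt0 : w (tgt a₀) ≠ 0 := by
        intro h
        apply ha₀
        rw [hwa a₀, h]; ring
      have hcoef : α * t + β ≠ 0 := by
        intro h
        apply ha₀
        rw [hwa a₀]
        calc α * (t * w (tgt a₀)) + β * w (tgt a₀) = (α * t + β) * w (tgt a₀) := by ring
        _ = 0 := by rw [h]; ring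
      have hlamt : lam = t := by
        have := hlamw (tgt a₀)
        have h2 : (lam - t) * w (tgt a₀) = 0 := by linarith
        rcases mul_eq_zero.mp h2 with h | h
        · linarith
        · exact absurd h hwt0
      -- use definitions of C, E together with E = -t C
      have hEt : E = -t * C := by rw [hsE, ht]; ring
      have hkey : ((d : ℝ) - 1) * ((α + t * β) - μ * t * (α + t * β)) = 0 := by
        rw [hC, hE, hlamt] at hEt
        linear_combination hEt - ((d : ℝ) - 1) * μ * β * ht2
      have h3 : (α + t * β) * (1 - μ * t) = 0 := by
        have := mul_eq_zero.mp hkey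
        rcases this with h | h
        · exact absurd h hd1
        · linarith
      have hαtβ : α + t * β ≠ 0 := by
        intro h
        apply hcoef
        linear_combination t * h - β * ht2
      have hμt : μ * t = 1 := by
        rcases mul_eq_zero.mp h3 with h | h
        · exact absurd h hαtβ
        · linarith
      apply hP
      have hμeq : μ = t := by linear_combination t * hμt - μ * ht2
      rw [hμeq, hlamt]
      nlinarith [ht2]
    · -- independent case: w vanishes on all endpoints, contradiction
      apply hFne
      funext a
      have h1 := hCE a
      have h2 := hCE' a
      have hx : (C ^ 2 - E ^ 2) * w (src a) = 0 := by linear_combination C * h1 - E * h2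
      have hy : (C ^ 2 - E ^ 2) * w (tgt a) = 0 := by linear_combination C * h2 - E * h1
      have hne : C ^ 2 - E ^ 2 ≠ 0 := sub_ne_zero.mpr hsq
      have hx0 : w (src a) = 0 := by
        rcases mul_eq_zero.mp hx with h | h
        · exact absurd h hne
        · exact h
      have hy0 : w (tgt a) = 0 := by
        rcases mul_eq_zero.mp hy with h | h
        · exact absurd h hne
        · exact h
      simp [hx0, hy0]

end Aux

/-- Old-space analysis of the arc graph: with `Bf(a) = f(a⁻)`, `Ef(a) = f(a⁺)`, `T` the
normalized adjacency operator of the `d`-regular graph and `T'` that of its arc graph,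
one has `⟨Bf₁, Ef₂⟩ = d·⟨Tf₁, f₂⟩` and `T' ∘ B = E`; consequently, for an eigenfunction
`w` of `T` with eigenvalue `λ`, the span of `Bw` and `Ew` is `T'`-invariant, and every
eigenvalue of `T'` on this span is an eigenvalue of `[[0, 1], [-1/(d-1), dλ/(d-1)]]`. -/
theorem arc_graph_old_space {V A : Type*} [Fintype V] [Fintype A] [DecidableEq V]
    [DecidableEq A]
    (src tgt : A → V) (rev : A → A)
    (hrev : ∀ a, rev (rev a) = a)
    (hsrcrev : ∀ a, src (rev a) = tgt a)
    (htgtrev : ∀ a, tgt (rev a) = src a)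
    (d : ℕ) (hd : 2 < d)
    (hreg : ∀ v : V, (univ.filter fun a => src a = v).card = d) :
    (∀ f₁ f₂ : V → ℝ,
      (∑ a, f₁ (src a) * f₂ (tgt a)) =
        (d : ℝ) * ∑ v, ((∑ a ∈ univ.filter fun a => src a = v, f₁ (tgt a)) / (d : ℝ)) *
          f₂ v) ∧
    (∀ f : V → ℝ, ∀ a : A,
      (∑ b ∈ univ.filter fun b => src b = tgt a ∧ b ≠ rev a, f (src b)) / ((d : ℝ) - 1) =
        f (tgt a)) ∧
    (∀ (w : V → ℝ) (lam : ℝ),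
      (∀ v : V, (∑ a ∈ univ.filter fun a => src a = v, w (tgt a)) / (d : ℝ) = lam * w v) →
      (∀ α β : ℝ, ∃ α' β' : ℝ, ∀ a : A,
        (∑ b ∈ univ.filter fun b => src b = tgt a ∧ b ≠ rev a,
            (α * w (src b) + β * w (tgt b))) / ((d : ℝ) - 1) =
          α' * w (src a) + β' * w (tgt a)) ∧
      (∀ (μ : ℝ) (F : A → ℝ),
        (∃ α β : ℝ, F = fun a => α * w (src a) + β * w (tgt a)) → F ≠ 0 →
        (∀ a : A,
          (∑ b ∈ univ.filter fun b => src b = tgt a ∧ b ≠ rev a, F b) / ((d : ℝ) - 1) =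
            μ * F a) →
        ∃ u : Fin 2 → ℝ, u ≠ 0 ∧
          (!![0, 1; -1 / ((d : ℝ) - 1), (d : ℝ) * lam / ((d : ℝ) - 1)]).mulVec u =
            μ • u)) := by
  have hd0 : (d : ℝ) ≠ 0 := by positivity
  have hd1 : (d : ℝ) - 1 ≠ 0 := by
    have : (2 : ℝ) < d := by exact_mod_cast hd
    nlinarith
  refine ⟨?_, ?_, ?_⟩
  · -- ⟨Bf₁, Ef₂⟩ = d ⟨Tf₁, f₂⟩
    intro f₁ f₂
    have hbij : Function.Bijective rev := (Function.involutive_iff_iter_2_eq_id.mpr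
      (by funext a; exact hrev a)).bijective
    have h1 : (∑ a, f₁ (src a) * f₂ (tgt a)) = ∑ a, f₁ (tgt a) * f₂ (src a) := by
      rw [← Function.Bijective.sum_comp hbij (fun a => f₁ (src a) * f₂ (tgt a))]
      exact Finset.sum_congr rfl fun a _ => by rw [hsrcrev, htgtrev]
    rw [h1]
    rw [Finset.mul_sum]
    have h2 : ∀ v : V, (d : ℝ) * ((∑ a ∈ univ.filter fun a => src a = v, f₁ (tgt a)) /
        (d : ℝ) * f₂ v) = ∑ a ∈ univ.filter fun a => src a = v, f₁ (tgt a) * f₂ (src a) := by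
      intro v
      have h3 : ∑ a ∈ univ.filter (fun a => src a = v), f₁ (tgt a) * f₂ (src a)
          = (∑ a ∈ univ.filter fun a => src a = v, f₁ (tgt a)) * f₂ v := by
        rw [Finset.sum_mul]
        exact Finset.sum_congr rfl fun a ha => by rw [(Finset.mem_filter.mp ha).2]
      rw [h3]
      field_simp
    rw [Finset.sum_congr rfl fun v _ => h2 v]
    exact (Finset.sum_fiberwise univ src fun a => f₁ (tgt a) * f₂ (src a)).symm
  · -- T' ∘ B = E
    intro f a
    rw [arc_sum_ne_rev src tgt rev hsrcrev _ a, arc_sum_src src hreg f (tgt a), hsrcrev]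
    field_simp
  · -- old-space analysis
    intro w lam hw
    have hw' : ∀ v : V, ∑ a ∈ univ.filter fun a => src a = v, w (tgt a)
        = (d : ℝ) * (lam * w v) := by
      intro v
      rw [← hw v]
      field_simp
    constructor
    · intro α β
      refine ⟨-β / ((d : ℝ) - 1), α + (d : ℝ) * lam * β / ((d : ℝ) - 1), fun a => ?_⟩
      rw [arc_sum_ne_rev src tgt rev hsrcrev _ a, Finset.sum_add_distrib,
        ← Finset.mul_sum, ← Finset.mul_sum, arc_sum_src src hreg w (tgt a),
        hw' (tgt a), hsrcrev, htgtrev]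
      field_simp
      ring
    · intro μ F hFspan hFne hμ
      obtain ⟨α, β, rfl⟩ := hFspan
      have hchar := arc_char_eq src tgt rev hrev hsrcrev htgtrev d hd hreg w lam hw
        μ α β hFne hμ
      refine ⟨![1, μ], ?_, ?_⟩
      · intro h
        have := congrFun h 0
        simp at this
      · funext i
        fin_cases i
        · simp [Matrix.mulVec, dotProduct]
        · simp [Matrix.mulVec, dotProduct]
          field_simp
          nlinarith [hchar]
end

section
/- Let G be a finite d-regular graph on n vertices with ‖T‖ ≤ 1 - α < 1 (T the normalized adjacency operator restricted to the complement of constants), let Q ⊆ V with μ = |Q|/n, and fix ε > 0. Then there exist constants c₁, c₂ > 0 depending only on d, α, μ, ε such that the proportion of walks of length ℓ (counted with the uniform random walk measure) that spend at least (μ + ε)·ℓ steps in Q is at most c₁·exp(-c₂·ℓ). -/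
open Finset
namespace ExpanderLD
set_option linter.unusedSectionVars false
set_option maxHeartbeats 1000000
variable {V : Type} [Fintype V] [DecidableEq V]

noncomputable def nrm (f : V → ℝ) : ℝ := Real.sqrt (∑ v, f v ^ 2)
noncomputable def mean (f : V → ℝ) : ℝ := (∑ v, f v) / (Fintype.card V : ℝ)
lemma nrm_nonneg (f : V → ℝ) : 0 ≤ nrm f := Real.sqrt_nonneg _


/-- L² norm of a function on a finite set. -/

lemma sq_nrm (f : V → ℝ) : nrm f ^ 2 = ∑ v, f v ^ 2 :=
  Real.sq_sqrt (sum_nonneg fun _ _ => sq_nonneg _)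

lemma nrm_le_nrm {f g : V → ℝ} (h : ∀ v, |f v| ≤ |g v|) : nrm f ≤ nrm g :=
  Real.sqrt_le_sqrt (sum_le_sum fun v _ => by
    have := h v; nlinarith [abs_nonneg (f v), sq_abs (f v), sq_abs (g v)])

lemma sum_mul_le_nrm (f g : V → ℝ) : ∑ v, f v * g v ≤ nrm f * nrm g := by
  have h := sum_mul_sq_le_sq_mul_sq univ f g
  have h2 : (nrm f * nrm g) ^ 2 = (∑ v, f v ^ 2) * ∑ v, g v ^ 2 := by
    rw [mul_pow, sq_nrm, sq_nrm]
  nlinarith [mul_nonneg (nrm_nonneg f) (nrm_nonneg g),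
    le_abs_self (∑ v, f v * g v), sq_abs (∑ v, f v * g v)]

lemma abs_sum_mul_le_nrm (f g : V → ℝ) : |∑ v, f v * g v| ≤ nrm f * nrm g := by
  rcases abs_cases (∑ v, f v * g v) with ⟨h, _⟩ | ⟨h, _⟩
  · rw [h]; exact sum_mul_le_nrm f g
  · rw [h]
    have := sum_mul_le_nrm (fun v => -f v) g
    simp only [neg_mul, sum_neg_distrib] at this
    have hn : nrm (fun v => -f v) = nrm f := by
      unfold nrm; congr 1; exact Finset.sum_congr rfl fun v _ => by ring
    rw [hn] at this; linarith

lemma nrm_add_le (f g : V → ℝ) : nrm (fun v => f v + g v) ≤ nrm f + nrm g := by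
  have key : (∑ v, (f v + g v) ^ 2) ≤ (nrm f + nrm g) ^ 2 := by
    have h1 : ∑ v, (f v + g v) ^ 2 = (∑ v, f v ^ 2) + 2 * (∑ v, f v * g v) + ∑ v, g v ^ 2 := by
      rw [mul_sum, ← sum_add_distrib, ← sum_add_distrib]
      exact Finset.sum_congr rfl fun v _ => by ring
    have h2 := sum_mul_le_nrm f g
    rw [h1]
    have := sq_nrm f; have := sq_nrm g
    nlinarith
  calc nrm (fun v => f v + g v) ≤ Real.sqrt ((nrm f + nrm g) ^ 2) := Real.sqrt_le_sqrt key
    _ = nrm f + nrm g := Real.sqrt_sq (by have := nrm_nonneg f; have := nrm_nonneg g; linarith)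

lemma nrm_smul (c : ℝ) (f : V → ℝ) : nrm (fun v => c * f v) = |c| * nrm f := by
  unfold nrm
  rw [← Real.sqrt_sq_eq_abs, ← Real.sqrt_mul (sq_nonneg c), mul_sum]
  congr 1; exact Finset.sum_congr rfl fun v _ => by ring




noncomputable def Pop (G : SimpleGraph V) [DecidableRel G.Adj] (d : ℕ) (f : V → ℝ) : V → ℝ :=
  fun v => (∑ w ∈ G.neighborFinset v, f w) / (d : ℝ)

noncomputable def wtf (Q : Finset V) (t : ℝ) : V → ℝ :=
  fun v => if v ∈ Q then Real.exp t else 1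


lemma nrm_const (c : ℝ) : nrm (fun _ : V => c) = |c| * Real.sqrt (Fintype.card V) := by
  unfold nrm
  rw [sum_const, card_univ, nsmul_eq_mul, Real.sqrt_mul (Nat.cast_nonneg _),
    Real.sqrt_sq_eq_abs, mul_comm]

lemma sum_Pop (G : SimpleGraph V) [DecidableRel G.Adj] {d : ℕ}
    (hreg : G.IsRegularOfDegree d) (hd : 0 < d) (f : V → ℝ) :
    ∑ v, Pop G d f v = ∑ v, f v := by
  unfold Pop
  rw [← sum_div]
  have key : ∑ v, ∑ w ∈ G.neighborFinset v, f w = ∑ v, (d : ℝ) * f v := by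
    have h1 : ∀ v : V, ∑ w ∈ G.neighborFinset v, f w
        = ∑ w, if w ∈ G.neighborFinset v then f w else 0 := by
      intro v
      rw [sum_ite_mem, univ_inter]
    simp_rw [h1]
    rw [Finset.sum_comm]
    refine Finset.sum_congr rfl fun w _ => ?_
    have h2 : ∀ v : V, (if w ∈ G.neighborFinset v then f w else 0)
        = if v ∈ G.neighborFinset w then f w else 0 := by
      intro v
      simp only [SimpleGraph.mem_neighborFinset]
      exact if_congr (G.adj_comm v w) rfl rfl
    simp_rw [h2]
    rw [sum_ite_mem, univ_inter, sum_const]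
    have hdeg : #(G.neighborFinset w) = d := hreg w
    rw [hdeg, nsmul_eq_mul]
  rw [key, ← mul_sum, mul_div_cancel_left₀ _ (Nat.cast_ne_zero.mpr hd.ne' : (d:ℝ) ≠ 0)]

lemma Pop_decomp (G : SimpleGraph V) [DecidableRel G.Adj] {d : ℕ}
    (hreg : G.IsRegularOfDegree d) (hd : 0 < d) (a : ℝ) (f : V → ℝ) (v : V) :
    Pop G d (fun w => a + f w) v = a + Pop G d f v := by
  unfold Pop
  have hdeg : #(G.neighborFinset v) = d := hreg v
  rw [sum_add_distrib, sum_const, hdeg, nsmul_eq_mul, add_div,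
    mul_div_cancel_left₀ _ (Nat.cast_ne_zero.mpr hd.ne' : (d:ℝ) ≠ 0)]





/-- The mean minimizes the L² distance to constants. -/
lemma nrm_sub_mean_le [Nonempty V] (f : V → ℝ) (c : ℝ) :
    nrm (fun v => f v - mean f) ≤ nrm (fun v => f v - c) := by
  have hn : (0:ℝ) < (Fintype.card V : ℝ) := by
    exact_mod_cast Fintype.card_pos
  apply Real.sqrt_le_sqrt
  have hmean : ∑ v, (f v - mean f) = 0 := by
    rw [sum_sub_distrib, sum_const, card_univ, nsmul_eq_mul]
    unfold mean; field_simp; ring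
  have expand : ∑ v, (f v - c) ^ 2
      = ∑ v, (f v - mean f) ^ 2 + 2 * (mean f - c) * ∑ v, (f v - mean f)
        + (Fintype.card V : ℝ) * (mean f - c) ^ 2 := by
    rw [mul_sum, ← sum_add_distrib]
    have : ∀ v : V, (f v - c)^2 = (f v - mean f)^2 + 2*(mean f - c)*(f v - mean f)
        + (mean f - c)^2 := fun v => by ring
    calc ∑ v, (f v - c) ^ 2 = ∑ v, ((f v - mean f)^2 + 2*(mean f - c)*(f v - mean f)
        + (mean f - c)^2) := Finset.sum_congr rfl fun v _ => this v
      _ = _ := by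
        rw [sum_add_distrib, sum_add_distrib, sum_const, card_univ, nsmul_eq_mul,
          ← mul_sum, mul_comm ((Fintype.card V : ℝ)) _]
  rw [expand, hmean]
  nlinarith [sq_nonneg (mean f - c)]

lemma mean_nonneg [Nonempty V] {f : V → ℝ} (hf : ∀ v, 0 ≤ f v) : 0 ≤ mean f := by
  have : (0:ℝ) ≤ ∑ v, f v := sum_nonneg fun v _ => hf v
  have hn : (0:ℝ) < (Fintype.card V : ℝ) := by exact_mod_cast Fintype.card_pos
  exact div_nonneg this hn.le


noncomputable def Dop (Q : Finset V) (t : ℝ) (f : V → ℝ) : V → ℝ :=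
  fun v => wtf Q t v * f v

noncomputable def Sfun (γ : ℝ) (f : V → ℝ) : ℝ :=
  Real.sqrt (Fintype.card V) * mean f + γ * nrm (fun v => f v - mean f)

lemma step [Nonempty V] (G : SimpleGraph V) [DecidableRel G.Adj] {d : ℕ} (hd : 0 < d)
    (hreg : G.IsRegularOfDegree d)
    {α : ℝ}
    (hspec : ∀ f : V → ℝ, (∑ v, f v) = 0 →
      Real.sqrt (∑ v, ((∑ w ∈ G.neighborFinset v, f w) / (d : ℝ)) ^ 2) ≤
        (1 - α) * Real.sqrt (∑ v, f v ^ 2))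
    (Q : Finset V) {t : ℝ} (ht : 0 ≤ t)
    {γ K : ℝ} (hγ : 0 < γ)
    (hK1 : 1 + ((Q.card : ℝ) / (Fintype.card V : ℝ)) * (Real.exp t - 1)
        + γ * (Real.exp t - 1) ≤ K)
    (hK2 : (1 - α) * (Real.exp t - 1) + γ * ((1 - α) * Real.exp t) ≤ γ * K)
    (f : V → ℝ) (hf : ∀ v, 0 ≤ f v) :
    Sfun γ (Dop Q t (Pop G d f)) ≤ K * Sfun γ f := by
  have hn : (0:ℝ) < (Fintype.card V : ℝ) := by exact_mod_cast Fintype.card_pos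
  set n : ℝ := (Fintype.card V : ℝ) with hndef
  have hsn : (0:ℝ) < Real.sqrt n := Real.sqrt_pos.mpr hn
  have hsn2 : Real.sqrt n * Real.sqrt n = n := Real.mul_self_sqrt hn.le
  set a : ℝ := mean f with hadef
  have ha0 : 0 ≤ a := mean_nonneg hf
  set μ' : ℝ := (Q.card : ℝ) / n with hmudef
  have hμ0 : 0 ≤ μ' := div_nonneg (Nat.cast_nonneg _) hn.le
  have hμ1 : μ' ≤ 1 := by
    rw [hmudef, div_le_one hn, hndef]
    exact_mod_cast Finset.card_le_univ Q
  set τ : ℝ := Real.exp t - 1 with hτdef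
  have hτ0 : 0 ≤ τ := by
    have := Real.one_le_exp ht; linarith
  have het1 : (1:ℝ) ≤ Real.exp t := Real.one_le_exp ht
  set fp : V → ℝ := fun v => f v - a with hfpdef
  have hfp0 : ∑ v, fp v = 0 := by
    rw [hfpdef]
    rw [sum_sub_distrib, sum_const, card_univ, nsmul_eq_mul]
    rw [hadef]; unfold mean; field_simp; ring
  have hPdec : ∀ v, Pop G d f v = a + Pop G d fp v := by
    intro v
    have : f = fun w => a + fp w := by funext w; rw [hfpdef]; ring
    rw [this]
    exact Pop_decomp G hreg hd a fp v
  have hPn : nrm (Pop G d fp) ≤ (1 - α) * nrm fp := by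
    simpa [nrm, Pop] using hspec fp hfp0
  have hPn0 : 0 ≤ nrm fp := nrm_nonneg _
  -- the weight function bounds
  have hwt1 : ∀ v, |wtf Q t v - 1| ≤ τ := by
    intro v
    unfold wtf
    split_ifs with h
    · rw [abs_of_nonneg (by linarith)]
    · simpa using hτ0
  have hwtle : ∀ v, |wtf Q t v| ≤ Real.exp t := by
    intro v
    unfold wtf
    split_ifs with h
    · rw [abs_of_pos (Real.exp_pos t)]
    · rw [abs_one]; exact het1
  -- sum of weights
  have hsumwt : ∑ v, wtf Q t v = n + τ * Q.card := by
    have : ∀ v : V, wtf Q t v = 1 + (if v ∈ Q then τ else 0) := by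
      intro v; unfold wtf; split_ifs <;> simp [hτdef]
    simp_rw [this]
    rw [sum_add_distrib, sum_const, card_univ, nsmul_eq_mul, mul_one, sum_ite_mem,
      univ_inter, sum_const, nsmul_eq_mul, mul_comm]
  set g : V → ℝ := Dop Q t (Pop G d f) with hgdef
  -- Part 0 : Σ g decomposition
  have hgv : ∀ v, g v = wtf Q t v * a + wtf Q t v * Pop G d fp v := by
    intro v
    rw [hgdef]; unfold Dop
    rw [hPdec v]; ring
  have hPfpsum : ∑ v, Pop G d fp v = 0 := by rw [sum_Pop G hreg hd fp, hfp0]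
  have hcross : |∑ v, (wtf Q t v - 1) * Pop G d fp v| ≤ (τ * Real.sqrt n) * ((1 - α) * nrm fp) := by
    have h1 := abs_sum_mul_le_nrm (fun v => wtf Q t v - 1) (Pop G d fp)
    have h2 : nrm (fun v => wtf Q t v - 1) ≤ τ * Real.sqrt n := by
      have := nrm_le_nrm (f := fun v => wtf Q t v - 1) (g := fun _ => τ)
        (fun v => by simpa [abs_of_nonneg hτ0] using hwt1 v)
      calc nrm (fun v => wtf Q t v - 1) ≤ nrm (fun _ : V => τ) := this
        _ = τ * Real.sqrt n := by rw [nrm_const, abs_of_nonneg hτ0]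
    calc |∑ v, (wtf Q t v - 1) * Pop G d fp v|
        ≤ nrm (fun v => wtf Q t v - 1) * nrm (Pop G d fp) := h1
      _ ≤ (τ * Real.sqrt n) * ((1 - α) * nrm fp) := by
          apply mul_le_mul h2 hPn (nrm_nonneg _)
          positivity
  have hsumg : ∑ v, g v ≤ a * (n + τ * Q.card) + τ * Real.sqrt n * ((1 - α) * nrm fp) := by
    have e1 : ∑ v, g v = a * (∑ v, wtf Q t v) + ∑ v, wtf Q t v * Pop G d fp v := by
      simp_rw [hgv]
      rw [sum_add_distrib, mul_sum]
      congr 1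
      exact Finset.sum_congr rfl fun v _ => mul_comm _ _
    have e2 : ∑ v, wtf Q t v * Pop G d fp v
        = ∑ v, Pop G d fp v + ∑ v, (wtf Q t v - 1) * Pop G d fp v := by
      rw [← sum_add_distrib]
      exact Finset.sum_congr rfl fun v _ => by ring
    rw [e1, e2, hsumwt, hPfpsum]
    have := (abs_le.mp hcross).2
    nlinarith
  -- Part 1 : the mean bound
  have part1 : Real.sqrt n * mean g
      ≤ (1 + μ' * τ) * (Real.sqrt n * a) + τ * ((1 - α) * nrm fp) := by
    have hmg : Real.sqrt n * mean g = (∑ v, g v) / Real.sqrt n := by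
      rw [eq_div_iff hsn.ne', mul_comm (Real.sqrt n) (mean g), mul_assoc, hsn2]
      unfold mean
      rw [← hndef, div_mul_cancel₀ _ hn.ne']
    rw [hmg, div_le_iff₀ hsn]
    have hQn : μ' * n = (Q.card : ℝ) := by
      rw [hmudef]; field_simp
    have expand : ((1 + μ' * τ) * (Real.sqrt n * a) + τ * ((1 - α) * nrm fp)) * Real.sqrt n
        = a * (n + τ * ((Q.card : ℝ))) + τ * Real.sqrt n * ((1 - α) * nrm fp) := by
      calc ((1 + μ' * τ) * (Real.sqrt n * a) + τ * ((1 - α) * nrm fp)) * Real.sqrt n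
          = (1 + μ' * τ) * a * (Real.sqrt n * Real.sqrt n)
            + τ * Real.sqrt n * ((1 - α) * nrm fp) := by ring
        _ = _ := by rw [hsn2, ← hQn]; ring
    rw [expand]
    exact hsumg
  -- Part 2 : the deviation bound
  have part2 : nrm (fun v => g v - mean g)
      ≤ τ * (Real.sqrt n * a) + Real.exp t * ((1 - α) * nrm fp) := by
    have h0 : nrm (fun v => g v - mean g) ≤ nrm (fun v => g v - (1 + μ' * τ) * a) :=
      nrm_sub_mean_le g ((1 + μ' * τ) * a)
    have hdecomp : (fun v => g v - (1 + μ' * τ) * a)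
        = fun v => (wtf Q t v - (1 + μ' * τ)) * a + wtf Q t v * Pop G d fp v := by
      funext v; rw [hgv v]; ring
    have h1 : nrm (fun v => g v - (1 + μ' * τ) * a)
        ≤ nrm (fun v => (wtf Q t v - (1 + μ' * τ)) * a)
          + nrm (fun v => wtf Q t v * Pop G d fp v) := by
      rw [hdecomp]
      exact nrm_add_le _ _
    have h2 : nrm (fun v => (wtf Q t v - (1 + μ' * τ)) * a) ≤ τ * (Real.sqrt n * a) := by
      have hpw : ∀ v, |(wtf Q t v - (1 + μ' * τ)) * a| ≤ |τ * a| := by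
        intro v
        rw [abs_mul, abs_mul, abs_of_nonneg ha0]
        apply mul_le_mul_of_nonneg_right _ ha0
        unfold wtf
        rw [abs_of_nonneg hτ0]
        split_ifs with h
        · rw [hτdef, abs_of_nonneg (by nlinarith)]
          nlinarith
        · rw [abs_of_nonpos (by nlinarith)]
          nlinarith
      calc nrm (fun v => (wtf Q t v - (1 + μ' * τ)) * a) ≤ nrm (fun _ : V => τ * a) :=
            nrm_le_nrm hpw
        _ = τ * (Real.sqrt n * a) := by
            rw [nrm_const, abs_of_nonneg (mul_nonneg hτ0 ha0)]; ring
    have h3 : nrm (fun v => wtf Q t v * Pop G d fp v) ≤ Real.exp t * ((1 - α) * nrm fp) := by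
      have hpw : ∀ v, |wtf Q t v * Pop G d fp v| ≤ |Real.exp t * Pop G d fp v| := by
        intro v
        rw [abs_mul, abs_mul]
        exact mul_le_mul_of_nonneg_right (by simpa [abs_of_pos (Real.exp_pos t)] using hwtle v)
          (abs_nonneg _)
      calc nrm (fun v => wtf Q t v * Pop G d fp v)
          ≤ nrm (fun v => Real.exp t * Pop G d fp v) := nrm_le_nrm hpw
        _ = Real.exp t * nrm (Pop G d fp) := by
            rw [nrm_smul, abs_of_pos (Real.exp_pos t)]
        _ ≤ Real.exp t * ((1 - α) * nrm fp) :=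
            mul_le_mul_of_nonneg_left hPn (Real.exp_pos t).le
    linarith
  -- combine
  have hSf : Sfun γ f = Real.sqrt n * a + γ * nrm fp := by
    unfold Sfun
    rw [← hndef, ← hadef, ← hfpdef]
  have hSg : Sfun γ g = Real.sqrt n * mean g + γ * nrm (fun v => g v - mean g) := by
    unfold Sfun
    rw [← hndef]
  rw [hSf, hSg]
  have hna : 0 ≤ Real.sqrt n * a := mul_nonneg hsn.le ha0
  have hdev : 0 ≤ nrm (fun v => g v - mean g) := nrm_nonneg _
  nlinarith [mul_le_mul_of_nonneg_left part2 hγ.le,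
    mul_le_mul_of_nonneg_right hK1 hna, mul_le_mul_of_nonneg_right hK2 hPn0]

noncomputable def NF (G : SimpleGraph V) [DecidableRel G.Adj] (d : ℕ) (Q : Finset V)
    (t : ℝ) : ℕ → V → ℝ
  | 0 => Dop Q t (Pop G d (fun _ => 1))
  | (m+1) => Dop Q t (Pop G d (NF G d Q t m))

lemma wtf_pos (Q : Finset V) {t : ℝ} (ht : 0 ≤ t) (v : V) : 0 < wtf Q t v := by
  unfold wtf; split_ifs
  · exact Real.exp_pos t
  · exact one_pos

lemma NF_nonneg (G : SimpleGraph V) [DecidableRel G.Adj] (d : ℕ) (Q : Finset V)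
    {t : ℝ} (ht : 0 ≤ t) : ∀ m v, 0 ≤ NF G d Q t m v := by
  have hP : ∀ (f : V → ℝ), (∀ v, 0 ≤ f v) → ∀ v, 0 ≤ Dop Q t (Pop G d f) v := by
    intro f hf v
    unfold Dop Pop
    apply mul_nonneg (wtf_pos Q ht v).le
    apply div_nonneg (sum_nonneg fun w _ => hf w) (Nat.cast_nonneg d)
  intro m
  induction m with
  | zero => exact hP _ (fun _ => zero_le_one)
  | succ m ih => exact hP _ ih

lemma NF_zero (G : SimpleGraph V) [DecidableRel G.Adj] {d : ℕ} (hd : 0 < d)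
    (hreg : G.IsRegularOfDegree d) (Q : Finset V) (t : ℝ) (v : V) :
    NF G d Q t 0 v = wtf Q t v := by
  show Dop Q t (Pop G d (fun _ => 1)) v = wtf Q t v
  unfold Dop Pop
  rw [sum_const]
  have hdeg : #(G.neighborFinset v) = d := hreg v
  rw [hdeg, nsmul_eq_mul, mul_one,
    div_self (Nat.cast_ne_zero.mpr hd.ne' : (d:ℝ) ≠ 0), mul_one]

lemma NF_succ (G : SimpleGraph V) [DecidableRel G.Adj] (d : ℕ) (Q : Finset V) (t : ℝ)
    (m : ℕ) (v : V) :
    NF G d Q t (m+1) v = wtf Q t v * ((∑ x ∈ G.neighborFinset v, NF G d Q t m x) / d) := rfl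

lemma Sfun_one [Nonempty V] (γ : ℝ) :
    Sfun γ (fun _ : V => (1:ℝ)) = Real.sqrt (Fintype.card V) := by
  unfold Sfun
  have hn : (0:ℝ) < (Fintype.card V : ℝ) := by exact_mod_cast Fintype.card_pos
  have hm : mean (fun _ : V => (1:ℝ)) = 1 := by
    unfold mean; rw [sum_const, card_univ, nsmul_eq_mul, mul_one, div_self hn.ne']
  rw [hm]
  have : nrm (fun v : V => (1:ℝ) - 1) = 0 := by
    unfold nrm; simp
  rw [this]; ring

lemma NF_S_bound [Nonempty V] (G : SimpleGraph V) [DecidableRel G.Adj] {d : ℕ} (hd : 0 < d)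
    (hreg : G.IsRegularOfDegree d)
    {α : ℝ}
    (hspec : ∀ f : V → ℝ, (∑ v, f v) = 0 →
      Real.sqrt (∑ v, ((∑ w ∈ G.neighborFinset v, f w) / (d : ℝ)) ^ 2) ≤
        (1 - α) * Real.sqrt (∑ v, f v ^ 2))
    (Q : Finset V) {t : ℝ} (ht : 0 ≤ t)
    {γ K : ℝ} (hγ : 0 < γ) (hK0 : 0 ≤ K)
    (hK1 : 1 + ((Q.card : ℝ) / (Fintype.card V : ℝ)) * (Real.exp t - 1)
        + γ * (Real.exp t - 1) ≤ K)
    (hK2 : (1 - α) * (Real.exp t - 1) + γ * ((1 - α) * Real.exp t) ≤ γ * K) :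
    ∀ m, Sfun γ (NF G d Q t m) ≤ K ^ (m+1) * Real.sqrt (Fintype.card V) := by
  intro m
  induction m with
  | zero =>
    have h := step G hd hreg hspec Q ht hγ hK1 hK2 (fun _ => 1) (fun _ => zero_le_one)
    rw [Sfun_one] at h
    simpa [NF] using h
  | succ m ih =>
    have h := step G hd hreg hspec Q ht hγ hK1 hK2 (NF G d Q t m)
      (NF_nonneg G d Q ht m)
    calc Sfun γ (NF G d Q t (m+1)) ≤ K * Sfun γ (NF G d Q t m) := h
      _ ≤ K * (K ^ (m+1) * Real.sqrt (Fintype.card V)) :=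
          mul_le_mul_of_nonneg_left ih hK0
      _ = K ^ (m+2) * Real.sqrt (Fintype.card V) := by ring

lemma mean_NF_le [Nonempty V] (G : SimpleGraph V) [DecidableRel G.Adj] {d : ℕ} (hd : 0 < d)
    (hreg : G.IsRegularOfDegree d)
    {α : ℝ}
    (hspec : ∀ f : V → ℝ, (∑ v, f v) = 0 →
      Real.sqrt (∑ v, ((∑ w ∈ G.neighborFinset v, f w) / (d : ℝ)) ^ 2) ≤
        (1 - α) * Real.sqrt (∑ v, f v ^ 2))
    (Q : Finset V) {t : ℝ} (ht : 0 ≤ t)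
    {γ K : ℝ} (hγ : 0 < γ) (hK0 : 0 ≤ K)
    (hK1 : 1 + ((Q.card : ℝ) / (Fintype.card V : ℝ)) * (Real.exp t - 1)
        + γ * (Real.exp t - 1) ≤ K)
    (hK2 : (1 - α) * (Real.exp t - 1) + γ * ((1 - α) * Real.exp t) ≤ γ * K)
    (m : ℕ) : mean (NF G d Q t m) ≤ K ^ (m+1) := by
  have hn : (0:ℝ) < (Fintype.card V : ℝ) := by exact_mod_cast Fintype.card_pos
  have hsn : (0:ℝ) < Real.sqrt (Fintype.card V) := Real.sqrt_pos.mpr hn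
  have hS := NF_S_bound G hd hreg hspec Q ht hγ hK0 hK1 hK2 m
  have hdev : 0 ≤ γ * nrm (fun v => NF G d Q t m v - mean (NF G d Q t m)) :=
    mul_nonneg hγ.le (nrm_nonneg _)
  unfold Sfun at hS
  nlinarith [hS]

lemma cons_walk_iff (G : SimpleGraph V) (m : ℕ) (v0 : V) (rest : Fin (m+1) → V) :
    (∀ i : Fin (m+1), G.Adj ((Fin.cons v0 rest : Fin (m+2) → V) i.castSucc)
      ((Fin.cons v0 rest : Fin (m+2) → V) i.succ))
    ↔ G.Adj v0 (rest 0) ∧ ∀ i : Fin m, G.Adj (rest i.castSucc) (rest i.succ) := by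
  constructor
  · intro h
    refine ⟨?_, fun j => ?_⟩
    · have := h 0
      simpa [Fin.castSucc_zero, Fin.cons_zero, Fin.cons_succ] using this
    · have := h j.succ
      rw [← Fin.succ_castSucc] at this
      simpa [Fin.cons_succ] using this
  · rintro ⟨h0, h⟩ i
    induction i using Fin.cases with
    | zero => simpa [Fin.castSucc_zero, Fin.cons_zero, Fin.cons_succ] using h0
    | succ j =>
      have := h j
      rw [← Fin.succ_castSucc]
      simpa [Fin.cons_succ] using this

lemma group_adj (G : SimpleGraph V) [DecidableRel G.Adj] (m : ℕ)
    (F : (Fin (m+1) → V) → ℝ) (v : V) :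
    ∑ rest : Fin (m+1) → V, (if G.Adj v (rest 0) then F rest else 0)
    = ∑ x ∈ G.neighborFinset v, ∑ rest : Fin (m+1) → V, (if rest 0 = x then F rest else 0) := by
  rw [Finset.sum_comm]
  refine Finset.sum_congr rfl fun rest _ => ?_
  rw [Finset.sum_ite_eq (G.neighborFinset v) (rest 0) (fun _ => F rest)]
  exact if_congr (SimpleGraph.mem_neighborFinset G v (rest 0)).symm rfl rfl

lemma claimA (G : SimpleGraph V) [DecidableRel G.Adj] {d : ℕ} (hd : 0 < d)
    (hreg : G.IsRegularOfDegree d) (Q : Finset V) (t : ℝ) :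
    ∀ (m : ℕ) (v : V),
      (∑ u : Fin (m+1) → V,
        if (∀ i : Fin m, G.Adj (u i.castSucc) (u i.succ)) ∧ u 0 = v
          then ∏ j, wtf Q t (u j) else 0)
      = (d:ℝ)^m * NF G d Q t m v := by
  intro m
  induction m with
  | zero =>
    intro v
    rw [pow_zero, one_mul, NF_zero G hd hreg]
    rw [Fintype.sum_equiv (Equiv.funUnique (Fin 1) V)
      (fun u : Fin 1 → V => if (∀ i : Fin 0, G.Adj (u i.castSucc) (u i.succ)) ∧ u 0 = v
        then ∏ j, wtf Q t (u j) else 0)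
      (fun x : V => if x = v then wtf Q t x else 0)
      (fun u => by simp [Fin.prod_univ_one, Equiv.funUnique])]
    rw [Finset.sum_ite_eq' univ v (fun x => wtf Q t x)]
    simp
  | succ m ih =>
    intro v
    rw [← Equiv.sum_comp (Fin.consEquiv (fun _ : Fin (m+2) => V))
      (fun u : Fin (m+2) → V => if (∀ i : Fin (m+1), G.Adj (u i.castSucc) (u i.succ)) ∧ u 0 = v
        then ∏ j, wtf Q t (u j) else 0)]
    rw [Fintype.sum_prod_type]
    have key : ∀ (v0 : V) (rest : Fin (m+1) → V),
        (if (∀ i : Fin (m+1),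
              G.Adj ((Fin.consEquiv (fun _ : Fin (m+2) => V)) (v0, rest) i.castSucc)
                ((Fin.consEquiv (fun _ : Fin (m+2) => V)) (v0, rest) i.succ))
            ∧ (Fin.consEquiv (fun _ : Fin (m+2) => V)) (v0, rest) 0 = v
          then ∏ j, wtf Q t ((Fin.consEquiv (fun _ : Fin (m+2) => V)) (v0, rest) j) else 0)
        = if v0 = v then (if G.Adj v (rest 0) then
            wtf Q t v * (if (∀ i : Fin m, G.Adj (rest i.castSucc) (rest i.succ))
              then ∏ j, wtf Q t (rest j) else 0) else 0) else 0 := by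
      intro v0 rest
      have hce : (Fin.consEquiv (fun _ : Fin (m+2) => V)) (v0, rest) = Fin.cons v0 rest := rfl
      rw [hce]
      have hprod : (∏ j, wtf Q t ((Fin.cons v0 rest : Fin (m+2) → V) j))
          = wtf Q t v0 * ∏ j : Fin (m+1), wtf Q t (rest j) := by
        rw [Fin.prod_univ_succ]
        simp [Fin.cons_zero, Fin.cons_succ]
      by_cases h0 : v0 = v
      · subst h0
        rw [if_pos rfl]
        by_cases hadj : G.Adj v0 (rest 0)
        · rw [if_pos hadj]
          by_cases hwalk : ∀ i : Fin m, G.Adj (rest i.castSucc) (rest i.succ)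
          · rw [if_pos ⟨(cons_walk_iff G m v0 rest).mpr ⟨hadj, hwalk⟩, (by simp : (Fin.cons v0 rest : Fin (m+2) → V) 0 = v0)⟩,
              if_pos hwalk, hprod]
          · rw [if_neg, if_neg hwalk]
            · ring
            · intro hc
              exact hwalk ((cons_walk_iff G m v0 rest).mp hc.1).2
        · rw [if_neg, if_neg hadj]
          intro hc
          exact hadj ((cons_walk_iff G m v0 rest).mp hc.1).1
      · rw [if_neg h0, if_neg]
        intro hc
        exact h0 (by simpa [Fin.cons_zero] using hc.2)
    rw [Finset.sum_congr rfl fun v0 _ => Finset.sum_congr rfl fun rest _ => key v0 rest]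
    have pull : ∀ v0 : V,
        (∑ rest : Fin (m+1) → V, if v0 = v then (if G.Adj v (rest 0) then
            wtf Q t v * (if (∀ i : Fin m, G.Adj (rest i.castSucc) (rest i.succ))
              then ∏ j, wtf Q t (rest j) else 0) else 0) else 0)
        = if v0 = v then (∑ rest : Fin (m+1) → V, (if G.Adj v (rest 0) then
            wtf Q t v * (if (∀ i : Fin m, G.Adj (rest i.castSucc) (rest i.succ))
              then ∏ j, wtf Q t (rest j) else 0) else 0)) else 0 := by
      intro v0
      split_ifs with h
      · rfl
      · exact sum_const_zero
    rw [Finset.sum_congr rfl fun v0 _ => pull v0]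
    rw [Finset.sum_ite_eq' univ v, if_pos (mem_univ v)]
    rw [group_adj G m (fun rest => wtf Q t v *
      (if (∀ i : Fin m, G.Adj (rest i.castSucc) (rest i.succ))
        then ∏ j, wtf Q t (rest j) else 0)) v]
    have inner : ∀ x : V,
        (∑ rest : Fin (m+1) → V, if rest 0 = x then wtf Q t v *
          (if (∀ i : Fin m, G.Adj (rest i.castSucc) (rest i.succ))
            then ∏ j, wtf Q t (rest j) else 0) else 0)
        = wtf Q t v * ((d:ℝ)^m * NF G d Q t m x) := by
      intro x
      have swap : ∀ rest : Fin (m+1) → V,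
          (if rest 0 = x then wtf Q t v *
            (if (∀ i : Fin m, G.Adj (rest i.castSucc) (rest i.succ))
              then ∏ j, wtf Q t (rest j) else 0) else 0)
          = wtf Q t v * (if (∀ i : Fin m, G.Adj (rest i.castSucc) (rest i.succ)) ∧ rest 0 = x
              then ∏ j, wtf Q t (rest j) else 0) := by
        intro rest
        by_cases h1 : rest 0 = x <;> by_cases h2 : ∀ i : Fin m, G.Adj (rest i.castSucc) (rest i.succ)
        · rw [if_pos h1, if_pos h2, if_pos ⟨h2, h1⟩]
        · rw [if_pos h1, if_neg h2, if_neg (fun hc => h2 hc.1)]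
        · rw [if_neg h1, if_neg (fun hc => h1 hc.2), mul_zero]
        · rw [if_neg h1, if_neg (fun hc => h1 hc.2), mul_zero]
      rw [Finset.sum_congr rfl fun rest _ => swap rest, ← mul_sum, ih x]
    rw [Finset.sum_congr rfl fun x _ => inner x, ← mul_sum, ← mul_sum]
    rw [NF_succ]
    have hdne : ((d:ℝ)) ≠ 0 := Nat.cast_ne_zero.mpr hd.ne'
    field_simp
    ring

lemma target_succ (G : SimpleGraph V) [DecidableRel G.Adj] {d : ℕ} (hd : 0 < d)
    (hreg : G.IsRegularOfDegree d) (Q : Finset V) (t : ℝ) (m : ℕ) :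
    (∑ u : Fin (m+2) → V,
      if (∀ i : Fin (m+1), G.Adj (u i.castSucc) (u i.succ))
        then ∏ i : Fin (m+1), wtf Q t (u i.succ) else 0)
    = (d:ℝ)^(m+1) * ∑ x, NF G d Q t m x := by
  rw [← Equiv.sum_comp (Fin.consEquiv (fun _ : Fin (m+2) => V))
    (fun u : Fin (m+2) → V => if (∀ i : Fin (m+1), G.Adj (u i.castSucc) (u i.succ))
      then ∏ i : Fin (m+1), wtf Q t (u i.succ) else 0)]
  rw [Fintype.sum_prod_type]
  have key : ∀ (v0 : V) (rest : Fin (m+1) → V),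
      (if (∀ i : Fin (m+1),
            G.Adj ((Fin.consEquiv (fun _ : Fin (m+2) => V)) (v0, rest) i.castSucc)
              ((Fin.consEquiv (fun _ : Fin (m+2) => V)) (v0, rest) i.succ))
        then ∏ i : Fin (m+1), wtf Q t ((Fin.consEquiv (fun _ : Fin (m+2) => V)) (v0, rest) i.succ)
        else 0)
      = if G.Adj v0 (rest 0) then
          (if (∀ i : Fin m, G.Adj (rest i.castSucc) (rest i.succ))
            then ∏ j, wtf Q t (rest j) else 0) else 0 := by
    intro v0 rest
    have hce : (Fin.consEquiv (fun _ : Fin (m+2) => V)) (v0, rest) = Fin.cons v0 rest := rfl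
    rw [hce]
    have hprod : (∏ i : Fin (m+1), wtf Q t ((Fin.cons v0 rest : Fin (m+2) → V) i.succ))
        = ∏ j, wtf Q t (rest j) :=
      Finset.prod_congr rfl fun i _ => by rw [Fin.cons_succ]
    by_cases hadj : G.Adj v0 (rest 0)
    · rw [if_pos hadj]
      by_cases hwalk : ∀ i : Fin m, G.Adj (rest i.castSucc) (rest i.succ)
      · rw [if_pos ((cons_walk_iff G m v0 rest).mpr ⟨hadj, hwalk⟩), if_pos hwalk, hprod]
      · rw [if_neg (fun hc => hwalk ((cons_walk_iff G m v0 rest).mp hc).2), if_neg hwalk]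
    · rw [if_neg (fun hc => hadj ((cons_walk_iff G m v0 rest).mp hc).1), if_neg hadj]
  rw [Finset.sum_congr rfl fun v0 _ => Finset.sum_congr rfl fun rest _ => key v0 rest]
  rw [Finset.sum_comm]
  have deg : ∀ rest : Fin (m+1) → V,
      (∑ v0 : V, if G.Adj v0 (rest 0) then
        (if (∀ i : Fin m, G.Adj (rest i.castSucc) (rest i.succ))
          then ∏ j, wtf Q t (rest j) else 0) else 0)
      = (d:ℝ) * (if (∀ i : Fin m, G.Adj (rest i.castSucc) (rest i.succ))
          then ∏ j, wtf Q t (rest j) else 0) := by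
    intro rest
    have congr1 : ∀ v0 : V, (if G.Adj v0 (rest 0) then
        (if (∀ i : Fin m, G.Adj (rest i.castSucc) (rest i.succ))
          then ∏ j, wtf Q t (rest j) else 0) else 0)
        = (if v0 ∈ G.neighborFinset (rest 0) then
          (if (∀ i : Fin m, G.Adj (rest i.castSucc) (rest i.succ))
            then ∏ j, wtf Q t (rest j) else 0) else 0) := by
      intro v0
      refine if_congr ?_ rfl rfl
      rw [SimpleGraph.mem_neighborFinset]
      exact G.adj_comm (rest 0) v0 |>.symm
    rw [Finset.sum_congr rfl fun v0 _ => congr1 v0, sum_ite_mem, univ_inter, sum_const]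
    have hdeg : #(G.neighborFinset (rest 0)) = d := hreg (rest 0)
    rw [hdeg, nsmul_eq_mul]
  rw [Finset.sum_congr rfl fun rest _ => deg rest, ← mul_sum]
  have grp : (∑ rest : Fin (m+1) → V,
      (if (∀ i : Fin m, G.Adj (rest i.castSucc) (rest i.succ))
        then ∏ j, wtf Q t (rest j) else 0))
      = ∑ x : V, ∑ rest : Fin (m+1) → V,
        (if (∀ i : Fin m, G.Adj (rest i.castSucc) (rest i.succ)) ∧ rest 0 = x
          then ∏ j, wtf Q t (rest j) else 0) := by
    rw [Finset.sum_comm]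
    refine Finset.sum_congr rfl fun rest _ => ?_
    by_cases hwalk : ∀ i : Fin m, G.Adj (rest i.castSucc) (rest i.succ)
    · rw [if_pos hwalk]
      have : ∀ x : V, (if (∀ i : Fin m, G.Adj (rest i.castSucc) (rest i.succ)) ∧ rest 0 = x
          then ∏ j, wtf Q t (rest j) else 0)
          = (if rest 0 = x then ∏ j, wtf Q t (rest j) else 0) := by
        intro x
        by_cases hx : rest 0 = x
        · rw [if_pos ⟨hwalk, hx⟩, if_pos hx]
        · rw [if_neg (fun hc => hx hc.2), if_neg hx]
      rw [Finset.sum_congr rfl fun x _ => this x,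
        Finset.sum_ite_eq univ (rest 0) (fun _ => ∏ j, wtf Q t (rest j)), if_pos (mem_univ _)]
    · rw [if_neg hwalk]
      refine (Finset.sum_eq_zero fun x _ => ?_).symm
      exact if_neg (fun hc => hwalk hc.1)
  rw [grp, Finset.sum_congr rfl fun x _ => claimA G hd hreg Q t m x, ← mul_sum]
  ring

lemma prod_wtf_eq (Q : Finset V) (t : ℝ) (L : ℕ) (f : Fin L → V) :
    ∏ i, wtf Q t (f i) = Real.exp (t * ((univ.filter fun i => f i ∈ Q).card : ℝ)) := by
  have h1 : ∀ i : Fin L, wtf Q t (f i) = Real.exp (if f i ∈ Q then t else 0) := by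
    intro i; unfold wtf; split_ifs
    · rfl
    · rw [Real.exp_zero]
  rw [Finset.prod_congr rfl fun i _ => h1 i, ← Real.exp_sum]
  congr 1
  rw [← sum_filter, sum_const, nsmul_eq_mul, mul_comm]

end ExpanderLD

open ExpanderLD

set_option maxHeartbeats 2000000
set_option linter.unusedSectionVars false

/-- Chernoff-type large deviation estimate for random walks on expander graphs: for every
degree `d > 2`, spectral gap `α > 0`, density `μ` and `ε > 0` there are constants
`c₁, c₂ > 0` (depending only on `d, α, μ, ε`) such that for every finite `d`-regular
graph `G` whose normalized adjacency operator has norm at most `1 - α` on the complement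
of the constants, and every `Q ⊆ V` of density `μ`, the proportion of walks of length `ℓ`
spending at least `(μ + ε)·ℓ` steps in `Q` is at most `c₁·exp(-c₂·ℓ)`. -/
theorem expander_large_deviation (d : ℕ) (hd : 2 < d) (α : ℝ) (hα : 0 < α) (hα1 : α < 1)
    (μ ε : ℝ) (hε : 0 < ε) :
    ∃ c₁ : ℝ, 0 < c₁ ∧ ∃ c₂ : ℝ, 0 < c₂ ∧
      ∀ (V : Type) [Fintype V] [DecidableEq V] [Nonempty V]
        (G : SimpleGraph V) [DecidableRel G.Adj],
        G.IsRegularOfDegree d →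
        (∀ f : V → ℝ, (∑ v, f v) = 0 →
          Real.sqrt (∑ v, ((∑ w ∈ G.neighborFinset v, f w) / (d : ℝ)) ^ 2) ≤
            (1 - α) * Real.sqrt (∑ v, f v ^ 2)) →
        ∀ Q : Finset V, ((Q.card : ℝ) / (Fintype.card V : ℝ)) = μ →
        ∀ ℓ : ℕ,
          ((univ.filter fun w : Fin (ℓ + 1) → V =>
              (∀ i : Fin ℓ, G.Adj (w i.castSucc) (w i.succ)) ∧
              (μ + ε) * (ℓ : ℝ) ≤
                ((univ.filter fun i : Fin ℓ => w i.succ ∈ Q).card : ℝ)).card : ℝ) /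
            ((Fintype.card V : ℝ) * (d : ℝ) ^ ℓ) ≤
          c₁ * Real.exp (-c₂ * (ℓ : ℝ)) := by
  set t : ℝ := min (α/4) (ε*α/20) with htdef
  have ht0 : 0 < t := lt_min (by linarith) (by positivity)
  have ht4 : t ≤ α/4 := min_le_left _ _
  have htε : t ≤ ε*α/20 := min_le_right _ _
  have thalf : t ≤ 1/2 := by
    have : α/4 ≤ 1/2 := by linarith
    exact ht4.trans this
  have hexp1 : Real.exp t * (1 - t) ≤ 1 := by
    have h := Real.add_one_le_exp (-t)
    rw [Real.exp_neg] at h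
    have hp := Real.exp_pos t
    have h2 := mul_le_mul_of_nonneg_left h hp.le
    rw [mul_inv_cancel₀ hp.ne'] at h2
    nlinarith
  have hτ1 : Real.exp t - 1 ≤ t + 2*t^2 := by nlinarith [Real.exp_pos t]
  have hτ2 : Real.exp t - 1 ≤ 2*t := by nlinarith
  have het : Real.exp t ≤ 1 + 2*t := by nlinarith
  have hτ0 : 0 ≤ Real.exp t - 1 := by
    have := Real.one_le_exp ht0.le; linarith
  set γ : ℝ := 4*t/α with hγdef
  have hγ : 0 < γ := by positivity
  refine ⟨1, one_pos, ε*t/2, by positivity, ?_⟩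
  intro V _ _ _ G _ hreg hspec Q hQ ℓ
  have hn : (0:ℝ) < (Fintype.card V : ℝ) := by exact_mod_cast Fintype.card_pos
  have hμ0 : 0 ≤ μ := by
    rw [← hQ]; exact div_nonneg (Nat.cast_nonneg _) hn.le
  have hμ1 : μ ≤ 1 := by
    rw [← hQ, div_le_one hn]
    exact_mod_cast Finset.card_le_univ Q
  set K : ℝ := Real.exp ((μ + ε/2) * t) with hKdef
  have hK0 : (0:ℝ) ≤ K := (Real.exp_pos _).le
  have hKge1 : (1:ℝ) ≤ K := Real.one_le_exp (by positivity)
  have hK1 : 1 + μ * (Real.exp t - 1) + γ * (Real.exp t - 1) ≤ K := by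
    have hlin : (μ + ε/2) * t + 1 ≤ K := Real.add_one_le_exp _
    have h1 : μ * (Real.exp t - 1) ≤ μ*t + 2*t^2 := by nlinarith
    have h2 : γ * (Real.exp t - 1) ≤ 8*t^2/α := by
      calc γ * (Real.exp t - 1) ≤ γ * (2*t) := mul_le_mul_of_nonneg_left hτ2 hγ.le
        _ = 8*t^2/α := by rw [hγdef]; ring
    have h3 : 2*t^2 + 8*t^2/α ≤ ε*t/2 := by
      rw [← sub_nonneg]
      have expand : ε*t/2 - (2*t^2 + 8*t^2/α) = (ε*α*t/2 - 2*t^2*α - 8*t^2)/α := by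
        field_simp; ring
      rw [expand]
      apply div_nonneg _ hα.le
      nlinarith [mul_le_mul_of_nonneg_left htε ht0.le, hα.le, hα1, ht0.le, mul_pos ht0 ht0]
    linarith
  have hK2 : (1-α) * (Real.exp t - 1) + γ * ((1-α) * Real.exp t) ≤ γ * K := by
    have key : α * ((1-α) * (Real.exp t - 1)) + (4*t) * ((1-α) * Real.exp t) ≤ 4*t := by
      nlinarith [mul_le_mul_of_nonneg_left hτ2 (mul_nonneg hα.le (by linarith : (0:ℝ) ≤ 1-α)),
        mul_le_mul_of_nonneg_left het (by nlinarith : (0:ℝ) ≤ 4*t*(1-α)),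
        mul_nonneg (mul_nonneg (by linarith : (0:ℝ) ≤ α - 4*t)
          (by linarith : (0:ℝ) ≤ 1-α)) ht0.le,
        mul_nonneg (mul_nonneg ht0.le hα.le) hα.le]
    have hle1 : (1-α) * (Real.exp t - 1) + γ * ((1-α) * Real.exp t) ≤ γ := by
      rw [hγdef]
      have hrw : (1-α) * (Real.exp t - 1) + (4*t/α) * ((1-α) * Real.exp t)
          = (α * ((1-α) * (Real.exp t - 1)) + (4*t) * ((1-α) * Real.exp t))/α := by
        field_simp
      rw [hrw, div_le_div_iff₀ hα hα]
      nlinarith [mul_le_mul_of_nonneg_right key hα.le]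
    calc (1-α) * (Real.exp t - 1) + γ * ((1-α) * Real.exp t) ≤ γ := hle1
      _ = γ * 1 := (mul_one γ).symm
      _ ≤ γ * K := mul_le_mul_of_nonneg_left hKge1 hγ.le
  have hK1' : 1 + ((Q.card : ℝ)/(Fintype.card V : ℝ)) * (Real.exp t - 1)
      + γ * (Real.exp t - 1) ≤ K := by rw [hQ]; exact hK1
  have hd0 : 0 < d := by omega
  have hdR : (0:ℝ) < (d:ℝ) := by exact_mod_cast hd0
  rcases ℓ with _ | m
  · -- ℓ = 0
    have hfilter : (univ.filter fun w : Fin (0+1) → V =>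
        (∀ i : Fin 0, G.Adj (w i.castSucc) (w i.succ)) ∧
        (μ + ε) * ((0:ℕ) : ℝ) ≤
          (((univ.filter fun i : Fin 0 => w i.succ ∈ Q)).card : ℝ)) = univ := by
      refine filter_true_of_mem fun w _ => ⟨fun i => i.elim0, ?_⟩
      simp
    rw [hfilter, card_univ]
    have hcard : Fintype.card (Fin (0+1) → V) = Fintype.card V := by simp
    rw [hcard, pow_zero, mul_one, div_self hn.ne']
    simp
  · -- ℓ = m + 1
    have markov : ((univ.filter fun w : Fin (m+1+1) → V =>
          (∀ i : Fin (m+1), G.Adj (w i.castSucc) (w i.succ)) ∧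
          (μ + ε) * ((m+1 : ℕ) : ℝ) ≤
            ((univ.filter fun i : Fin (m+1) => w i.succ ∈ Q).card : ℝ)).card : ℝ)
        ≤ Real.exp (-(t * ((μ + ε) * ((m+1 : ℕ) : ℝ)))) *
          ∑ u : Fin (m+2) → V,
            (if (∀ i : Fin (m+1), G.Adj (u i.castSucc) (u i.succ))
              then ∏ i : Fin (m+1), wtf Q t (u i.succ) else 0) := by
      rw [card_eq_sum_ones, Nat.cast_sum, mul_sum]
      simp only [Nat.cast_one]
      have hsub := Finset.sum_le_sum_of_subset_of_nonneg
        (filter_subset (fun w : Fin (m+1+1) → V =>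
          (∀ i : Fin (m+1), G.Adj (w i.castSucc) (w i.succ)) ∧
          (μ + ε) * ((m+1 : ℕ) : ℝ) ≤
            ((univ.filter fun i : Fin (m+1) => w i.succ ∈ Q).card : ℝ)) univ)
        (f := fun u : Fin (m+2) → V => Real.exp (-(t * ((μ + ε) * ((m+1 : ℕ) : ℝ)))) *
          (if (∀ i : Fin (m+1), G.Adj (u i.castSucc) (u i.succ))
            then ∏ i : Fin (m+1), wtf Q t (u i.succ) else 0))
        (fun u _ _ => by
          apply mul_nonneg (Real.exp_pos _).le
          split_ifs
          · exact Finset.prod_nonneg fun i _ => (wtf_pos Q ht0.le _).le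
          · exact le_refl 0)
      refine le_trans ?_ hsub
      apply Finset.sum_le_sum
      intro u hu
      obtain ⟨-, hwalk, hcnt⟩ := mem_filter.mp hu
      rw [if_pos hwalk, prod_wtf_eq, ← Real.exp_add]
      rw [show (1:ℝ) = Real.exp 0 from Real.exp_zero.symm]
      apply Real.exp_le_exp.mpr
      nlinarith [hcnt, ht0.le]
    have htarget := target_succ G hd0 hreg Q t m
    have hmean := mean_NF_le G hd0 hreg hspec Q ht0.le hγ hK0 hK1' hK2 m
    have hSNF : ∑ x, NF G d Q t m x ≤ (Fintype.card V : ℝ) * K^(m+1) := by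
      have heq : ∑ x, NF G d Q t m x
          = (Fintype.card V : ℝ) * ExpanderLD.mean (NF G d Q t m) := by
        unfold ExpanderLD.mean
        field_simp
      rw [heq]
      exact mul_le_mul_of_nonneg_left hmean hn.le
    have hTle : (∑ u : Fin (m+2) → V,
          (if (∀ i : Fin (m+1), G.Adj (u i.castSucc) (u i.succ))
            then ∏ i : Fin (m+1), wtf Q t (u i.succ) else 0))
        ≤ (d:ℝ)^(m+1) * ((Fintype.card V : ℝ) * K^(m+1)) := by
      rw [htarget]
      exact mul_le_mul_of_nonneg_left hSNF (by positivity)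
    rw [div_le_iff₀ (by positivity)]
    calc ((univ.filter fun w : Fin (m+1+1) → V =>
          (∀ i : Fin (m+1), G.Adj (w i.castSucc) (w i.succ)) ∧
          (μ + ε) * ((m+1 : ℕ) : ℝ) ≤
            ((univ.filter fun i : Fin (m+1) => w i.succ ∈ Q).card : ℝ)).card : ℝ)
        ≤ Real.exp (-(t * ((μ + ε) * ((m+1 : ℕ) : ℝ)))) *
          ∑ u : Fin (m+2) → V,
            (if (∀ i : Fin (m+1), G.Adj (u i.castSucc) (u i.succ))
              then ∏ i : Fin (m+1), wtf Q t (u i.succ) else 0) := markov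
      _ ≤ Real.exp (-(t * ((μ + ε) * ((m+1 : ℕ) : ℝ)))) *
          ((d:ℝ)^(m+1) * ((Fintype.card V : ℝ) * K^(m+1))) :=
          mul_le_mul_of_nonneg_left hTle (Real.exp_pos _).le
      _ = (Real.exp (-(t * ((μ + ε) * ((m+1 : ℕ) : ℝ)))) * K^(m+1)) *
          ((Fintype.card V : ℝ) * (d:ℝ)^(m+1)) := by ring
      _ = 1 * Real.exp (-(ε*t/2) * ((m+1 : ℕ) : ℝ)) *
          ((Fintype.card V : ℝ) * (d:ℝ)^(m+1)) := by
          rw [one_mul, hKdef, ← Real.exp_nat_mul, ← Real.exp_add]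
          congr 2
          push_cast
          ring
end
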